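/- arXiv:2101.10748 — 4 statements merged into one kernel-verified Lean document; each statement's English description precedes it below -/
import Mathlib

section
/- First Visit Time Lemma, identification of the rate: under (HP1)–(HP3), | λ_n / (1 − π_n(x_n)/R_{T_n}(x_n)) − 1 | → 0 as n → ∞, where R_{T_n}(x_n) := Σ_{t=0}^{T_n} P_n^t(x_n, x_n) ≥ 1 is the expected number of returns to x_n within time T_n. -/
open Finset Filter

/-- The kernel of the chain killed at `x`: all entries from or to `x` are set to zero.
For `y, z ≠ x` the powers of `killed P x` agree with the powers of the principal
submatrix `[P]_x` of `P` obtained by deleting the row and the column indexed by `x`. -/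
def killed {n : ℕ} (P : Matrix (Fin n) (Fin n) ℝ) (x : Fin n) :
    Matrix (Fin n) (Fin n) ℝ :=
  Matrix.of fun y z => if y = x ∨ z = x then 0 else P y z

/-- The no-hit probability `ℙ_α(τ_x > t) = Σ_{y ≠ x} Σ_{z ≠ x} α(y)·([P]_x)^t(y,z)`. -/
def noHit {n : ℕ} (P : Matrix (Fin n) (Fin n) ℝ) (x : Fin n)
    (a : Fin n → ℝ) (t : ℕ) : ℝ :=
  ∑ y ∈ Finset.univ.erase x, ∑ z ∈ Finset.univ.erase x, a y * ((killed P x) ^ t) y z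

/-- The expected number of returns to `x` within time `T`:
`R_T(x) = Σ_{t=0}^{T} P^t(x,x)`. -/
def returns {n : ℕ} (P : Matrix (Fin n) (Fin n) ℝ) (x : Fin n) (T : ℕ) : ℝ :=
  ∑ t ∈ Finset.range (T + 1), (P ^ t) x x

namespace FVTLaux

variable {n : ℕ}

lemma killed_apply (P : Matrix (Fin n) (Fin n) ℝ) (x y z : Fin n) :
    killed P x y z = if y = x ∨ z = x then 0 else P y z := rfl

lemma killed_nonneg (P : Matrix (Fin n) (Fin n) ℝ) (x : Fin n)
    (hP : ∀ y z, 0 ≤ P y z) (y z : Fin n) : 0 ≤ killed P x y z := by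
  rw [killed_apply]; split
  · exact le_rfl
  · exact hP y z

lemma killed_le (P : Matrix (Fin n) (Fin n) ℝ) (x : Fin n)
    (hP : ∀ y z, 0 ≤ P y z) (y z : Fin n) : killed P x y z ≤ P y z := by
  rw [killed_apply]; split
  · exact hP y z
  · exact le_rfl

lemma pow_nonneg (A : Matrix (Fin n) (Fin n) ℝ) (hA : ∀ y z, 0 ≤ A y z) :
    ∀ (t : ℕ) (y z : Fin n), 0 ≤ (A ^ t) y z := by
  intro t
  induction t with
  | zero => intro y z; rw [pow_zero, Matrix.one_apply]; split <;> norm_num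
  | succ m ih =>
      intro y z
      rw [pow_succ, Matrix.mul_apply]
      exact Finset.sum_nonneg fun w _ => mul_nonneg (ih y w) (hA w z)

lemma pow_le (A B : Matrix (Fin n) (Fin n) ℝ)
    (hA : ∀ y z, 0 ≤ A y z) (hB : ∀ y z, 0 ≤ B y z)
    (hAB : ∀ y z, A y z ≤ B y z) :
    ∀ (t : ℕ) (y z : Fin n), (A ^ t) y z ≤ (B ^ t) y z := by
  intro t
  induction t with
  | zero => intro y z; exact le_rfl
  | succ m ih =>
      intro y z
      rw [pow_succ, pow_succ, Matrix.mul_apply, Matrix.mul_apply]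
      exact Finset.sum_le_sum fun w _ =>
        mul_le_mul (ih y w) (hAB w z) (hA w z) (pow_nonneg B hB m y w)

lemma rowsum_pow (A : Matrix (Fin n) (Fin n) ℝ) (hrow : ∀ y, ∑ z, A y z = 1) :
    ∀ (t : ℕ) (y : Fin n), ∑ z, (A ^ t) y z = 1 := by
  intro t
  induction t with
  | zero => intro y; simp [Matrix.one_apply]
  | succ m ih =>
      intro y
      rw [pow_succ]
      simp only [Matrix.mul_apply]
      rw [Finset.sum_comm]
      calc ∑ w, ∑ z, (A ^ m) y w * A w z
          = ∑ w, (A ^ m) y w * ∑ z, A w z := by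
            exact Finset.sum_congr rfl fun w _ => (Finset.mul_sum _ _ _).symm
        _ = ∑ w, (A ^ m) y w := by
            exact Finset.sum_congr rfl fun w _ => by rw [hrow w, mul_one]
        _ = 1 := ih y

lemma entry_le_one (A : Matrix (Fin n) (Fin n) ℝ) (hA : ∀ y z, 0 ≤ A y z)
    (hrow : ∀ y, ∑ z, A y z = 1) (y z : Fin n) : A y z ≤ 1 := by
  calc A y z ≤ ∑ w, A y w :=
        Finset.single_le_sum (fun w _ => hA y w) (Finset.mem_univ z)
    _ = 1 := hrow y


lemma vecMul_apply (v : Fin n → ℝ) (A : Matrix (Fin n) (Fin n) ℝ) (z : Fin n) :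
    Matrix.vecMul v A z = ∑ y, v y * A y z := by
  simp [Matrix.vecMul, dotProduct]

lemma stat_pow (P : Matrix (Fin n) (Fin n) ℝ) (pi : Fin n → ℝ)
    (hstat : ∀ z, ∑ y, pi y * P y z = pi z) :
    ∀ (t : ℕ) (z : Fin n), ∑ y, pi y * (P ^ t) y z = pi z := by
  intro t
  induction t with
  | zero => intro z; simp [Matrix.one_apply]
  | succ m ih =>
      intro z
      rw [pow_succ]
      simp only [Matrix.mul_apply]
      calc ∑ y, pi y * ∑ w, (P ^ m) y w * P w z
          = ∑ y, ∑ w, pi y * ((P ^ m) y w * P w z) := by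
            exact Finset.sum_congr rfl fun y _ => Finset.mul_sum _ _ _
        _ = ∑ w, (∑ y, pi y * (P ^ m) y w) * P w z := by
            rw [Finset.sum_comm]
            exact Finset.sum_congr rfl fun w _ => by
              rw [Finset.sum_mul]
              exact Finset.sum_congr rfl fun y _ => (mul_assoc _ _ _).symm
        _ = ∑ w, pi w * P w z := by
            exact Finset.sum_congr rfl fun w _ => by rw [ih w]
        _ = pi z := hstat z

/-- eigen-equation propagated to powers -/
lemma eig_pow (K : Matrix (Fin n) (Fin n) ℝ) (mu : Fin n → ℝ) (lam : ℝ)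
    (heig : ∀ z, ∑ y, mu y * K y z = lam * mu z) :
    ∀ (t : ℕ) (z : Fin n), ∑ y, mu y * (K ^ t) y z = lam ^ t * mu z := by
  intro t
  induction t with
  | zero => intro z; simp [Matrix.one_apply]
  | succ m ih =>
      intro z
      rw [pow_succ]
      simp only [Matrix.mul_apply]
      calc ∑ y, mu y * ∑ w, (K ^ m) y w * K w z
          = ∑ y, ∑ w, mu y * ((K ^ m) y w * K w z) := by
            exact Finset.sum_congr rfl fun y _ => Finset.mul_sum _ _ _
        _ = ∑ w, (∑ y, mu y * (K ^ m) y w) * K w z := by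
            rw [Finset.sum_comm]
            exact Finset.sum_congr rfl fun w _ => by
              rw [Finset.sum_mul]
              exact Finset.sum_congr rfl fun y _ => (mul_assoc _ _ _).symm
        _ = ∑ w, lam ^ m * mu w * K w z := by
            exact Finset.sum_congr rfl fun w _ => by rw [ih w]
        _ = lam ^ m * ∑ w, mu w * K w z := by
            rw [Finset.mul_sum]
            exact Finset.sum_congr rfl fun w _ => by ring
        _ = lam ^ (m + 1) * mu z := by rw [heig z]; ring

/-- First passage decomposition. -/
lemma decomp (P : Matrix (Fin n) (Fin n) ℝ) (x : Fin n) :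
    ∀ (m : ℕ) (y : Fin n), y ≠ x → ∀ z : Fin n,
    (P ^ m) y z = ((killed P x) ^ m) y z +
      ∑ s ∈ Finset.range m,
        ((killed P x) ^ s * P) y x * (P ^ (m - 1 - s)) x z := by
  intro m
  induction m with
  | zero => intro y hy z; simp
  | succ m ih =>
      intro y hy z
      set K := killed P x with hK
      have hKyx : K y x = 0 := by simp [hK, killed]
      have hKy : ∀ w, w ≠ x → K y w = P y w := fun w hw => by
        simp [hK, killed, hy, hw]
      have h2 : ∑ w ∈ Finset.univ.erase x, K y w * (K ^ m) w z
          = (K ^ (m + 1)) y z := by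
        calc ∑ w ∈ Finset.univ.erase x, K y w * (K ^ m) w z
            = (∑ w ∈ Finset.univ.erase x, K y w * (K ^ m) w z)
              + K y x * (K ^ m) x z := by rw [hKyx, zero_mul, add_zero]
          _ = ∑ w, K y w * (K ^ m) w z :=
              Finset.sum_erase_add _ _ (Finset.mem_univ x)
          _ = (K ^ (m + 1)) y z := by rw [pow_succ', Matrix.mul_apply]
      have h3 : ∀ s : ℕ, ∑ w ∈ Finset.univ.erase x,
            K y w * ((K ^ s * P) w x * (P ^ (m - 1 - s)) x z)
          = (K ^ (s + 1) * P) y x * (P ^ (m - 1 - s)) x z := by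
        intro s
        have e1 : ∑ w ∈ Finset.univ.erase x, K y w * (K ^ s * P) w x
            = (K ^ (s + 1) * P) y x := by
          calc ∑ w ∈ Finset.univ.erase x, K y w * (K ^ s * P) w x
              = (∑ w ∈ Finset.univ.erase x, K y w * (K ^ s * P) w x)
                + K y x * (K ^ s * P) x x := by rw [hKyx, zero_mul, add_zero]
            _ = ∑ w, K y w * (K ^ s * P) w x :=
                Finset.sum_erase_add _ _ (Finset.mem_univ x)
            _ = (K ^ (s + 1) * P) y x := by
                rw [pow_succ', mul_assoc, Matrix.mul_apply]
        rw [← e1, Finset.sum_mul]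
        exact Finset.sum_congr rfl fun w _ => by ring
      calc (P ^ (m + 1)) y z = ∑ w, P y w * (P ^ m) w z := by
            rw [pow_succ', Matrix.mul_apply]
        _ = (∑ w ∈ Finset.univ.erase x, P y w * (P ^ m) w z)
              + P y x * (P ^ m) x z :=
            (Finset.sum_erase_add _ _ (Finset.mem_univ x)).symm
        _ = (∑ w ∈ Finset.univ.erase x, (K y w * (K ^ m) w z
              + ∑ s ∈ Finset.range m,
                  K y w * ((K ^ s * P) w x * (P ^ (m - 1 - s)) x z)))
              + P y x * (P ^ m) x z := by
            congr 1
            refine Finset.sum_congr rfl fun w hw => ?_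
            have hwx : w ≠ x := Finset.ne_of_mem_erase hw
            rw [ih w hwx z, hKy w hwx, mul_add, Finset.mul_sum]
        _ = ((K ^ (m + 1)) y z + ∑ s ∈ Finset.range m,
              (K ^ (s + 1) * P) y x * (P ^ (m - 1 - s)) x z)
              + P y x * (P ^ m) x z := by
            rw [Finset.sum_add_distrib, h2, Finset.sum_comm]
            congr 1
            congr 1
            exact Finset.sum_congr rfl fun s _ => h3 s
        _ = (K ^ (m + 1)) y z + ((∑ s ∈ Finset.range m,
              (K ^ (s + 1) * P) y x * (P ^ (m + 1 - 1 - (s + 1))) x z)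
              + (K ^ 0 * P) y x * (P ^ (m + 1 - 1 - 0)) x z) := by
            rw [add_assoc]
            congr 1
            congr 1
            · refine Finset.sum_congr rfl fun s hs => ?_
              have : m - 1 - s = m + 1 - 1 - (s + 1) := by omega
              rw [this]
            · simp
        _ = (K ^ (m + 1)) y z + ∑ s ∈ Finset.range (m + 1),
              (K ^ s * P) y x * (P ^ (m + 1 - 1 - s)) x z := by
            congr 1
            exact (Finset.sum_range_succ'
              (fun s => (K ^ s * P) y x * (P ^ (m + 1 - 1 - s)) x z) m).symm

set_option maxHeartbeats 2000000 in
lemma main_est (P : Matrix (Fin n) (Fin n) ℝ) (pi : Fin n → ℝ) (x : Fin n)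
    (T : ℕ) (lam : ℝ) (mu : Fin n → ℝ) (ε : ℝ)
    (hε : 0 < ε) (hε40 : ε ≤ 1/40) (hT1 : 1 ≤ T)
    (hnn : ∀ y z, 0 ≤ P y z) (hrow : ∀ y, ∑ z, P y z = 1)
    (hpinn : ∀ y, 0 ≤ pi y) (hpisum : ∑ y, pi y = 1)
    (hpistat : Matrix.vecMul pi P = pi)
    (hkirr : ∀ y z : Fin n, y ≠ x → z ≠ x → ∃ t : ℕ, 0 < ((killed P x) ^ t) y z)
    (hlam0 : 0 < lam) (hlam1 : lam < 1)
    (hmunn : ∀ y, 0 ≤ mu y) (hmux : mu x = 0) (hmusum : ∑ y, mu y = 1)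
    (hmuqs : Matrix.vecMul mu (killed P x) = lam • mu)
    (hmix : ∀ y z, |(P ^ T) y z - pi z| ≤ ε / (n : ℝ) ^ 2)
    (hTpi : ∀ y, (T : ℝ) * pi y < ε) :
    |lam / (1 - pi x / returns P x T) - 1| ≤ 10 * ε := by
  set K := killed P x with hKdef
  have hn0 : 0 < n := x.pos
  have hn1 : (1:ℝ) ≤ (n:ℝ) := by exact_mod_cast hn0
  set η : ℝ := ε / (n:ℝ)^2 with hηdef
  have hη0 : 0 ≤ η := by positivity
  have hnη : (n:ℝ) * η ≤ ε := by
    have e : (n:ℝ) * η = ε / (n:ℝ) := by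
      rw [hηdef]; field_simp
    rw [e]
    exact div_le_self hε.le hn1
  have hT1' : (1:ℝ) ≤ (T:ℝ) := by exact_mod_cast hT1
  have hπx : pi x ≤ ε := by nlinarith [hTpi x, hpinn x]
  have hK0 : ∀ y z, 0 ≤ K y z := killed_nonneg P x hnn
  have hKP : ∀ y z, K y z ≤ P y z := killed_le P x hnn
  have hP0 := pow_nonneg P hnn
  have hKpow0 := pow_nonneg K hK0
  have hKle := pow_le K P hK0 hnn hKP
  have hProw := rowsum_pow P hrow
  have hstat : ∀ z, ∑ y, pi y * P y z = pi z := fun z => by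
    have := congrFun hpistat z; rwa [vecMul_apply] at this
  have hstatp := stat_pow P pi hstat
  have hqs : ∀ z, ∑ y, mu y * K y z = lam * mu z := fun z => by
    have := congrFun hmuqs z; rw [vecMul_apply] at this
    simpa using this
  have heigp := eig_pow K mu lam hqs
  have hmixle : ∀ y z, (P ^ T) y z ≤ pi z + η := fun y z => by
    linarith [(abs_le.1 (hmix y z)).2]
  have hmix2 : ∀ y z, pi z - η ≤ (P ^ (2*T)) y z := by
    intro y z
    have h2T : 2*T = T + T := by ring
    have e : (P ^ (2*T)) y z - pi z = ∑ w, (P^T) y w * ((P^T) w z - pi z) := by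
      rw [h2T, pow_add, Matrix.mul_apply]
      simp only [mul_sub]
      rw [Finset.sum_sub_distrib, ← Finset.sum_mul, hProw T y, one_mul]
    have habs : |(P ^ (2*T)) y z - pi z| ≤ η := by
      rw [e]
      calc |∑ w, (P^T) y w * ((P^T) w z - pi z)|
          ≤ ∑ w, |(P^T) y w * ((P^T) w z - pi z)| := Finset.abs_sum_le_sum_abs _ _
        _ ≤ ∑ w, (P^T) y w * η := Finset.sum_le_sum fun w _ => by
            rw [abs_mul, abs_of_nonneg (hP0 T y w)]
            refine mul_le_mul_of_nonneg_left ?_ (hP0 T y w)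
            exact hmix w z
        _ = η := by rw [← Finset.sum_mul, hProw T y, one_mul]
    linarith [(abs_le.1 habs).1]
  -- first-passage quantities
  set f : ℕ → Fin n → ℝ := fun s y => (K ^ s * P) y x with hfdef
  have hf0 : ∀ s y, 0 ≤ f s y := fun s y => by
    simp only [hfdef, Matrix.mul_apply]
    exact Finset.sum_nonneg fun w _ => mul_nonneg (hKpow0 s y w) (hnn w x)
  have hfP : ∀ s y, f s y ≤ (P ^ (s+1)) y x := fun s y => by
    simp only [hfdef, Matrix.mul_apply]
    rw [pow_succ, Matrix.mul_apply]
    exact Finset.sum_le_sum fun w _ =>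
      mul_le_mul_of_nonneg_right (hKle s y w) (hnn w x)
  set h : Fin n → ℝ := fun y => ∑ s ∈ Finset.range (2*T), f s y with hhdef
  have hh0 : ∀ y, 0 ≤ h y := fun y => Finset.sum_nonneg fun s _ => hf0 s y
  have havg : ∑ y, pi y * h y ≤ 2 * ε := by
    have e1 : ∑ y, pi y * h y = ∑ s ∈ Finset.range (2*T), ∑ y, pi y * f s y := by
      simp only [hhdef, Finset.mul_sum]
      rw [Finset.sum_comm]
    rw [e1]
    calc ∑ s ∈ Finset.range (2*T), ∑ y, pi y * f s y
        ≤ ∑ s ∈ Finset.range (2*T), pi x := Finset.sum_le_sum fun s _ => by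
          calc ∑ y, pi y * f s y ≤ ∑ y, pi y * (P^(s+1)) y x :=
              Finset.sum_le_sum fun y _ =>
                mul_le_mul_of_nonneg_left (hfP s y) (hpinn y)
            _ = pi x := hstatp (s+1) x
      _ = (2*T : ℕ) * pi x := by
          rw [Finset.sum_const, Finset.card_range, nsmul_eq_mul]
      _ ≤ 2 * ε := by push_cast; nlinarith [hTpi x, hpinn x]
  set G : Finset (Fin n) := (Finset.univ.erase x).filter (fun y => h y ≤ 1/4)
    with hGdef
  have hGx : ∀ y ∈ G, y ≠ x := fun y hy =>
    Finset.ne_of_mem_erase (Finset.mem_filter.1 hy).1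
  have hπG : 1 - 9*ε ≤ ∑ y ∈ G, pi y := by
    have hsplit : (∑ y ∈ G, pi y) +
        ∑ y ∈ (Finset.univ.erase x).filter (fun y => ¬ (h y ≤ 1/4)), pi y
        = ∑ y ∈ Finset.univ.erase x, pi y := by
      rw [hGdef]; exact Finset.sum_filter_add_sum_filter_not _ _ _
    have herase : ∑ y ∈ Finset.univ.erase x, pi y = 1 - pi x := by
      have := Finset.sum_erase_add Finset.univ pi (Finset.mem_univ x)
      rw [hpisum] at this; linarith
    have hB : ∑ y ∈ (Finset.univ.erase x).filter (fun y => ¬ (h y ≤ 1/4)), pi y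
        ≤ 8 * ε := by
      have step1 : ∑ y ∈ (Finset.univ.erase x).filter (fun y => ¬ (h y ≤ 1/4)), pi y
          ≤ ∑ y ∈ (Finset.univ.erase x).filter (fun y => ¬ (h y ≤ 1/4)),
              4 * (pi y * h y) := by
        refine Finset.sum_le_sum fun y hy => ?_
        have h4 : ¬ (h y ≤ 1/4) := (Finset.mem_filter.1 hy).2
        push_neg at h4
        nlinarith [hpinn y]
      have step2 : ∑ y ∈ (Finset.univ.erase x).filter (fun y => ¬ (h y ≤ 1/4)),
          4 * (pi y * h y) ≤ ∑ y, 4 * (pi y * h y) := by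
        refine Finset.sum_le_sum_of_subset_of_nonneg (Finset.subset_univ _)
          fun y _ _ => mul_nonneg (by norm_num) (mul_nonneg (hpinn y) (hh0 y))
      have step3 : ∑ y, 4 * (pi y * h y) ≤ 8 * ε := by
        rw [← Finset.mul_sum]; linarith [havg]
      linarith
    linarith [hπx]
  -- row bound for the killed kernel on G
  have hcardG : (G.card : ℝ) ≤ (n : ℝ) := by
    have : G.card ≤ n := le_trans (Finset.card_le_univ G) (by simp)
    exact_mod_cast this
  have hrowG : ∀ y ∈ G, (1:ℝ)/2 ≤ ∑ z ∈ G, (K ^ (2*T)) y z := by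
    intro y hyG
    have hy : y ≠ x := hGx y hyG
    have hyh : h y ≤ 1/4 := (Finset.mem_filter.1 hyG).2
    have key : ∀ z, (K ^ (2*T)) y z = (P ^ (2*T)) y z
        - ∑ s ∈ Finset.range (2*T), f s y * (P ^ (2*T - 1 - s)) x z := by
      intro z
      have := decomp P x (2*T) y hy z
      simp only [← hKdef, ← hfdef] at this
      linarith [this]
    have e1 : ∑ z ∈ G, (K ^ (2*T)) y z
        = (∑ z ∈ G, (P ^ (2*T)) y z)
          - ∑ z ∈ G, ∑ s ∈ Finset.range (2*T), f s y * (P ^ (2*T - 1 - s)) x z := by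
      rw [← Finset.sum_sub_distrib]
      exact Finset.sum_congr rfl fun z _ => key z
    have e2 : ∑ z ∈ G, (P ^ (2*T)) y z ≥ (∑ z ∈ G, pi z) - (n:ℝ) * η := by
      calc ∑ z ∈ G, (P ^ (2*T)) y z ≥ ∑ z ∈ G, (pi z - η) :=
            Finset.sum_le_sum fun z _ => hmix2 y z
        _ = (∑ z ∈ G, pi z) - G.card * η := by
            rw [Finset.sum_sub_distrib, Finset.sum_const, nsmul_eq_mul]
        _ ≥ (∑ z ∈ G, pi z) - (n:ℝ) * η := by nlinarith [hcardG, hη0]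
    have e3 : ∑ z ∈ G, ∑ s ∈ Finset.range (2*T), f s y * (P ^ (2*T - 1 - s)) x z
        ≤ h y := by
      rw [Finset.sum_comm]
      have : ∀ s ∈ Finset.range (2*T),
          ∑ z ∈ G, f s y * (P ^ (2*T - 1 - s)) x z ≤ f s y := by
        intro s _
        rw [← Finset.mul_sum]
        have hle1 : ∑ z ∈ G, (P ^ (2*T - 1 - s)) x z ≤ 1 := by
          calc ∑ z ∈ G, (P ^ (2*T - 1 - s)) x z
              ≤ ∑ z, (P ^ (2*T - 1 - s)) x z :=
                Finset.sum_le_sum_of_subset_of_nonneg (Finset.subset_univ _)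
                  fun z _ _ => hP0 _ x z
            _ = 1 := hProw _ x
        nlinarith [hf0 s y, Finset.sum_nonneg (fun z (_ : z ∈ G) => hP0 (2*T-1-s) x z)]
      calc ∑ s ∈ Finset.range (2*T), ∑ z ∈ G, f s y * (P ^ (2*T - 1 - s)) x z
          ≤ ∑ s ∈ Finset.range (2*T), f s y := Finset.sum_le_sum this
        _ = h y := rfl
    rw [e1]
    have : (1:ℝ) - 9*ε - ε - 1/4 ≤ (∑ z ∈ G, pi z) - (n:ℝ)*η - h y := by
      linarith [hπG, hnη, hyh]
    linarith [e2, e3, hε40]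
  -- positivity of the quasi-stationary distribution
  have hmupos : ∀ z, z ≠ x → 0 < mu z := by
    have hex : ∃ y, 0 < mu y := by
      by_contra hcon
      push_neg at hcon
      have : ∑ y, mu y ≤ 0 := Finset.sum_nonpos fun y _ => hcon y
      rw [hmusum] at this; linarith
    obtain ⟨y0, hy0⟩ := hex
    have hy0x : y0 ≠ x := by
      intro e; rw [e, hmux] at hy0; exact lt_irrefl 0 hy0
    intro z hz
    obtain ⟨t, ht⟩ := hkirr y0 z hy0x hz
    have hpos : 0 < lam ^ t * mu z := by
      rw [← heigp t z]
      refine lt_of_lt_of_le (mul_pos hy0 ht) ?_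
      exact Finset.single_le_sum
        (fun y _ => mul_nonneg (hmunn y) (hKpow0 t y z)) (Finset.mem_univ y0)
    have hl : 0 < lam ^ t := pow_pos hlam0 t
    by_contra hle
    push_neg at hle
    exact absurd hpos (not_lt.2 (mul_nonpos_of_nonneg_of_nonpos hl.le hle))
  have hGne : 0 < ∑ y ∈ G, mu y := by
    have hGne' : G.Nonempty := by
      by_contra hemp
      rw [Finset.not_nonempty_iff_eq_empty] at hemp
      rw [hemp, Finset.sum_empty] at hπG
      linarith
    obtain ⟨y1, hy1⟩ := hGne'
    exact lt_of_lt_of_le (hmupos y1 (hGx y1 hy1))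
      (Finset.single_le_sum (fun y _ => hmunn y) hy1)
  -- lower bound on lam ^ T
  have hlam2T : (1:ℝ)/2 ≤ lam ^ (2*T) := by
    have key : (1/2) * ∑ y ∈ G, mu y ≤ lam ^ (2*T) * ∑ y ∈ G, mu y := by
      have c1 : lam ^ (2*T) * ∑ y ∈ G, mu y
          = ∑ z ∈ G, ∑ y, mu y * (K ^ (2*T)) y z := by
        rw [Finset.mul_sum]
        exact Finset.sum_congr rfl fun z _ => (heigp (2*T) z).symm
      have c2 : ∑ z ∈ G, ∑ y, mu y * (K ^ (2*T)) y z
          = ∑ y, ∑ z ∈ G, mu y * (K ^ (2*T)) y z := Finset.sum_comm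
      have c3 : ∑ y ∈ G, ∑ z ∈ G, mu y * (K ^ (2*T)) y z
          ≤ ∑ y, ∑ z ∈ G, mu y * (K ^ (2*T)) y z :=
        Finset.sum_le_sum_of_subset_of_nonneg (Finset.subset_univ _)
          fun y _ _ => Finset.sum_nonneg fun z _ =>
            mul_nonneg (hmunn y) (hKpow0 (2*T) y z)
      have c4 : (1/2) * ∑ y ∈ G, mu y ≤ ∑ y ∈ G, ∑ z ∈ G, mu y * (K ^ (2*T)) y z := by
        rw [Finset.mul_sum]
        refine Finset.sum_le_sum fun y hy => ?_
        rw [← Finset.mul_sum]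
        have h2 := mul_le_mul_of_nonneg_left (hrowG y hy) (hmunn y)
        linarith
      rw [c1, c2]; linarith
    exact le_of_mul_le_mul_right key hGne
  have hlampow1 : lam ^ T ≤ 1 := pow_le_one₀ hlam0.le hlam1.le
  have hlamT : (1:ℝ)/2 ≤ lam ^ T := by
    have e : lam ^ (2*T) = lam ^ T * lam ^ T := by rw [two_mul, pow_add]
    nlinarith [_root_.pow_nonneg hlam0.le T]
  -- bound on mu via mixing
  have hmub : ∀ z, mu z ≤ 2*(pi z + η) := by
    intro z
    have h1 : lam ^ T * mu z ≤ pi z + η := by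
      rw [← heigp T z]
      calc ∑ y, mu y * (K ^ T) y z
          ≤ ∑ y, mu y * (P ^ T) y z := Finset.sum_le_sum fun y _ =>
            mul_le_mul_of_nonneg_left (hKle T y z) (hmunn y)
        _ ≤ ∑ y, mu y * (pi z + η) := Finset.sum_le_sum fun y _ =>
            mul_le_mul_of_nonneg_left (hmixle y z) (hmunn y)
        _ = pi z + η := by rw [← Finset.sum_mul, hmusum, one_mul]
    nlinarith [hmunn z, hlamT]
  -- 1 - lam is small
  have hlamlow : 1 - lam ≤ 4*ε := by
    have hlameq : lam = 1 - ∑ y, mu y * P y x := by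
      have e1 : ∀ y : Fin n, mu y * (∑ z, K y z) = mu y * (1 - P y x) := by
        intro y
        by_cases hy : y = x
        · rw [hy, hmux, zero_mul, zero_mul]
        · congr 1
          have erow : ∑ z ∈ Finset.univ.erase x, K y z
              = ∑ z ∈ Finset.univ.erase x, P y z := by
            refine Finset.sum_congr rfl fun z hz => ?_
            have hzx : z ≠ x := Finset.ne_of_mem_erase hz
            simp [hKdef, killed, hy, hzx]
          have efull : ∑ z, K y z = ∑ z ∈ Finset.univ.erase x, K y z := by
            rw [← Finset.sum_erase_add Finset.univ _ (Finset.mem_univ x)]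
            have : K y x = 0 := by simp [hKdef, killed]
            rw [this, add_zero]
          have pfull : ∑ z ∈ Finset.univ.erase x, P y z = 1 - P y x := by
            have := Finset.sum_erase_add Finset.univ (fun z => P y z) (Finset.mem_univ x)
            rw [hrow y] at this; linarith
          rw [efull, erow, pfull]
      have e3 : ∑ y, ∑ z, mu y * K y z = lam := by
        rw [Finset.sum_comm]
        calc ∑ z, ∑ y, mu y * K y z = ∑ z, lam * mu z :=
              Finset.sum_congr rfl fun z _ => hqs z
          _ = lam := by rw [← Finset.mul_sum, hmusum, mul_one]
      have e4 : ∑ y, mu y * (1 - P y x) = lam := by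
        rw [← e3]
        refine Finset.sum_congr rfl fun y _ => ?_
        rw [← Finset.mul_sum, e1 y]
      have e5 : ∑ y, mu y * (1 - P y x) = 1 - ∑ y, mu y * P y x := by
        simp only [mul_sub, mul_one]
        rw [Finset.sum_sub_distrib, hmusum]
      linarith [e4, e5]
    have hsum : ∑ y, mu y * P y x ≤ 2*(pi x + η * n) := by
      have c1 : ∑ y, mu y * P y x ≤ ∑ y, 2*(pi y + η) * P y x :=
        Finset.sum_le_sum fun y _ =>
          mul_le_mul_of_nonneg_right (hmub y) (hnn y x)
      have c2 : ∑ y, 2*(pi y + η) * P y x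
          = 2*(∑ y, pi y * P y x) + 2*η*(∑ y, P y x) := by
        rw [Finset.mul_sum, Finset.mul_sum, ← Finset.sum_add_distrib]
        exact Finset.sum_congr rfl fun y _ => by ring
      have c3 : ∑ y, P y x ≤ (n:ℝ) := by
        calc ∑ y, P y x ≤ ∑ _y : Fin n, (1:ℝ) :=
              Finset.sum_le_sum fun y _ => entry_le_one P hnn hrow y x
          _ = n := by simp
      rw [hstat x] at c2
      nlinarith [hη0]
    have hηn : η * (n:ℝ) ≤ ε := by linarith [hnη, mul_comm η (n:ℝ)]
    rw [hlameq]
    linarith [hπx]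
  -- conclusion
  have hR1 : (1:ℝ) ≤ returns P x T := by
    rw [returns]
    calc (1:ℝ) = (P ^ 0) x x := by simp
      _ ≤ ∑ t ∈ Finset.range (T+1), (P ^ t) x x :=
        Finset.single_le_sum (fun t _ => hP0 t x x)
          (Finset.mem_range.2 (Nat.succ_pos T))
  have hR0 : (0:ℝ) < returns P x T := lt_of_lt_of_le one_pos hR1
  set q : ℝ := pi x / returns P x T with hqdef
  have hq0 : 0 ≤ q := div_nonneg (hpinn x) hR0.le
  have hqε : q ≤ ε := le_trans (div_le_self (hpinn x) hR1) hπx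
  have hd0 : 0 < 1 - q := by linarith
  have e : lam / (1 - q) - 1 = (lam - (1 - q))/(1 - q) := by
    field_simp
  rw [e, abs_div, abs_of_pos hd0, div_le_iff₀ hd0]
  have habs : |lam - (1 - q)| ≤ 5*ε := by
    rw [abs_le]
    constructor <;> nlinarith [hlamlow, hlam1.le, hq0, hqε]
  nlinarith [habs, hd0, hε, hqε]

end FVTLaux

theorem fvtl_rate_identification
    (P : (n : ℕ) → Matrix (Fin n) (Fin n) ℝ)
    (pi : (n : ℕ) → Fin n → ℝ)
    (x : (n : ℕ) → Fin n)
    (T : ℕ → ℕ) (c : ℝ)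
    (hc : 2 < c)
    (hT : Filter.Tendsto T Filter.atTop Filter.atTop)
    (hnn : ∀ n : ℕ, 2 ≤ n → ∀ y z : Fin n, 0 ≤ P n y z)
    (hrow : ∀ n : ℕ, 2 ≤ n → ∀ y : Fin n, ∑ z, P n y z = 1)
    (hirr : ∀ n : ℕ, 2 ≤ n → ∀ y z : Fin n, ∃ t : ℕ, 0 < (P n ^ t) y z)
    (hpinn : ∀ n : ℕ, 2 ≤ n → ∀ y : Fin n, 0 ≤ pi n y)
    (hpisum : ∀ n : ℕ, 2 ≤ n → ∑ y, pi n y = 1)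
    (hpistat : ∀ n : ℕ, 2 ≤ n → Matrix.vecMul (pi n) (P n) = pi n)
    (hpiuniq : ∀ n : ℕ, 2 ≤ n → ∀ rho : Fin n → ℝ, (∀ y, 0 ≤ rho y) →
      (∑ y, rho y = 1) → Matrix.vecMul rho (P n) = rho → rho = pi n)
    (hkirr : ∀ n : ℕ, 2 ≤ n → ∀ y z : Fin n, y ≠ x n → z ≠ x n →
      ∃ t : ℕ, 0 < ((killed (P n) (x n)) ^ t) y z)
    (lam : ℕ → ℝ) (mu : (n : ℕ) → Fin n → ℝ)
    (hlam : ∀ n : ℕ, 2 ≤ n → lam n ∈ Set.Ioo (0 : ℝ) 1)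
    (hmunn : ∀ n : ℕ, 2 ≤ n → ∀ y : Fin n, 0 ≤ mu n y)
    (hmux : ∀ n : ℕ, 2 ≤ n → mu n (x n) = 0)
    (hmusum : ∀ n : ℕ, 2 ≤ n → ∑ y, mu n y = 1)
    (hmuqs : ∀ n : ℕ, 2 ≤ n →
      Matrix.vecMul (mu n) (killed (P n) (x n)) = lam n • mu n)
    (HP1 : ∀ ε : ℝ, 0 < ε → ∃ N : ℕ, ∀ n : ℕ, N ≤ n → ∀ y z : Fin n,
      (n : ℝ) ^ c * |(P n ^ T n) y z - pi n z| < ε)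
    (HP2 : ∀ ε : ℝ, 0 < ε → ∃ N : ℕ, ∀ n : ℕ, N ≤ n → ∀ y : Fin n,
      (T n : ℝ) * pi n y < ε)
    (HP3 : ∀ M : ℝ, ∃ N : ℕ, ∀ n : ℕ, N ≤ n → ∀ y : Fin n,
      M < (n : ℝ) ^ 2 * pi n y)
    :
    Filter.Tendsto
      (fun n => |lam n / (1 - pi n (x n) / returns (P n) (x n) (T n)) - 1|)
      Filter.atTop (nhds (0 : ℝ)) := by
  rw [Metric.tendsto_atTop]
  intro ε0 hε0
  set ε : ℝ := min (1/40) (ε0/11) with hεdef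
  have hε : 0 < ε := lt_min (by norm_num) (by positivity)
  have hεa : ε ≤ 1/40 := min_le_left _ _
  have hεb : ε ≤ ε0/11 := min_le_right _ _
  obtain ⟨N1, hN1⟩ := HP1 ε hε
  obtain ⟨N2, hN2⟩ := HP2 ε hε
  obtain ⟨N3, hN3⟩ := Filter.eventually_atTop.mp (hT.eventually_ge_atTop 1)
  refine ⟨max (max N1 N2) (max N3 2), fun k hk => ?_⟩
  have h1 : N1 ≤ k := le_trans (le_trans (le_max_left N1 N2) (le_max_left _ _)) hk
  have h2 : N2 ≤ k := le_trans (le_trans (le_max_right N1 N2) (le_max_left _ _)) hk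
  have h3 : N3 ≤ k := le_trans (le_trans (le_max_left N3 2) (le_max_right _ _)) hk
  have h2n : 2 ≤ k := le_trans (le_trans (le_max_right N3 2) (le_max_right _ _)) hk
  have hk0 : (0:ℝ) < (k:ℝ) := by exact_mod_cast (by omega : 0 < k)
  have hk1 : (1:ℝ) ≤ (k:ℝ) := by exact_mod_cast (by omega : 1 ≤ k)
  have hpc : (0:ℝ) < (k:ℝ) ^ c := Real.rpow_pos_of_pos hk0 c
  have hp2 : (0:ℝ) < (k:ℝ) ^ (2:ℕ) := by positivity
  have hcc : ((k:ℝ)) ^ (2:ℕ) ≤ (k:ℝ) ^ c := by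
    have e2 : ((k:ℝ)) ^ ((2:ℕ):ℝ) = ((k:ℝ)) ^ (2:ℕ) := Real.rpow_natCast _ 2
    have := Real.rpow_le_rpow_of_exponent_le hk1 hc.le
    rw [show ((2:ℝ)) = ((2:ℕ):ℝ) by norm_num, e2] at this
    exact this
  have hmixk : ∀ y z : Fin k, |(P k ^ T k) y z - pi k z| ≤ ε / (k:ℝ)^2 := by
    intro y z
    have h := hN1 k h1 y z
    have habs : |(P k ^ T k) y z - pi k z| ≤ ε / (k:ℝ)^c := by
      rw [le_div_iff₀ hpc]
      nlinarith [abs_nonneg ((P k ^ T k) y z - pi k z)]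
    exact le_trans habs (div_le_div_of_nonneg_left hε.le hp2 hcc)
  have est := FVTLaux.main_est (P k) (pi k) (x k) (T k) (lam k) (mu k) ε hε hεa
    (hN3 k h3) (hnn k h2n) (hrow k h2n) (hpinn k h2n) (hpisum k h2n)
    (hpistat k h2n) (hkirr k h2n) (hlam k h2n).1 (hlam k h2n).2
    (hmunn k h2n) (hmux k h2n) (hmusum k h2n) (hmuqs k h2n)
    hmixk (hN2 k h2)
  rw [Real.dist_eq, sub_zero, abs_abs]
  calc |lam k / (1 - pi k (x k) / returns (P k) (x k) (T k)) - 1| ≤ 10 * ε := est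
    _ < ε0 := by linarith
end

section
/- Under (HP1)–(HP3), the right Perron eigenvector γ_n of [P_n]_{x_n} asymptotically has stationary mean 1: Σ_{y ≠ x_n} π_n(y) γ_n(y) → 1 as n → ∞. -/
open Finset Filter

/-- survival probability `h_t(y)` of the chain killed at `x`. -/
def surv {n : ℕ} (P : Matrix (Fin n) (Fin n) ℝ) (x : Fin n) (t : ℕ) (y : Fin n) : ℝ :=
  ∑ z, ((killed P x) ^ t) y z

namespace GammaAux

variable {n : ℕ} {P : Matrix (Fin n) (Fin n) ℝ} {x : Fin n} {pi : Fin n → ℝ} {b : ℝ} {T : ℕ}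
variable {lam : ℝ} {mu gam : Fin n → ℝ}

lemma killed_row (z : Fin n) : killed P x x z = 0 := by
  unfold killed; simp

lemma killed_nonneg (hnn : ∀ y z, 0 ≤ P y z) (y z : Fin n) :
    0 ≤ killed P x y z := by
  unfold killed
  simp only [Matrix.of_apply]
  split
  · exact le_refl 0
  · exact hnn y z

lemma killed_le (hnn : ∀ y z, 0 ≤ P y z) (y z : Fin n) :
    killed P x y z ≤ P y z := by
  unfold killed
  simp only [Matrix.of_apply]
  split
  · exact hnn y z
  · exact le_refl _

lemma killed_col (y : Fin n) : killed P x y x = 0 := by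
  unfold killed; simp

lemma pow_entry_nonneg {M : Matrix (Fin n) (Fin n) ℝ} (h : ∀ y z, 0 ≤ M y z)
    (t : ℕ) (y z : Fin n) : 0 ≤ (M ^ t) y z := by
  induction t generalizing y z with
  | zero =>
    simp only [pow_zero, Matrix.one_apply]
    split <;> norm_num
  | succ t ih =>
    rw [pow_succ, Matrix.mul_apply]
    exact Finset.sum_nonneg fun w _ => mul_nonneg (ih y w) (h w z)

lemma pow_entry_le {A B : Matrix (Fin n) (Fin n) ℝ}
    (hA : ∀ y z, 0 ≤ A y z) (hB : ∀ y z, 0 ≤ B y z)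
    (hAB : ∀ y z, A y z ≤ B y z) (t : ℕ) (y z : Fin n) :
    (A ^ t) y z ≤ (B ^ t) y z := by
  induction t generalizing y z with
  | zero => simp
  | succ t ih =>
    rw [pow_succ, pow_succ, Matrix.mul_apply, Matrix.mul_apply]
    refine Finset.sum_le_sum fun w _ => ?_
    exact mul_le_mul (ih y w) (hAB w z) (hA w z) (pow_entry_nonneg hB t y w)

lemma pow_rowsum (hrow : ∀ y, ∑ z, P y z = 1) (t : ℕ) (y : Fin n) :
    ∑ z, (P ^ t) y z = 1 := by
  induction t generalizing y with
  | zero => simp [Matrix.one_apply]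
  | succ t ih =>
    simp only [pow_succ, Matrix.mul_apply]
    rw [Finset.sum_comm]
    calc ∑ w, ∑ z, (P ^ t) y w * P w z = ∑ w, (P ^ t) y w * ∑ z, P w z := by
          simp [Finset.mul_sum]
      _ = 1 := by simp only [hrow, mul_one]; exact ih y

lemma killed_pow_col (t : ℕ) (ht : 1 ≤ t) (y : Fin n) :
    ((killed P x) ^ t) y x = 0 := by
  obtain ⟨s, rfl⟩ := Nat.exists_eq_add_of_le ht
  rw [add_comm, pow_succ, Matrix.mul_apply]
  simp [killed_col]

lemma mix_ge (hrow : ∀ y, ∑ z, P y z = 1) (hnn : ∀ y z, 0 ≤ P y z)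
    (hb : ∀ y z, |(P ^ T) y z - pi z| ≤ b) (s : ℕ) (hs : T ≤ s) (y z : Fin n) :
    |(P ^ s) y z - pi z| ≤ b := by
  obtain ⟨u, rfl⟩ := Nat.exists_eq_add_of_le hs
  rw [add_comm, pow_add, Matrix.mul_apply]
  have key : (∑ w, (P ^ u) y w * (P ^ T) w z) - pi z
      = ∑ w, (P ^ u) y w * ((P ^ T) w z - pi z) := by
    simp only [mul_sub, Finset.sum_sub_distrib, ← Finset.sum_mul,
      pow_rowsum hrow u y, one_mul]
  rw [key]
  calc |∑ w, (P ^ u) y w * ((P ^ T) w z - pi z)|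
      ≤ ∑ w, |(P ^ u) y w * ((P ^ T) w z - pi z)| := Finset.abs_sum_le_sum_abs _ _
    _ ≤ ∑ w, (P ^ u) y w * b := by
        refine Finset.sum_le_sum fun w _ => ?_
        rw [abs_mul, abs_of_nonneg (pow_entry_nonneg hnn u y w)]
        exact mul_le_mul_of_nonneg_left (hb w z) (pow_entry_nonneg hnn u y w)
    _ = b := by rw [← Finset.sum_mul, pow_rowsum hrow u y, one_mul]

lemma killed_pow_nonneg (hnn : ∀ y z, 0 ≤ P y z) (t : ℕ) (y z : Fin n) :
    0 ≤ ((killed P x) ^ t) y z :=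
  pow_entry_nonneg (fun y z => killed_nonneg hnn y z) t y z

lemma killed_pow_le (hnn : ∀ y z, 0 ≤ P y z) (t : ℕ) (y z : Fin n) :
    ((killed P x) ^ t) y z ≤ (P ^ t) y z :=
  pow_entry_le (fun y z => killed_nonneg hnn y z) hnn (fun y z => killed_le hnn y z) t y z

lemma surv_nonneg (hnn : ∀ y z, 0 ≤ P y z) (t : ℕ) (y : Fin n) :
    0 ≤ surv P x t y :=
  Finset.sum_nonneg fun z _ => killed_pow_nonneg hnn t y z

lemma surv_le_one (hnn : ∀ y z, 0 ≤ P y z) (hrow : ∀ y, ∑ z, P y z = 1)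
    (t : ℕ) (y : Fin n) : surv P x t y ≤ 1 := by
  calc surv P x t y ≤ ∑ z, (P ^ t) y z :=
        Finset.sum_le_sum fun z _ => killed_pow_le hnn t y z
    _ = 1 := pow_rowsum hrow t y

lemma surv_zero (y : Fin n) : surv P x 0 y = 1 := by
  unfold surv; simp [Matrix.one_apply]

lemma killed_rowsum (hrow : ∀ y, ∑ z, P y z = 1) (w : Fin n) :
    ∑ z, killed P x w z = if w = x then 0 else 1 - P w x := by
  by_cases hw : w = x
  · simp [killed, hw]
  · have h1 : ∀ z : Fin n, killed P x w z = P w z - (if z = x then P w z else 0) := by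
      intro z; by_cases hz : z = x <;> simp [killed, hw, hz]
    rw [Finset.sum_congr rfl fun z _ => h1 z, Finset.sum_sub_distrib, hrow w,
      Finset.sum_ite_eq' Finset.univ x (P w)]
    simp [hw]

lemma surv_diff (hrow : ∀ y, ∑ z, P y z = 1) (t : ℕ) (y : Fin n) :
    surv P x t y - surv P x (t + 1) y
      = ∑ w, ((killed P x) ^ t) y w * (1 - ∑ z, killed P x w z) := by
  have h1 : surv P x (t + 1) y = ∑ w, ((killed P x) ^ t) y w * (∑ z, killed P x w z) := by
    unfold surv
    simp only [pow_succ, Matrix.mul_apply]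
    rw [Finset.sum_comm]
    simp [Finset.mul_sum]
  have h0 : surv P x t y = ∑ w, ((killed P x) ^ t) y w * 1 := by
    unfold surv; simp
  rw [h0, h1, ← Finset.sum_sub_distrib]
  exact Finset.sum_congr rfl fun w _ => by ring

lemma surv_step_le (hnn : ∀ y z, 0 ≤ P y z) (hrow : ∀ y, ∑ z, P y z = 1)
    (t : ℕ) (ht : 1 ≤ t) (y : Fin n) :
    surv P x t y - surv P x (t + 1) y ≤ (P ^ (t + 1)) y x := by
  rw [surv_diff hrow t y]
  have hPt : (P ^ (t+1)) y x = ∑ w, (P ^ t) y w * P w x := by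
    rw [pow_succ, Matrix.mul_apply]
  rw [hPt]
  refine Finset.sum_le_sum fun w _ => ?_
  rw [killed_rowsum hrow w]
  by_cases hw : w = x
  · rw [if_pos hw, sub_zero, mul_one, hw, killed_pow_col t ht y]
    exact mul_nonneg (pow_entry_nonneg hnn t y x) (hnn x x)
  · simp only [hw, if_false]
    have : (1 : ℝ) - (1 - P w x) = P w x := by ring
    rw [this]
    exact mul_le_mul (killed_pow_le hnn t y w) le_rfl (hnn w x)
      (pow_entry_nonneg hnn t y w)

lemma surv_loss (hnn : ∀ y z, 0 ≤ P y z) (hrow : ∀ y, ∑ z, P y z = 1)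
    (hb : ∀ y z, |(P ^ T) y z - pi z| ≤ b) (hT1 : 1 ≤ T)
    (s u : ℕ) (y : Fin n) :
    surv P x (T + s) y - surv P x (T + s + u) y ≤ u * (pi x + b) := by
  induction u with
  | zero => simp
  | succ u ih =>
    have hstep : surv P x (T + s + u) y - surv P x (T + s + u + 1) y
        ≤ (P ^ (T + s + u + 1)) y x := by
      refine surv_step_le hnn hrow _ ?_ y
      omega
    have hmix : (P ^ (T + s + u + 1)) y x ≤ pi x + b := by
      have := mix_ge hrow hnn hb (T + s + u + 1) (by omega) y x
      have := abs_le.1 this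
      linarith [this.2]
    push_cast
    have : surv P x (T + s) y - surv P x (T + s + (u + 1)) y
        = (surv P x (T + s) y - surv P x (T + s + u) y)
          + (surv P x (T + s + u) y - surv P x (T + s + u + 1) y) := by
      have : T + s + (u + 1) = T + s + u + 1 := by omega
      rw [this]; ring
    rw [this]
    push_cast at ih
    linarith

lemma surv_semigroup (s t : ℕ) (y : Fin n) :
    ∑ w, ((killed P x) ^ s) y w * surv P x t w = surv P x (s + t) y := by
  unfold surv
  rw [pow_add]
  simp only [Matrix.mul_apply]
  rw [Finset.sum_comm]
  simp [Finset.mul_sum]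

lemma killed_pow_row (t : ℕ) (ht : 1 ≤ t) (z : Fin n) :
    ((killed P x) ^ t) x z = 0 := by
  obtain ⟨s, rfl⟩ := Nat.exists_eq_add_of_le ht
  rw [add_comm, pow_succ', Matrix.mul_apply]
  simp [killed_row]

lemma surv_x (t : ℕ) (ht : 1 ≤ t) : surv P x t x = 0 := by
  unfold surv
  simp [killed_pow_row t ht]

lemma pi_stat_pow (hpistat : ∀ z, ∑ y, pi y * P y z = pi z) (t : ℕ) (z : Fin n) :
    ∑ y, pi y * (P ^ t) y z = pi z := by
  induction t generalizing z with
  | zero => simp [Matrix.one_apply, Finset.sum_ite_eq' Finset.univ z pi]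
  | succ t ih =>
    simp only [pow_succ, Matrix.mul_apply, Finset.mul_sum]
    rw [Finset.sum_comm]
    calc ∑ w, ∑ y, pi y * ((P ^ t) y w * P w z)
        = ∑ w, (∑ y, pi y * (P ^ t) y w) * P w z := by
          congr 1; ext w; rw [Finset.sum_mul]; congr 1; ext y; ring
      _ = pi z := by simp only [ih]; exact hpistat z

lemma surv_diff_le_all (hnn : ∀ y z, 0 ≤ P y z) (hrow : ∀ y, ∑ z, P y z = 1)
    (t : ℕ) (y : Fin n) :
    surv P x t y - surv P x (t + 1) y ≤ (P ^ t) y x + ∑ w, (P ^ t) y w * P w x := by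
  rw [surv_diff hrow t y]
  rw [← Finset.sum_erase_add Finset.univ _ (Finset.mem_univ x)]
  have hx : ((killed P x) ^ t) y x * (1 - ∑ z, killed P x x z) ≤ (P ^ t) y x := by
    rw [killed_rowsum hrow x, if_pos rfl, sub_zero, mul_one]
    exact killed_pow_le hnn t y x
  have herase : ∑ w ∈ Finset.univ.erase x,
      ((killed P x) ^ t) y w * (1 - ∑ z, killed P x w z)
      ≤ ∑ w, (P ^ t) y w * P w x := by
    refine le_trans (Finset.sum_le_sum fun w hw => ?_)
      (Finset.sum_le_sum_of_subset_of_nonneg (Finset.subset_univ _)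
        (fun w _ _ => mul_nonneg (pow_entry_nonneg hnn t y w) (hnn w x)))
    have hwx : w ≠ x := Finset.ne_of_mem_erase hw
    rw [killed_rowsum hrow w, if_neg hwx]
    have : (1 : ℝ) - (1 - P w x) = P w x := by ring
    rw [this]
    exact mul_le_mul (killed_pow_le hnn t y w) le_rfl (hnn w x)
      (pow_entry_nonneg hnn t y w)
  linarith

lemma pi_surv (hnn : ∀ y z, 0 ≤ P y z) (hrow : ∀ y, ∑ z, P y z = 1)
    (hpinn : ∀ y, 0 ≤ pi y) (hpisum : ∑ y, pi y = 1)
    (hpistat : ∀ z, ∑ y, pi y * P y z = pi z) (t : ℕ) :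
    1 - 2 * t * pi x ≤ ∑ y, pi y * surv P x t y := by
  induction t with
  | zero => simp [surv_zero, hpisum]
  | succ t ih =>
    have hstep : ∑ y, pi y * (surv P x t y - surv P x (t + 1) y) ≤ 2 * pi x := by
      calc ∑ y, pi y * (surv P x t y - surv P x (t + 1) y)
          ≤ ∑ y, pi y * ((P ^ t) y x + ∑ w, (P ^ t) y w * P w x) :=
            Finset.sum_le_sum fun y _ =>
              mul_le_mul_of_nonneg_left (surv_diff_le_all hnn hrow t y) (hpinn y)
        _ = (∑ y, pi y * (P ^ t) y x) + ∑ y, pi y * ∑ w, (P ^ t) y w * P w x := by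
            rw [← Finset.sum_add_distrib]; congr 1; ext y; ring
        _ = pi x + pi x := by
            congr 1
            · exact pi_stat_pow hpistat t x
            · calc ∑ y, pi y * ∑ w, (P ^ t) y w * P w x
                  = ∑ w, (∑ y, pi y * (P ^ t) y w) * P w x := by
                    simp only [Finset.mul_sum]
                    rw [Finset.sum_comm]
                    congr 1; ext w; rw [Finset.sum_mul]; congr 1; ext y; ring
                _ = pi x := by simp only [pi_stat_pow hpistat]; exact hpistat x
        _ = 2 * pi x := by ring
    have hexp : ∑ y, pi y * (surv P x t y - surv P x (t + 1) y)
        = (∑ y, pi y * surv P x t y) - ∑ y, pi y * surv P x (t + 1) y := by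
      rw [← Finset.sum_sub_distrib]; congr 1; ext y; ring
    push_cast
    push_cast at ih
    rw [hexp] at hstep
    linarith

variable {lam : ℝ} {mu gam : Fin n → ℝ}

lemma gam_pow (hg : ∀ y, ∑ z, killed P x y z * gam z = lam * gam y)
    (t : ℕ) (y : Fin n) :
    ∑ z, ((killed P x) ^ t) y z * gam z = lam ^ t * gam y := by
  induction t generalizing y with
  | zero => simp [Matrix.one_apply, Finset.sum_ite_eq Finset.univ y gam]
  | succ t ih =>
    simp only [pow_succ', Matrix.mul_apply]
    calc ∑ z, (∑ w, killed P x y w * ((killed P x) ^ t) w z) * gam z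
        = ∑ w, killed P x y w * ∑ z, ((killed P x) ^ t) w z * gam z := by
          simp only [Finset.sum_mul, Finset.mul_sum]
          rw [Finset.sum_comm]
          congr 1; ext w; congr 1; ext z; ring
      _ = lam ^ t * ∑ w, killed P x y w * gam w := by
          simp only [ih, Finset.mul_sum]; congr 1; ext w; ring
      _ = lam * lam ^ t * gam y := by rw [hg y]; ring

lemma mu_pow (hm : ∀ z, ∑ y, mu y * killed P x y z = lam * mu z)
    (t : ℕ) (z : Fin n) :
    ∑ y, mu y * ((killed P x) ^ t) y z = lam ^ t * mu z := by
  induction t generalizing z with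
  | zero => simp [Matrix.one_apply, Finset.sum_ite_eq' Finset.univ z mu]
  | succ t ih =>
    simp only [pow_succ, Matrix.mul_apply]
    calc ∑ y, mu y * ∑ w, ((killed P x) ^ t) y w * killed P x w z
        = ∑ w, (∑ y, mu y * ((killed P x) ^ t) y w) * killed P x w z := by
          simp only [Finset.mul_sum]
          rw [Finset.sum_comm]
          congr 1; ext w; rw [Finset.sum_mul]; congr 1; ext y; ring
      _ = lam ^ t * ∑ w, mu w * killed P x w z := by
          simp only [ih, Finset.mul_sum]; congr 1; ext w; ring
      _ = lam ^ (t + 1) * mu z := by rw [hm z]; ring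

lemma mu_surv (hmusum : ∑ y, mu y = 1)
    (hm : ∀ z, ∑ y, mu y * killed P x y z = lam * mu z) (t : ℕ) :
    ∑ y, mu y * surv P x t y = lam ^ t := by
  unfold surv
  calc ∑ y, mu y * ∑ z, ((killed P x) ^ t) y z
      = ∑ z, ∑ y, mu y * ((killed P x) ^ t) y z := by
        simp only [Finset.mul_sum]; rw [Finset.sum_comm]
    _ = ∑ z, lam ^ t * mu z := by simp only [mu_pow hm]
    _ = lam ^ t := by rw [← Finset.mul_sum, hmusum, mul_one]

lemma mu_pos (hkirr : ∀ y z : Fin n, y ≠ x → z ≠ x →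
      ∃ t : ℕ, 0 < ((killed P x) ^ t) y z)
    (hnn : ∀ y z, 0 ≤ P y z)
    (hmunn : ∀ y, 0 ≤ mu y) (hmux : mu x = 0) (hmusum : ∑ y, mu y = 1)
    (hm : ∀ z, ∑ y, mu y * killed P x y z = lam * mu z)
    (hlam0 : 0 < lam) (z : Fin n) (hz : z ≠ x) : 0 < mu z := by
  have hex : ∃ y₀ : Fin n, 0 < mu y₀ := by
    by_contra h
    push_neg at h
    have : ∀ y : Fin n, mu y = 0 := fun y => le_antisymm (h y) (hmunn y)
    rw [Finset.sum_congr rfl fun y _ => this y] at hmusum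
    simp at hmusum
  obtain ⟨y₀, hy₀⟩ := hex
  have hy₀x : y₀ ≠ x := by
    intro h; rw [h, hmux] at hy₀; exact lt_irrefl 0 hy₀
  obtain ⟨t, ht⟩ := hkirr y₀ z hy₀x hz
  have hsum : 0 < ∑ y, mu y * ((killed P x) ^ t) y z := by
    refine Finset.sum_pos' (fun y _ => mul_nonneg (hmunn y) (killed_pow_nonneg hnn t y z)) ?_
    exact ⟨y₀, Finset.mem_univ y₀, mul_pos hy₀ ht⟩
  rw [mu_pow hm t z] at hsum
  by_contra h
  push_neg at h
  have : mu z = 0 := le_antisymm h (hmunn z)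
  rw [this, mul_zero] at hsum
  exact lt_irrefl 0 hsum

lemma lam_pow_lower
    (hnn : ∀ y z, 0 ≤ P y z) (hrow : ∀ y, ∑ z, P y z = 1)
    (hpinn : ∀ y, 0 ≤ pi y) (hpisum : ∑ y, pi y = 1)
    (hpistat : ∀ z, ∑ y, pi y * P y z = pi z)
    (hkirr : ∀ y z : Fin n, y ≠ x → z ≠ x → ∃ t : ℕ, 0 < ((killed P x) ^ t) y z)
    (hlam0 : 0 < lam)
    (hmunn : ∀ y, 0 ≤ mu y) (hmux : mu x = 0) (hmusum : ∑ y, mu y = 1)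
    (hm : ∀ z, ∑ y, mu y * killed P x y z = lam * mu z)
    (hb : ∀ y z, |(P ^ T) y z - pi z| ≤ b) (hb0 : 0 ≤ b) (hT1 : 1 ≤ T)
    {δ : ℝ} (hδ' : δ ≤ 1/100)
    (h1 : (T : ℝ) * pi x ≤ δ) (h2 : (T : ℝ) * b ≤ δ) :
    1 - 3 * ((T : ℝ) * (pi x + b)) ≤ lam ^ T := by
  set a : ℝ := (T : ℝ) * (pi x + b) with ha_def
  have hπx : 0 ≤ pi x := hpinn x
  have hT0 : (0 : ℝ) ≤ (T : ℝ) := Nat.cast_nonneg T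
  have ha0 : 0 ≤ a := mul_nonneg hT0 (by linarith)
  have ha6 : a ≤ 1/6 := by
    have : a = (T : ℝ) * pi x + (T : ℝ) * b := by rw [ha_def]; ring
    linarith
  -- the test vector
  set v : Fin n → ℝ := fun w => max (surv P x (2 * T) w - 1/2) 0 with hv_def
  have hv_nonneg : ∀ w, 0 ≤ v w := fun w => le_max_right _ _
  -- key pointwise inequality
  have key : ∀ y : Fin n, (1 - 3 * a) * v y ≤ ∑ w, ((killed P x) ^ T) y w * v w := by
    intro y
    have hRHS0 : 0 ≤ ∑ w, ((killed P x) ^ T) y w * v w :=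
      Finset.sum_nonneg fun w _ => mul_nonneg (killed_pow_nonneg hnn T y w) (hv_nonneg w)
    rcases le_or_gt (surv P x (2 * T) y) (1/2) with hy | hy
    · have : v y = 0 := by
        rw [hv_def]; simp only; rw [max_eq_right (by linarith)]
      rw [this, mul_zero]; exact hRHS0
    · have hvy : v y = surv P x (2 * T) y - 1/2 := by
        rw [hv_def]; simp only; rw [max_eq_left (by linarith)]
      have hlow : ∑ w, ((killed P x) ^ T) y w * (surv P x (2 * T) w - 1/2)
          ≤ ∑ w, ((killed P x) ^ T) y w * v w := by
        refine Finset.sum_le_sum fun w _ => ?_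
        exact mul_le_mul_of_nonneg_left (le_max_left _ _) (killed_pow_nonneg hnn T y w)
      have hexp : ∑ w, ((killed P x) ^ T) y w * (surv P x (2 * T) w - 1/2)
          = surv P x (T + 2 * T) y - (1/2) * surv P x T y := by
        have e1 : ∑ w, ((killed P x) ^ T) y w * surv P x (2*T) w = surv P x (T + 2 * T) y :=
          surv_semigroup T (2*T) y
        have e2 : ∑ w, ((killed P x) ^ T) y w = surv P x T y := rfl
        calc ∑ w, ((killed P x) ^ T) y w * (surv P x (2 * T) w - 1/2)
            = (∑ w, ((killed P x) ^ T) y w * surv P x (2*T) w)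
              - (1/2) * ∑ w, ((killed P x) ^ T) y w := by
              rw [Finset.mul_sum, ← Finset.sum_sub_distrib]
              congr 1; ext w; ring
          _ = surv P x (T + 2 * T) y - (1/2) * surv P x T y := by rw [e1, e2]
      -- survival loss facts
      have F1 : surv P x (T + T) y - surv P x (T + T + T) y ≤ a :=
        surv_loss hnn hrow hb hT1 T T y
      have F2 : surv P x (T + 0) y - surv P x (T + 0 + T) y ≤ a :=
        surv_loss hnn hrow hb hT1 0 T y
      have e3 : 2 * T = T + T := by ring
      have e4 : T + 2 * T = T + T + T := by ring
      have e5 : T + 0 = T := by ring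
      have e6 : T + 0 + T = T + T := by ring
      rw [e3] at hy hvy
      simp only [Nat.add_zero] at F2
      rw [hvy]
      have hH1 : surv P x (T + T) y ≤ 1 := surv_le_one hnn hrow _ y
      calc (1 - 3*a) * (surv P x (T + T) y - 1/2)
          ≤ surv P x (T + T + T) y - (1/2) * surv P x T y := by nlinarith
        _ = surv P x (T + 2*T) y - (1/2) * surv P x T y := by rw [e4]
        _ = ∑ w, ((killed P x) ^ T) y w * (surv P x (2 * T) w - 1/2) := by
            rw [hexp, e3]
        _ ≤ ∑ w, ((killed P x) ^ T) y w * v w := hlow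
  -- a good starting state exists
  have hgood : ∃ y₀ : Fin n, y₀ ≠ x ∧ 1/2 < surv P x (2 * T) y₀ - 1/2 + 1/2 ∧
      0.9 ≤ surv P x (2 * T) y₀ := by
    obtain ⟨y₀, _, hmax⟩ := Finset.exists_max_image Finset.univ (surv P x (2 * T))
      ⟨x, Finset.mem_univ x⟩
    have havg : 1 - 2 * (2 * T : ℕ) * pi x ≤ ∑ y, pi y * surv P x (2 * T) y :=
      pi_surv hnn hrow hpinn hpisum hpistat (2 * T)
    have hbound : ∑ y, pi y * surv P x (2 * T) y ≤ surv P x (2 * T) y₀ := by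
      calc ∑ y, pi y * surv P x (2 * T) y ≤ ∑ y, pi y * surv P x (2 * T) y₀ :=
            Finset.sum_le_sum fun y _ =>
              mul_le_mul_of_nonneg_left (hmax y (Finset.mem_univ y)) (hpinn y)
        _ = surv P x (2 * T) y₀ := by rw [← Finset.sum_mul, hpisum, one_mul]
    have hcast : (2 * (2 * T : ℕ) : ℝ) * pi x = 4 * ((T : ℝ) * pi x) := by
      push_cast; ring
    have h09 : 0.9 ≤ surv P x (2 * T) y₀ := by
      have : 1 - 4 * ((T:ℝ) * pi x) ≤ ∑ y, pi y * surv P x (2 * T) y := by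
        push_cast at havg ⊢
        nlinarith
      nlinarith
    refine ⟨y₀, ?_, by linarith, h09⟩
    intro h
    rw [h, surv_x (2 * T) (by omega)] at h09
    norm_num at h09
  obtain ⟨y₀, hy₀x, _, h09⟩ := hgood
  -- pair with mu
  have hμv : 0 < ∑ w, mu w * v w := by
    refine Finset.sum_pos' (fun w _ => mul_nonneg (hmunn w) (hv_nonneg w)) ?_
    refine ⟨y₀, Finset.mem_univ y₀, ?_⟩
    have : 0 < v y₀ := by
      rw [hv_def]; simp only
      rw [max_eq_left (by linarith)]; linarith
    exact mul_pos (mu_pos hkirr hnn hmunn hmux hmusum hm hlam0 y₀ hy₀x) this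
  have hpair : (1 - 3*a) * ∑ w, mu w * v w ≤ lam ^ T * ∑ w, mu w * v w := by
    calc (1 - 3*a) * ∑ w, mu w * v w = ∑ w, mu w * ((1 - 3*a) * v w) := by
          rw [Finset.mul_sum]; congr 1; ext w; ring
      _ ≤ ∑ y, mu y * ∑ w, ((killed P x) ^ T) y w * v w :=
          Finset.sum_le_sum fun y _ => mul_le_mul_of_nonneg_left (key y) (hmunn y)
      _ = ∑ w, (∑ y, mu y * ((killed P x) ^ T) y w) * v w := by
          simp only [Finset.mul_sum]
          rw [Finset.sum_comm]
          congr 1; ext w; rw [Finset.sum_mul]; congr 1; ext y; ring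
      _ = lam ^ T * ∑ w, mu w * v w := by
          simp only [mu_pow hm]
          rw [Finset.mul_sum]
          congr 1; ext w; ring
  exact le_of_mul_le_mul_right (by linarith [hpair]) hμv
lemma key_bound
    (hn : 2 ≤ n)
    (hnn : ∀ y z, 0 ≤ P y z) (hrow : ∀ y, ∑ z, P y z = 1)
    (hpipos : ∀ y, 0 < pi y) (hpisum : ∑ y, pi y = 1)
    (hpistat : ∀ z, ∑ y, pi y * P y z = pi z)
    (hkirr : ∀ y z : Fin n, y ≠ x → z ≠ x → ∃ t : ℕ, 0 < ((killed P x) ^ t) y z)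
    (hlam0 : 0 < lam) (hlam1 : lam < 1)
    (hmunn : ∀ y, 0 ≤ mu y) (hmux : mu x = 0) (hmusum : ∑ y, mu y = 1)
    (hm : ∀ z, ∑ y, mu y * killed P x y z = lam * mu z)
    (hgx : gam x = 0) (hgpos : ∀ y, y ≠ x → 0 < gam y)
    (hg : ∀ y, ∑ z, killed P x y z * gam z = lam * gam y)
    (hgnorm : ∑ y, mu y * gam y = 1)
    (hb : ∀ y z, |(P ^ T) y z - pi z| ≤ b) (hb0 : 0 ≤ b) (hT1 : 1 ≤ T)
    {δ : ℝ} (hδ0 : 0 < δ) (hδ' : δ ≤ 1/100)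
    (h1 : (T : ℝ) * pi x ≤ δ) (h2 : (T : ℝ) * b ≤ δ) (h3 : (n : ℝ) * b ≤ δ) :
    |(∑ y, pi y * gam y) - 1| ≤ 17 * δ := by
  have hpinn : ∀ y, 0 ≤ pi y := fun y => le_of_lt (hpipos y)
  have hgnn : ∀ z, 0 ≤ gam z := by
    intro z
    by_cases hz : z = x
    · rw [hz, hgx]
    · exact le_of_lt (hgpos z hz)
  set q : ℝ := lam ^ T with hq_def
  have hq1 : q ≤ 1 := pow_le_one₀ (le_of_lt hlam0) (le_of_lt hlam1)
  have hq0 : 0 < q := pow_pos hlam0 T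
  have hqlow : 1 - 6 * δ ≤ q := by
    have := lam_pow_lower hnn hrow hpinn hpisum hpistat hkirr hlam0 hmunn hmux hmusum hm
      hb hb0 hT1 hδ' h1 h2
    have ha : (T : ℝ) * (pi x + b) ≤ 2 * δ := by
      have : (T : ℝ) * (pi x + b) = (T : ℝ) * pi x + (T : ℝ) * b := by ring
      linarith
    linarith
  -- the max of gamma
  obtain ⟨ys, _, hysmax⟩ := Finset.exists_max_image Finset.univ gam ⟨x, Finset.mem_univ x⟩
  set W : ℝ := gam ys with hW_def
  have hW_ge : ∀ z, gam z ≤ W := fun z => hysmax z (Finset.mem_univ z)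
  obtain ⟨y1, hy1x⟩ : ∃ y : Fin n, y ≠ x := by
    have hcard : 1 < Fintype.card (Fin n) := by simp; omega
    exact Fintype.exists_ne_of_one_lt_card hcard x
  have hW0 : 0 < W := lt_of_lt_of_le (hgpos y1 hy1x) (hW_ge y1)
  set S : ℝ := ∑ y, pi y * gam y with hS_def
  have hS0 : 0 < S := by
    refine Finset.sum_pos' (fun y _ => mul_nonneg (hpinn y) (hgnn y)) ?_
    exact ⟨y1, Finset.mem_univ y1, mul_pos (hpipos y1) (hgpos y1 hy1x)⟩
  have hsumgam : ∑ z, gam z ≤ (n : ℝ) * W := by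
    calc ∑ z, gam z ≤ ∑ _z : Fin n, W := Finset.sum_le_sum fun z _ => hW_ge z
      _ = (n : ℝ) * W := by rw [Finset.sum_const]; simp [mul_comm]
  have hsumgam0 : 0 ≤ ∑ z, gam z := Finset.sum_nonneg fun z _ => hgnn z
  -- mixing bounds
  have MixUp : ∀ y, ∑ z, (P ^ T) y z * gam z ≤ S + b * ((n : ℝ) * W) := by
    intro y
    calc ∑ z, (P ^ T) y z * gam z ≤ ∑ z, (pi z + b) * gam z := by
          refine Finset.sum_le_sum fun z _ => ?_
          have := abs_le.1 (hb y z)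
          exact mul_le_mul_of_nonneg_right (by linarith [this.2]) (hgnn z)
      _ = S + b * ∑ z, gam z := by
          rw [hS_def, Finset.mul_sum, ← Finset.sum_add_distrib]
          congr 1; ext z; ring
      _ ≤ S + b * ((n : ℝ) * W) := by
          have := mul_le_mul_of_nonneg_left hsumgam hb0
          linarith
  have MixDn : ∀ y, S - b * ((n : ℝ) * W) ≤ ∑ z, (P ^ T) y z * gam z := by
    intro y
    have step1 : ∑ z, (pi z - b) * gam z ≤ ∑ z, (P ^ T) y z * gam z := by
      refine Finset.sum_le_sum fun z _ => ?_
      have := abs_le.1 (hb y z)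
      exact mul_le_mul_of_nonneg_right (by linarith [this.1]) (hgnn z)
    have step2 : ∑ z, (pi z - b) * gam z = S - b * ∑ z, gam z := by
      rw [hS_def, Finset.mul_sum, ← Finset.sum_sub_distrib]
      congr 1; ext z; ring
    have := mul_le_mul_of_nonneg_left hsumgam hb0
    linarith
  have EigT : ∀ y, ∑ z, ((killed P x) ^ T) y z * gam z = q * gam y := gam_pow hg T
  -- (A)
  have hA : q * W ≤ S + b * ((n : ℝ) * W) := by
    have : q * W = ∑ z, ((killed P x) ^ T) ys z * gam z := (EigT ys).symm
    rw [this]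
    refine le_trans (Finset.sum_le_sum fun z _ => ?_) (MixUp ys)
    exact mul_le_mul_of_nonneg_right (killed_pow_le hnn T ys z) (hgnn z)
  -- (B)
  have hB : q ≤ S + b * ((n : ℝ) * W) := by
    have expand : q = ∑ y, mu y * ∑ z, ((killed P x) ^ T) y z * gam z := by
      calc q = q * ∑ y, mu y * gam y := by rw [hgnorm, mul_one]
        _ = ∑ y, mu y * (q * gam y) := by rw [Finset.mul_sum]; congr 1; ext y; ring
        _ = ∑ y, mu y * ∑ z, ((killed P x) ^ T) y z * gam z := by
            congr 1; ext y; rw [EigT y]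
    rw [expand]
    calc ∑ y, mu y * ∑ z, ((killed P x) ^ T) y z * gam z
        ≤ ∑ y, mu y * (S + b * ((n : ℝ) * W)) := by
          refine Finset.sum_le_sum fun y _ => ?_
          refine mul_le_mul_of_nonneg_left ?_ (hmunn y)
          refine le_trans (Finset.sum_le_sum fun z _ => ?_) (MixUp y)
          exact mul_le_mul_of_nonneg_right (killed_pow_le hnn T y z) (hgnn z)
      _ = S + b * ((n : ℝ) * W) := by rw [← Finset.sum_mul, hmusum, one_mul]
  -- (C)
  have hC : S ≤ q + b * ((n : ℝ) * W) + (1 - q) * W := by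
    have pointwise : ∀ y, S - b * ((n : ℝ) * W) - (1 - surv P x T y) * W ≤ q * gam y := by
      intro y
      have hdiff : ∑ z, ((P ^ T) y z - ((killed P x) ^ T) y z) * gam z
          ≤ (1 - surv P x T y) * W := by
        calc ∑ z, ((P ^ T) y z - ((killed P x) ^ T) y z) * gam z
            ≤ ∑ z, ((P ^ T) y z - ((killed P x) ^ T) y z) * W := by
              refine Finset.sum_le_sum fun z _ => ?_
              exact mul_le_mul_of_nonneg_left (hW_ge z)
                (by linarith [killed_pow_le (x := x) hnn T y z])
          _ = (1 - surv P x T y) * W := by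
              rw [← Finset.sum_mul]
              congr 1
              rw [Finset.sum_sub_distrib, pow_rowsum hrow T y]
              rfl
      have hsplit : ∑ z, (P ^ T) y z * gam z
          = (∑ z, ((killed P x) ^ T) y z * gam z)
            + ∑ z, ((P ^ T) y z - ((killed P x) ^ T) y z) * gam z := by
        rw [← Finset.sum_add_distrib]
        congr 1; ext z; ring
      have := MixDn y
      rw [hsplit] at this
      rw [← EigT y]
      linarith
    have sum_mu : ∑ y, mu y * (S - b * ((n : ℝ) * W) - W + W * surv P x T y)
        ≤ ∑ y, mu y * (q * gam y) := by
      refine Finset.sum_le_sum fun y _ => ?_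
      refine mul_le_mul_of_nonneg_left ?_ (hmunn y)
      have := pointwise y
      linarith
    have lhs_eq : ∑ y, mu y * (S - b * ((n : ℝ) * W) - W + W * surv P x T y)
        = S - b * ((n : ℝ) * W) - W + W * q := by
      have e1 : ∑ y, mu y * (S - b * ((n : ℝ) * W) - W + W * surv P x T y)
          = (∑ y, mu y * (S - b * ((n : ℝ) * W) - W)) + W * ∑ y, mu y * surv P x T y := by
        rw [Finset.mul_sum, ← Finset.sum_add_distrib]
        congr 1; ext y; ring
      rw [e1, ← Finset.sum_mul, hmusum, one_mul, mu_surv hmusum hm T, ← hq_def]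
    have rhs_eq : ∑ y, mu y * (q * gam y) = q := by
      calc ∑ y, mu y * (q * gam y) = q * ∑ y, mu y * gam y := by
            rw [Finset.mul_sum]; congr 1; ext y; ring
        _ = q := by rw [hgnorm, mul_one]
    rw [lhs_eq, rhs_eq] at sum_mu
    linarith
  -- numerics
  have hbnW : b * ((n : ℝ) * W) ≤ δ * W := by
    have : b * ((n : ℝ) * W) = ((n : ℝ) * b) * W := by ring
    rw [this]
    exact mul_le_mul_of_nonneg_right h3 (le_of_lt hW0)
  have hW2S : W ≤ 2 * S := by nlinarith
  have hlower : 1 - 17 * δ ≤ S := by nlinarith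
  have hupper : S ≤ 1 + 17 * δ := by nlinarith
  rw [abs_le]
  constructor <;> linarith


end GammaAux

theorem gamma_stationary_mean_one
    (P : (n : ℕ) → Matrix (Fin n) (Fin n) ℝ)
    (pi : (n : ℕ) → Fin n → ℝ)
    (x : (n : ℕ) → Fin n)
    (T : ℕ → ℕ) (c : ℝ)
    (hc : 2 < c)
    (hT : Filter.Tendsto T Filter.atTop Filter.atTop)
    (hnn : ∀ n : ℕ, 2 ≤ n → ∀ y z : Fin n, 0 ≤ P n y z)
    (hrow : ∀ n : ℕ, 2 ≤ n → ∀ y : Fin n, ∑ z, P n y z = 1)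
    (hirr : ∀ n : ℕ, 2 ≤ n → ∀ y z : Fin n, ∃ t : ℕ, 0 < (P n ^ t) y z)
    (hpinn : ∀ n : ℕ, 2 ≤ n → ∀ y : Fin n, 0 ≤ pi n y)
    (hpisum : ∀ n : ℕ, 2 ≤ n → ∑ y, pi n y = 1)
    (hpistat : ∀ n : ℕ, 2 ≤ n → Matrix.vecMul (pi n) (P n) = pi n)
    (hpiuniq : ∀ n : ℕ, 2 ≤ n → ∀ rho : Fin n → ℝ, (∀ y, 0 ≤ rho y) →
      (∑ y, rho y = 1) → Matrix.vecMul rho (P n) = rho → rho = pi n)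
    (hkirr : ∀ n : ℕ, 2 ≤ n → ∀ y z : Fin n, y ≠ x n → z ≠ x n →
      ∃ t : ℕ, 0 < ((killed (P n) (x n)) ^ t) y z)
    (lam : ℕ → ℝ) (mu : (n : ℕ) → Fin n → ℝ)
    (hlam : ∀ n : ℕ, 2 ≤ n → lam n ∈ Set.Ioo (0 : ℝ) 1)
    (hmunn : ∀ n : ℕ, 2 ≤ n → ∀ y : Fin n, 0 ≤ mu n y)
    (hmux : ∀ n : ℕ, 2 ≤ n → mu n (x n) = 0)
    (hmusum : ∀ n : ℕ, 2 ≤ n → ∑ y, mu n y = 1)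
    (hmuqs : ∀ n : ℕ, 2 ≤ n →
      Matrix.vecMul (mu n) (killed (P n) (x n)) = lam n • mu n)
    (gamma : (n : ℕ) → Fin n → ℝ)
    (hgx : ∀ n : ℕ, 2 ≤ n → gamma n (x n) = 0)
    (hgpos : ∀ n : ℕ, 2 ≤ n → ∀ y : Fin n, y ≠ x n → 0 < gamma n y)
    (hgeig : ∀ n : ℕ, 2 ≤ n →
      Matrix.mulVec (killed (P n) (x n)) (gamma n) = lam n • gamma n)
    (hgnorm : ∀ n : ℕ, 2 ≤ n →
      ∑ y ∈ Finset.univ.erase (x n), mu n y * gamma n y = 1)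
    (HP1 : ∀ ε : ℝ, 0 < ε → ∃ N : ℕ, ∀ n : ℕ, N ≤ n → ∀ y z : Fin n,
      (n : ℝ) ^ c * |(P n ^ T n) y z - pi n z| < ε)
    (HP2 : ∀ ε : ℝ, 0 < ε → ∃ N : ℕ, ∀ n : ℕ, N ≤ n → ∀ y : Fin n,
      (T n : ℝ) * pi n y < ε)
    (HP3 : ∀ M : ℝ, ∃ N : ℕ, ∀ n : ℕ, N ≤ n → ∀ y : Fin n,
      M < (n : ℝ) ^ 2 * pi n y)
    :
    Filter.Tendsto
      (fun n => ∑ y ∈ Finset.univ.erase (x n), pi n y * gamma n y)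
      Filter.atTop (nhds (1 : ℝ)) := by
  rw [Metric.tendsto_atTop]
  intro ε hε
  set δ : ℝ := min (ε / 18) (1 / 100) with hδ_def
  have hδ0 : 0 < δ := lt_min (by linarith) (by norm_num)
  have hδ' : δ ≤ 1 / 100 := min_le_right _ _
  have hδε : 17 * δ < ε := by
    have : δ ≤ ε / 18 := min_le_left _ _
    linarith
  -- collect the thresholds
  obtain ⟨N1, hN1⟩ := HP1 (δ ^ 4) (by positivity)
  obtain ⟨N2, hN2⟩ := HP2 δ hδ0
  obtain ⟨N3, hN3⟩ := HP3 1
  obtain ⟨N4, hN4⟩ := Filter.eventually_atTop.1 (hT.eventually_ge_atTop 1)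
  refine ⟨max (max N1 N2) (max (max N3 N4) 2), fun n hn => ?_⟩
  have hn1 : N1 ≤ n := le_trans (le_trans (le_max_left _ _) (le_max_left _ _)) hn
  have hn2' : N2 ≤ n := le_trans (le_trans (le_max_right _ _) (le_max_left _ _)) hn
  have hn3 : N3 ≤ n := le_trans (le_trans (le_max_left _ _)
    (le_trans (le_max_left _ _) (le_max_right _ _))) hn
  have hn4 : N4 ≤ n := le_trans (le_trans (le_max_right _ _)
    (le_trans (le_max_left _ _) (le_max_right _ _))) hn
  have hn2 : 2 ≤ n := le_trans (le_trans (le_max_right _ _) (le_max_right _ _)) hn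
  -- basic positivity facts
  have hnR1 : (1 : ℝ) ≤ (n : ℝ) := by
    have : (2 : ℝ) ≤ (n : ℝ) := by exact_mod_cast hn2
    linarith
  have hnc_pos : (0 : ℝ) < (n : ℝ) ^ c := Real.rpow_pos_of_pos (by linarith) c
  set b : ℝ := δ ^ 4 / (n : ℝ) ^ c with hb_def
  have hb0 : 0 ≤ b := by positivity
  have hδ1 : δ ≤ 1 := by linarith
  have hδ4 : δ ^ 4 ≤ δ := by
    have h3' : δ ^ 3 ≤ 1 := pow_le_one₀ (le_of_lt hδ0) hδ1
    calc δ ^ 4 = δ ^ 3 * δ := by ring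
      _ ≤ 1 * δ := mul_le_mul_of_nonneg_right h3' (le_of_lt hδ0)
      _ = δ := one_mul δ
  have hδ5 : δ ^ 5 ≤ δ := by
    have h4' : δ ^ 4 ≤ 1 := pow_le_one₀ (le_of_lt hδ0) hδ1
    calc δ ^ 5 = δ ^ 4 * δ := by ring
      _ ≤ 1 * δ := mul_le_mul_of_nonneg_right h4' (le_of_lt hδ0)
      _ = δ := one_mul δ
  -- the mixing bound
  have hb : ∀ y z : Fin n, |(P n ^ T n) y z - pi n z| ≤ b := by
    intro y z
    have := hN1 n hn1 y z
    rw [hb_def, le_div_iff₀ hnc_pos]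
    calc |(P n ^ T n) y z - pi n z| * (n : ℝ) ^ c
        = (n : ℝ) ^ c * |(P n ^ T n) y z - pi n z| := by ring
      _ ≤ δ ^ 4 := le_of_lt this
  -- n * b ≤ δ
  have hn_le_nc : (n : ℝ) ≤ (n : ℝ) ^ c := by
    calc (n : ℝ) = (n : ℝ) ^ (1 : ℝ) := (Real.rpow_one _).symm
      _ ≤ (n : ℝ) ^ c := Real.rpow_le_rpow_of_exponent_le hnR1 (by linarith)
  have h3 : (n : ℝ) * b ≤ δ := by
    have e : (n : ℝ) * b = δ ^ 4 * ((n : ℝ) / (n : ℝ) ^ c) := by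
      rw [hb_def]; ring
    have : (n : ℝ) / (n : ℝ) ^ c ≤ 1 := (div_le_one hnc_pos).2 hn_le_nc
    calc (n : ℝ) * b = δ ^ 4 * ((n : ℝ) / (n : ℝ) ^ c) := e
      _ ≤ δ ^ 4 * 1 := mul_le_mul_of_nonneg_left this (by positivity)
      _ ≤ δ := by rw [mul_one]; exact hδ4
  -- pi is positive
  have hn2_pos : (0 : ℝ) < (n : ℝ) ^ 2 := by positivity
  have hpipos : ∀ y : Fin n, 0 < pi n y := by
    intro y
    have h := hN3 n hn3 y
    by_contra hy
    push_neg at hy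
    have : (n : ℝ) ^ 2 * pi n y ≤ 0 :=
      mul_nonpos_of_nonneg_of_nonpos (le_of_lt hn2_pos) hy
    linarith
  -- T bound
  have h1 : (T n : ℝ) * pi n (x n) ≤ δ := le_of_lt (hN2 n hn2' (x n))
  have hTδn2 : (T n : ℝ) ≤ δ * (n : ℝ) ^ 2 := by
    have hp := hN3 n hn3 (x n)
    have ht := hN2 n hn2' (x n)
    have hT0 : (0 : ℝ) ≤ (T n : ℝ) := Nat.cast_nonneg _
    calc (T n : ℝ) = (T n : ℝ) * 1 := (mul_one _).symm
      _ ≤ (T n : ℝ) * ((n : ℝ) ^ 2 * pi n (x n)) :=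
          mul_le_mul_of_nonneg_left (le_of_lt hp) hT0
      _ = (n : ℝ) ^ 2 * ((T n : ℝ) * pi n (x n)) := by ring
      _ ≤ (n : ℝ) ^ 2 * δ := mul_le_mul_of_nonneg_left (le_of_lt ht) (le_of_lt hn2_pos)
      _ = δ * (n : ℝ) ^ 2 := by ring
  have hn2_le_nc : (n : ℝ) ^ 2 ≤ (n : ℝ) ^ c := by
    calc (n : ℝ) ^ 2 = (n : ℝ) ^ ((2 : ℕ) : ℝ) := by
          rw [Real.rpow_natCast]
      _ ≤ (n : ℝ) ^ c := Real.rpow_le_rpow_of_exponent_le hnR1 (by push_cast; linarith)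
  have h2 : (T n : ℝ) * b ≤ δ := by
    have hT0 : (0 : ℝ) ≤ (T n : ℝ) := Nat.cast_nonneg _
    have e : δ * (n : ℝ) ^ 2 * b = δ ^ 5 * ((n : ℝ) ^ 2 / (n : ℝ) ^ c) := by
      rw [hb_def]; ring
    have hr : (n : ℝ) ^ 2 / (n : ℝ) ^ c ≤ 1 := (div_le_one hnc_pos).2 hn2_le_nc
    calc (T n : ℝ) * b ≤ δ * (n : ℝ) ^ 2 * b :=
          mul_le_mul_of_nonneg_right hTδn2 hb0
      _ = δ ^ 5 * ((n : ℝ) ^ 2 / (n : ℝ) ^ c) := e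
      _ ≤ δ ^ 5 * 1 := mul_le_mul_of_nonneg_left hr (by positivity)
      _ ≤ δ := by rw [mul_one]; exact hδ5
  -- pointwise forms of the matrix equations
  have hpistat' : ∀ z : Fin n, ∑ y, pi n y * P n y z = pi n z := by
    intro z
    have := congrFun (hpistat n hn2) z
    simpa [Matrix.vecMul, dotProduct] using this
  have hm' : ∀ z : Fin n, ∑ y, mu n y * killed (P n) (x n) y z = lam n * mu n z := by
    intro z
    have := congrFun (hmuqs n hn2) z
    simpa [Matrix.vecMul, dotProduct] using this
  have hg' : ∀ y : Fin n, ∑ z, killed (P n) (x n) y z * gamma n z = lam n * gamma n y := by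
    intro y
    have := congrFun (hgeig n hn2) y
    simpa [Matrix.mulVec, dotProduct] using this
  have herase : ∀ f : Fin n → ℝ,
      (∑ y ∈ Finset.univ.erase (x n), f y) + f (x n) = ∑ y, f y :=
    fun f => Finset.sum_erase_add Finset.univ f (Finset.mem_univ (x n))
  have hgnorm' : ∑ y, mu n y * gamma n y = 1 := by
    have := herase (fun y => mu n y * gamma n y)
    simp only [hmux n hn2, zero_mul, add_zero] at this
    rw [← this]
    exact hgnorm n hn2
  have key := GammaAux.key_bound hn2 (hnn n hn2) (hrow n hn2) hpipos (hpisum n hn2)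
    hpistat' (hkirr n hn2) (hlam n hn2).1 (hlam n hn2).2 (hmunn n hn2) (hmux n hn2)
    (hmusum n hn2) hm' (hgx n hn2) (hgpos n hn2) hg' hgnorm' hb hb0 (hN4 n hn4)
    hδ0 hδ' h1 h2 h3
  have hsum_eq : ∑ y ∈ Finset.univ.erase (x n), pi n y * gamma n y
      = ∑ y, pi n y * gamma n y := by
    have := herase (fun y => pi n y * gamma n y)
    simp only [hgx n hn2, mul_zero, add_zero] at this
    exact this
  rw [Real.dist_eq, hsum_eq]
  calc |(∑ y, pi n y * gamma n y) - 1| ≤ 17 * δ := key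
    _ < ε := hδε
end

section
/- Uniform upper bound on the right Perron eigenvector: under (HP1)–(HP3), for every ε > 0 there exists N such that for all n ≥ N and all y ∈ X_n ∖ {x_n}, γ_n(y) ≤ 1 + ε. -/
open Finset Filter

lemma pow_decomp {R : Type*} [Ring R] (A B : R) (t : ℕ) :
    A ^ t = B ^ t + ∑ s ∈ Finset.range t, B ^ s * (A - B) * A ^ (t - 1 - s) := by
  induction t with
  | zero => simp
  | succ t ih =>
    have h1 : A ^ (t + 1) = B * A ^ t + (A - B) * A ^ t := by
      rw [pow_succ', ← add_mul]
      simp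
    have h2 : B * (∑ s ∈ Finset.range t, B ^ s * (A - B) * A ^ (t - 1 - s))
        = ∑ s ∈ Finset.range t, B ^ (s + 1) * (A - B) * A ^ (t - 1 - s) := by
      rw [Finset.mul_sum]
      refine Finset.sum_congr rfl fun s _ => ?_
      rw [pow_succ', mul_assoc, mul_assoc, mul_assoc]
    have h3 : ∑ s ∈ Finset.range (t + 1), B ^ s * (A - B) * A ^ (t + 1 - 1 - s)
        = ∑ s ∈ Finset.range t, B ^ (s + 1) * (A - B) * A ^ (t - 1 - s) + (A - B) * A ^ t := by
      rw [Finset.sum_range_succ']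
      congr 1
      · refine Finset.sum_congr rfl fun s _ => ?_
        have : t + 1 - 1 - (s + 1) = t - 1 - s := by omega
        rw [this]
      · simp
    rw [h1]
    nth_rewrite 1 [ih]
    rw [mul_add, h2, h3, ← pow_succ', add_assoc]

section Aux
variable {n : ℕ}

lemma entry_pow_nonneg (A : Matrix (Fin n) (Fin n) ℝ) (h : ∀ y z, 0 ≤ A y z) :
    ∀ t y z, 0 ≤ (A ^ t) y z := by
  intro t
  induction t with
  | zero =>
    intro y z
    by_cases h' : y = z <;> simp [Matrix.one_apply, h']
  | succ t ih =>
    intro y z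
    rw [pow_succ, Matrix.mul_apply]
    exact Finset.sum_nonneg fun w _ => mul_nonneg (ih y w) (h w z)

lemma entry_pow_le (A B : Matrix (Fin n) (Fin n) ℝ) (hA : ∀ y z, 0 ≤ A y z)
    (hB : ∀ y z, 0 ≤ B y z) (hAB : ∀ y z, A y z ≤ B y z) :
    ∀ t y z, (A ^ t) y z ≤ (B ^ t) y z := by
  intro t
  induction t with
  | zero => intro y z; simp
  | succ t ih =>
    intro y z
    rw [pow_succ, pow_succ, Matrix.mul_apply, Matrix.mul_apply]
    exact Finset.sum_le_sum fun w _ =>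
      mul_le_mul (ih y w) (hAB w z) (hA w z) (entry_pow_nonneg B hB t y w)

lemma row_sum_pow (A : Matrix (Fin n) (Fin n) ℝ) (h : ∀ y, ∑ z, A y z = 1) :
    ∀ t y, ∑ z, (A ^ t) y z = 1 := by
  intro t
  induction t with
  | zero => intro y; simp [Matrix.one_apply]
  | succ t ih =>
    intro y
    simp only [pow_succ, Matrix.mul_apply]
    rw [Finset.sum_comm]
    calc ∑ w, ∑ z, (A ^ t) y w * A w z
        = ∑ w, (A ^ t) y w * ∑ z, A w z := by
          refine Finset.sum_congr rfl fun w _ => ?_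
          rw [Finset.mul_sum]
      _ = 1 := by simp only [h, mul_one]; exact ih y

lemma row_eig_pow (A : Matrix (Fin n) (Fin n) ℝ) (g : Fin n → ℝ) (lam : ℝ)
    (h : ∀ y, ∑ z, A y z * g z = lam * g y) :
    ∀ t y, ∑ z, (A ^ t) y z * g z = lam ^ t * g y := by
  intro t
  induction t with
  | zero => intro y; simp [Matrix.one_apply]
  | succ t ih =>
    intro y
    rw [pow_succ']
    simp only [Matrix.mul_apply]
    calc ∑ z, (∑ w, A y w * (A ^ t) w z) * g z
        = ∑ z, ∑ w, A y w * ((A ^ t) w z * g z) := by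
          refine Finset.sum_congr rfl fun z _ => ?_
          rw [Finset.sum_mul]
          exact Finset.sum_congr rfl fun w _ => by ring
      _ = ∑ w, A y w * ∑ z, (A ^ t) w z * g z := by
          rw [Finset.sum_comm]
          exact Finset.sum_congr rfl fun w _ => (Finset.mul_sum _ _ _).symm
      _ = ∑ w, A y w * (lam ^ t * g w) := by
          refine Finset.sum_congr rfl fun w _ => by rw [ih w]
      _ = lam ^ t * ∑ w, A y w * g w := by
          rw [Finset.mul_sum]
          exact Finset.sum_congr rfl fun w _ => by ring
      _ = lam ^ (t + 1) * g y := by rw [h y]; ring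

lemma col_eig_pow (A : Matrix (Fin n) (Fin n) ℝ) (m : Fin n → ℝ) (lam : ℝ)
    (h : ∀ z, ∑ y, m y * A y z = lam * m z) :
    ∀ t z, ∑ y, m y * (A ^ t) y z = lam ^ t * m z := by
  intro t
  induction t with
  | zero => intro z; simp [Matrix.one_apply]
  | succ t ih =>
    intro z
    rw [pow_succ]
    simp only [Matrix.mul_apply]
    calc ∑ y, m y * ∑ w, (A ^ t) y w * A w z
        = ∑ y, ∑ w, m y * (A ^ t) y w * A w z := by
          refine Finset.sum_congr rfl fun y _ => ?_
          rw [Finset.mul_sum]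
          exact Finset.sum_congr rfl fun w _ => by ring
      _ = ∑ w, (∑ y, m y * (A ^ t) y w) * A w z := by
          rw [Finset.sum_comm]
          exact Finset.sum_congr rfl fun w _ => (Finset.sum_mul _ _ _).symm
      _ = ∑ w, (lam ^ t * m w) * A w z := by
          refine Finset.sum_congr rfl fun w _ => by rw [ih w]
      _ = lam ^ t * ∑ w, m w * A w z := by
          rw [Finset.mul_sum]
          exact Finset.sum_congr rfl fun w _ => by ring
      _ = lam ^ (t + 1) * m z := by rw [h z]; ring

lemma hvm (v : Fin n → ℝ) (A : Matrix (Fin n) (Fin n) ℝ) (z : Fin n) :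
    Matrix.vecMul v A z = ∑ y, v y * A y z := by
  simp [Matrix.vecMul, dotProduct]

end Aux

section KeyLemma
variable {n : ℕ}

set_option maxHeartbeats 2000000 in
lemma key (P : Matrix (Fin n) (Fin n) ℝ) (pi : Fin n → ℝ) (x : Fin n)
    (T : ℕ) (lam : ℝ) (mu gam : Fin n → ℝ) (σ : ℝ)
    (hσ0 : 0 < σ) (hσ1 : σ ≤ 1/100) (hT1 : 1 ≤ T)
    (hP0 : ∀ y z, 0 ≤ P y z) (hProw : ∀ y, ∑ z, P y z = 1)
    (hpi0 : ∀ z, 0 < pi z) (hpisum : ∑ z, pi z = 1)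
    (hstat : Matrix.vecMul pi P = pi)
    (hTpix : (T : ℝ) * pi x ≤ σ)
    (hmix : ∀ y z, |(P ^ T) y z - pi z| ≤ σ * pi z)
    (hlam0 : 0 ≤ lam) (hlam1 : lam ≤ 1)
    (hmu0 : ∀ y, 0 ≤ mu y) (hmux : mu x = 0) (hmusum : ∑ y, mu y = 1)
    (hmuKe : Matrix.vecMul mu (killed P x) = lam • mu)
    (hg0 : ∀ y, 0 ≤ gam y) (hgxe : gam x = 0)
    (hgpos : ∀ y, y ≠ x → 0 < gam y)
    (hgKe : Matrix.mulVec (killed P x) gam = lam • gam)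
    (hgnorm : ∑ z, mu z * gam z = 1) :
    ∀ y, gam y ≤ 1 + 20 * σ := by
  classical
  set K : Matrix (Fin n) (Fin n) ℝ := killed P x with hKdef
  have hK0 : ∀ y z, 0 ≤ K y z := by
    intro y z
    by_cases h : y = x ∨ z = x <;> simp [hKdef, killed, h, hP0 y z]
  have hKle : ∀ y z, K y z ≤ P y z := by
    intro y z
    by_cases h : y = x ∨ z = x <;> simp [hKdef, killed, h, hP0 y z]
  have hPt0 : ∀ t y z, 0 ≤ (P ^ t) y z := entry_pow_nonneg P hP0
  have hKt0 : ∀ t y z, 0 ≤ (K ^ t) y z := entry_pow_nonneg K hK0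
  have hKtle : ∀ t y z, (K ^ t) y z ≤ (P ^ t) y z := entry_pow_le K P hK0 hP0 hKle
  have hProwt : ∀ t y, ∑ z, (P ^ t) y z = 1 := row_sum_pow P hProw
  -- one-step facts from the given eigen-equations
  have hstat1 : ∀ z, ∑ y, pi y * P y z = pi z := by
    intro z
    have h := congrFun hstat z
    rwa [hvm] at h
  have hmuK1 : ∀ z, ∑ y, mu y * K y z = lam * mu z := by
    intro z
    have h := congrFun hmuKe z
    rw [hvm] at h
    simpa using h
  have hgK1 : ∀ y, ∑ z, K y z * gam z = lam * gam y := by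
    intro y
    have h := congrFun hgKe y
    simp only [Matrix.mulVec, dotProduct, Pi.smul_apply, smul_eq_mul] at h
    exact h
  -- iterated versions
  have hstatT : ∀ t z, ∑ y, pi y * (P ^ t) y z = pi z := by
    intro t z
    have h := col_eig_pow P pi 1 (fun z => by rw [hstat1 z, one_mul]) t z
    rwa [one_pow, one_mul] at h
  have hmuKt : ∀ t z, ∑ y, mu y * (K ^ t) y z = lam ^ t * mu z :=
    col_eig_pow K mu lam hmuK1
  have hgKt : ∀ t y, ∑ z, (K ^ t) y z * gam z = lam ^ t * gam y :=
    row_eig_pow K gam lam hgK1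
  -- maximizer of gamma
  obtain ⟨ym, -, hym⟩ := Finset.exists_max_image (Finset.univ : Finset (Fin n)) gam
    ⟨x, Finset.mem_univ x⟩
  set M : ℝ := gam ym with hMdef
  have hgM : ∀ z, gam z ≤ M := fun z => hym z (Finset.mem_univ z)
  have hM0 : 0 ≤ M := hgxe ▸ hgM x
  set S : ℝ := ∑ z, pi z * gam z with hSdef
  -- basic mixing consequences
  have hmixu : ∀ y z, (P ^ T) y z ≤ (1 + σ) * pi z := by
    intro y z
    have h := (abs_le.mp (hmix y z)).2
    linarith
  have hmixl : ∀ y z, (1 - σ) * pi z ≤ (P ^ T) y z := by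
    intro y z
    have h := (abs_le.mp (hmix y z)).1
    linarith
  have hpixle : pi x ≤ σ := by
    have h1 : pi x ≤ (T : ℝ) * pi x := by
      have : (1 : ℝ) ≤ (T : ℝ) := by exact_mod_cast hT1
      nlinarith [(hpi0 x).le]
    linarith
  -- the difference matrix
  set Q : Matrix (Fin n) (Fin n) ℝ := P - K with hQdef
  have hQapp : ∀ v w, Q v w = if v = x ∨ w = x then P v w else 0 := by
    intro v w
    by_cases h : v = x ∨ w = x <;>
      simp [hQdef, Matrix.sub_apply, hKdef, killed, h]
  have hQ0 : ∀ v w, 0 ≤ Q v w := by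
    intro v w
    rw [hQapp]
    by_cases h : v = x ∨ w = x <;> simp [h, hP0 v w]
  have hdecE : ∀ y z, (P ^ T) y z
      = (K ^ T) y z + ∑ s ∈ Finset.range T, (K ^ s * Q * P ^ (T - 1 - s)) y z := by
    intro y z
    have h := congrFun (congrFun (pow_decomp P K T) y) z
    rw [← hQdef] at h
    simpa [Matrix.add_apply, Matrix.sum_apply] using h
  -- vecMul of pi through K^s is dominated by pi
  have hpiKs : ∀ s v, Matrix.vecMul pi (K ^ s) v ≤ pi v := by
    intro s v
    rw [hvm]
    calc ∑ y, pi y * (K ^ s) y v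
        ≤ ∑ y, pi y * (P ^ s) y v :=
          Finset.sum_le_sum fun y _ => mul_le_mul_of_nonneg_left (hKtle s y v) (hpi0 y).le
      _ = pi v := hstatT s v
  -- key per-term bound for pi
  have hkeyπ : ∀ s u z, Matrix.vecMul pi (K ^ s * Q * P ^ u) z
      ≤ pi x * ((P ^ u) x z + (P ^ (u + 1)) x z) := by
    intro s u z
    have e1 : Matrix.vecMul pi (K ^ s * Q * P ^ u)
        = Matrix.vecMul (Matrix.vecMul (Matrix.vecMul pi (K ^ s)) Q) (P ^ u) := by
      rw [Matrix.vecMul_vecMul, Matrix.vecMul_vecMul, Matrix.mul_assoc]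
    rw [e1, hvm]
    have hρ : ∀ w, Matrix.vecMul (Matrix.vecMul pi (K ^ s)) Q w
        ≤ pi x * ((if w = x then 1 else 0) + P x w) := by
      intro w
      rw [hvm]
      have h1 : ∑ v, Matrix.vecMul pi (K ^ s) v * Q v w ≤ ∑ v, pi v * Q v w :=
        Finset.sum_le_sum fun v _ => mul_le_mul_of_nonneg_right (hpiKs s v) (hQ0 v w)
      refine h1.trans ?_
      by_cases hw : w = x
      · rw [hw]
        have h2 : ∀ v, Q v x = P v x := fun v => by rw [hQapp]; simp
        have h3 : ∑ v, pi v * Q v x ≤ pi x * (1 + P x x) := by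
          simp only [h2]
          rw [hstat1 x]
          nlinarith [mul_nonneg (hpi0 x).le (hP0 x x)]
        simpa using h3
      · have h2 : ∀ v, pi v * Q v w = if v = x then pi x * P x w else 0 := by
          intro v
          by_cases hv : v = x
          · rw [hv, hQapp]; simp
          · rw [hQapp]; simp [hv, hw]
        simp only [h2]
        rw [Finset.sum_ite_eq' Finset.univ x (fun _ => pi x * P x w)]
        simp [hw]
    calc ∑ w, Matrix.vecMul (Matrix.vecMul pi (K ^ s)) Q w * (P ^ u) w z
        ≤ ∑ w, (pi x * ((if w = x then 1 else 0) + P x w)) * (P ^ u) w z :=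
          Finset.sum_le_sum fun w _ => mul_le_mul_of_nonneg_right (hρ w) (hPt0 u w z)
      _ = pi x * ((P ^ u) x z + (P ^ (u + 1)) x z) := by
          have hA : ∑ w, (if w = x then (1 : ℝ) else 0) * (P ^ u) w z = (P ^ u) x z := by
            simp
          have hB : ∑ w, P x w * (P ^ u) w z = (P ^ (u + 1)) x z := by
            rw [pow_succ']
            simp [Matrix.mul_apply]
          calc ∑ w, (pi x * ((if w = x then (1:ℝ) else 0) + P x w)) * (P ^ u) w z
              = pi x * ∑ w, ((if w = x then (1:ℝ) else 0) * (P ^ u) w z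
                  + P x w * (P ^ u) w z) := by
                rw [Finset.mul_sum]
                exact Finset.sum_congr rfl fun w _ => by ring
            _ = pi x * ((P ^ u) x z + (P ^ (u + 1)) x z) := by
                rw [Finset.sum_add_distrib, hA, hB]
  -- key per-term identity for mu
  have hmuQ : ∀ w, ∑ v, mu v * Q v w = if w = x then 1 - lam else 0 := by
    intro w
    by_cases hw : w = x
    · rw [hw]
      split_ifs with hif
      swap
      · exact absurd (by trivial) hif
      have h2 : ∀ v, Q v x = P v x := fun v => by rw [hQapp]; simp
      simp only [h2]
      -- ∑ v, mu v * P v x = 1 - lam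
      have h1 : ∑ w', ∑ v, mu v * P v w' = 1 := by
        rw [Finset.sum_comm]
        calc ∑ v, ∑ w', mu v * P v w' = ∑ v, mu v * ∑ w', P v w' := by
              exact Finset.sum_congr rfl fun v _ => (Finset.mul_sum _ _ _).symm
          _ = 1 := by simp only [hProw, mul_one]; exact hmusum
      have h2' : ∀ w', w' ≠ x → ∑ v, mu v * P v w' = lam * mu w' := by
        intro w' hw'
        have e : ∀ v, mu v * P v w' = mu v * K v w' := by
          intro v
          by_cases hv : v = x
          · rw [hv, hmux]; ring
          · have : K v w' = P v w' := by simp [hKdef, killed, hv, hw']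
            rw [this]
        simp only [e]
        exact hmuK1 w'
      have h3 : ∑ w' ∈ Finset.univ.erase x, ∑ v, mu v * P v w' = lam * (1 - mu x) := by
        calc ∑ w' ∈ Finset.univ.erase x, ∑ v, mu v * P v w'
            = ∑ w' ∈ Finset.univ.erase x, lam * mu w' := by
              refine Finset.sum_congr rfl fun w' hw' => h2' w' (Finset.ne_of_mem_erase hw')
          _ = lam * ∑ w' ∈ Finset.univ.erase x, mu w' := (Finset.mul_sum _ _ _).symm
          _ = lam * (1 - mu x) := by
              have := Finset.sum_erase_add Finset.univ mu (Finset.mem_univ x)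
              rw [hmusum] at this
              congr 1
              linarith
      have h4 : (∑ w' ∈ Finset.univ.erase x, ∑ v, mu v * P v w') + ∑ v, mu v * P v x
          = ∑ w', ∑ v, mu v * P v w' :=
        Finset.sum_erase_add Finset.univ (fun w' => ∑ v, mu v * P v w') (Finset.mem_univ x)
      rw [h1, h3, hmux] at h4
      norm_num at h4
      linarith
    · simp only [if_neg hw]
      have h2 : ∀ v, mu v * Q v w = 0 := by
        intro v
        by_cases hv : v = x
        · rw [hv, hmux]; ring
        · rw [hQapp]; simp [hv, hw]
      simp only [h2, Finset.sum_const_zero]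
  have hkeyμ : ∀ s u z, Matrix.vecMul mu (K ^ s * Q * P ^ u) z
      = lam ^ s * ((1 - lam) * (P ^ u) x z) := by
    intro s u z
    have e1 : Matrix.vecMul mu (K ^ s * Q * P ^ u)
        = Matrix.vecMul (Matrix.vecMul (Matrix.vecMul mu (K ^ s)) Q) (P ^ u) := by
      rw [Matrix.vecMul_vecMul, Matrix.vecMul_vecMul, Matrix.mul_assoc]
    rw [e1, hvm]
    have h1 : ∀ w, Matrix.vecMul (Matrix.vecMul mu (K ^ s)) Q w
        = lam ^ s * (if w = x then 1 - lam else 0) := by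
      intro w
      rw [hvm]
      calc ∑ v, Matrix.vecMul mu (K ^ s) v * Q v w
          = ∑ v, (lam ^ s * mu v) * Q v w := by
            refine Finset.sum_congr rfl fun v _ => ?_
            rw [hvm, hmuKt s v]
        _ = lam ^ s * ∑ v, mu v * Q v w := by
            rw [Finset.mul_sum]
            exact Finset.sum_congr rfl fun v _ => by ring
        _ = lam ^ s * (if w = x then 1 - lam else 0) := by rw [hmuQ w]
    simp only [h1]
    calc ∑ w, lam ^ s * (if w = x then (1:ℝ) - lam else 0) * (P ^ u) w z
        = ∑ w, (if w = x then lam ^ s * ((1 - lam) * (P ^ u) x z) else 0) := by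
          refine Finset.sum_congr rfl fun w _ => ?_
          by_cases hw : w = x
          · rw [hw]
            have h3 : lam ^ s * (1 - lam) * (P ^ u) x z
                = lam ^ s * ((1 - lam) * (P ^ u) x z) := by ring
            simpa using h3
          · simp [hw]
      _ = lam ^ s * ((1 - lam) * (P ^ u) x z) := by
          rw [Finset.sum_ite_eq' Finset.univ x]
          simp
  -- swapping helper
  have hswap : ∀ (v : Fin n → ℝ) (A : Matrix (Fin n) (Fin n) ℝ),
      ∑ z, (∑ y, v y * A y z) * gam z = ∑ y, v y * (∑ z, A y z * gam z) := by
    intro v A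
    calc ∑ z, (∑ y, v y * A y z) * gam z
        = ∑ z, ∑ y, v y * (A y z * gam z) := by
          refine Finset.sum_congr rfl fun z _ => ?_
          rw [Finset.sum_mul]
          exact Finset.sum_congr rfl fun y _ => by ring
      _ = ∑ y, ∑ z, v y * (A y z * gam z) := Finset.sum_comm
      _ = ∑ y, v y * (∑ z, A y z * gam z) := by
          exact Finset.sum_congr rfl fun y _ => (Finset.mul_sum _ _ _).symm
  -- decomposition summed against pi / mu, paired with gamma
  have hvdz : ∀ (v : Fin n → ℝ), ∀ z, ∑ y, v y * ((P ^ T) y z - (K ^ T) y z)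
      = ∑ s ∈ Finset.range T, Matrix.vecMul v (K ^ s * Q * P ^ (T - 1 - s)) z := by
    intro v z
    calc ∑ y, v y * ((P ^ T) y z - (K ^ T) y z)
        = ∑ y, ∑ s ∈ Finset.range T, v y * (K ^ s * Q * P ^ (T - 1 - s)) y z := by
          refine Finset.sum_congr rfl fun y _ => ?_
          rw [hdecE y z]
          rw [show (K ^ T) y z + ∑ s ∈ Finset.range T, (K ^ s * Q * P ^ (T-1-s)) y z
              - (K ^ T) y z = ∑ s ∈ Finset.range T, (K ^ s * Q * P ^ (T-1-s)) y z by ring]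
          rw [Finset.mul_sum]
      _ = ∑ s ∈ Finset.range T, ∑ y, v y * (K ^ s * Q * P ^ (T - 1 - s)) y z :=
          Finset.sum_comm
      _ = ∑ s ∈ Finset.range T, Matrix.vecMul v (K ^ s * Q * P ^ (T - 1 - s)) z := by
          exact Finset.sum_congr rfl fun s _ => (hvm _ _ _).symm
  -- ================= Step I1 : lam^T * M ≤ (1+σ) S ==================
  have hI1 : lam ^ T * M ≤ (1 + σ) * S := by
    calc lam ^ T * M = ∑ z, (K ^ T) ym z * gam z := (hgKt T ym).symm
      _ ≤ ∑ z, (P ^ T) ym z * gam z :=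
          Finset.sum_le_sum fun z _ => mul_le_mul_of_nonneg_right (hKtle T ym z) (hg0 z)
      _ ≤ ∑ z, ((1 + σ) * pi z) * gam z :=
          Finset.sum_le_sum fun z _ => mul_le_mul_of_nonneg_right (hmixu ym z) (hg0 z)
      _ = (1 + σ) * S := by
          rw [hSdef, Finset.mul_sum]
          exact Finset.sum_congr rfl fun z _ => by ring
  -- ================= Step I2 : (1 - lam^T) S ≤ 2 σ M =================
  have hPS : ∑ z, (∑ y, pi y * (P ^ T) y z) * gam z = S := by
    rw [hSdef]
    exact Finset.sum_congr rfl fun z _ => by rw [hstatT T z]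
  have hKS : ∑ z, (∑ y, pi y * (K ^ T) y z) * gam z = lam ^ T * S := by
    rw [hswap pi (K ^ T)]
    calc ∑ y, pi y * (∑ z, (K ^ T) y z * gam z)
        = ∑ y, pi y * (lam ^ T * gam y) := by
          exact Finset.sum_congr rfl fun y _ => by rw [hgKt T y]
      _ = lam ^ T * S := by
          rw [hSdef, Finset.mul_sum]
          exact Finset.sum_congr rfl fun y _ => by ring
  have hI2 : (1 - lam ^ T) * S ≤ 2 * σ * M := by
    have hdiff : S - lam ^ T * S
        = ∑ s ∈ Finset.range T,
            ∑ z, Matrix.vecMul pi (K ^ s * Q * P ^ (T - 1 - s)) z * gam z := by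
      rw [← hKS]
      nth_rewrite 1 [← hPS]
      calc (∑ z, (∑ y, pi y * (P ^ T) y z) * gam z)
            - ∑ z, (∑ y, pi y * (K ^ T) y z) * gam z
          = ∑ z, (∑ y, pi y * ((P ^ T) y z - (K ^ T) y z)) * gam z := by
            rw [← Finset.sum_sub_distrib]
            refine Finset.sum_congr rfl fun z _ => ?_
            rw [← sub_mul, ← Finset.sum_sub_distrib]
            refine congrArg (· * gam z) (Finset.sum_congr rfl fun y _ => by ring)
        _ = ∑ z, (∑ s ∈ Finset.range T,
              Matrix.vecMul pi (K ^ s * Q * P ^ (T - 1 - s)) z) * gam z := by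
            exact Finset.sum_congr rfl fun z _ => by rw [hvdz pi z]
        _ = ∑ z, ∑ s ∈ Finset.range T,
              Matrix.vecMul pi (K ^ s * Q * P ^ (T - 1 - s)) z * gam z := by
            exact Finset.sum_congr rfl fun z _ => Finset.sum_mul _ _ _
        _ = ∑ s ∈ Finset.range T,
              ∑ z, Matrix.vecMul pi (K ^ s * Q * P ^ (T - 1 - s)) z * gam z :=
            Finset.sum_comm
    have hvm0 : ∀ s u z, 0 ≤ Matrix.vecMul pi (K ^ s * Q * P ^ u) z := by
      intro s u z
      rw [hvm]
      refine Finset.sum_nonneg fun y _ => mul_nonneg (hpi0 y).le ?_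
      have e0 : ∀ a b, 0 ≤ (K ^ s * Q) a b := by
        intro a b
        rw [Matrix.mul_apply]
        exact Finset.sum_nonneg fun w _ => mul_nonneg (hKt0 s a w) (hQ0 w b)
      rw [Matrix.mul_apply]
      exact Finset.sum_nonneg fun w _ => mul_nonneg (e0 y w) (hPt0 u w z)
    have hterm : ∀ s ∈ Finset.range T,
        ∑ z, Matrix.vecMul pi (K ^ s * Q * P ^ (T - 1 - s)) z * gam z
          ≤ 2 * (pi x * M) := by
      intro s _
      set u := T - 1 - s with hu
      calc ∑ z, Matrix.vecMul pi (K ^ s * Q * P ^ u) z * gam z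
          ≤ ∑ z, (pi x * ((P ^ u) x z + (P ^ (u + 1)) x z)) * M := by
            refine Finset.sum_le_sum fun z _ => ?_
            exact mul_le_mul (hkeyπ s u z) (hgM z) (hg0 z)
              (mul_nonneg (hpi0 x).le (add_nonneg (hPt0 u x z) (hPt0 (u+1) x z)))
        _ = ∑ z, (pi x * M * (P ^ u) x z + pi x * M * (P ^ (u+1)) x z) :=
            Finset.sum_congr rfl fun z _ => by ring
        _ = pi x * M * (∑ z, (P ^ u) x z) + pi x * M * (∑ z, (P ^ (u+1)) x z) := by
            rw [Finset.sum_add_distrib, Finset.mul_sum, Finset.mul_sum]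
        _ = 2 * (pi x * M) := by rw [hProwt u x, hProwt (u+1) x]; ring
    calc (1 - lam ^ T) * S = S - lam ^ T * S := by ring
      _ ≤ ∑ s ∈ Finset.range T, 2 * (pi x * M) := by
          rw [hdiff]; exact Finset.sum_le_sum hterm
      _ = (T : ℝ) * (2 * (pi x * M)) := by
          rw [Finset.sum_const, Finset.card_range]; simp
      _ ≤ 2 * σ * M := by nlinarith [hTpix, hM0, mul_nonneg (Nat.cast_nonneg T : (0:ℝ) ≤ T) (hpi0 x).le]
  -- ================= Step I3 : 1/2 ≤ lam^T ==========================
  set ω : Fin n → ℝ := fun z => ∑ u ∈ Finset.range T, (P ^ u) x z with hωdef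
  have hω0 : ∀ z, 0 ≤ ω z := fun z => Finset.sum_nonneg fun u _ => hPt0 u x z
  have hωsum : ∑ z, ω z = (T : ℝ) := by
    rw [hωdef]
    rw [Finset.sum_comm]
    calc ∑ u ∈ Finset.range T, ∑ z, (P ^ u) x z
        = ∑ u ∈ Finset.range T, (1 : ℝ) := by
          exact Finset.sum_congr rfl fun u _ => hProwt u x
      _ = (T : ℝ) := by simp
  set G : Finset (Fin n) :=
    Finset.univ.filter (fun z => z ≠ x ∧ pi x * ω z ≤ pi z / 8) with hGdef
  have hGprop : ∀ z ∈ G, z ≠ x ∧ pi x * ω z ≤ pi z / 8 := by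
    intro z hz
    have := Finset.mem_filter.mp hz
    exact this.2
  have hGmass : 1 - 9 * σ ≤ ∑ z ∈ G, pi z := by
    have hsplit : (∑ z ∈ G, pi z)
        + ∑ z ∈ Finset.univ.filter (fun z => ¬(z ≠ x ∧ pi x * ω z ≤ pi z / 8)), pi z
        = 1 := by
      rw [← hpisum, hGdef]
      exact Finset.sum_filter_add_sum_filter_not _ _ _
    have hbad : ∑ z ∈ Finset.univ.filter (fun z => ¬(z ≠ x ∧ pi x * ω z ≤ pi z / 8)), pi z
        ≤ 9 * σ := by
      set B := Finset.univ.filter (fun z => ¬(z ≠ x ∧ pi x * ω z ≤ pi z / 8)) with hBdef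
      have hxB : x ∈ B := by
        rw [hBdef]
        refine Finset.mem_filter.mpr ⟨Finset.mem_univ x, ?_⟩
        push_neg
        intro h
        exact absurd rfl h
      have hsum := Finset.sum_erase_add B pi hxB
      have h8 : ∀ z ∈ B.erase x, pi z ≤ 8 * (pi x * ω z) := by
        intro z hz
        have hzx : z ≠ x := Finset.ne_of_mem_erase hz
        have hzB := Finset.mem_of_mem_erase hz
        rw [hBdef] at hzB
        have := (Finset.mem_filter.mp hzB).2
        push_neg at this
        have h9 := this hzx
        linarith
      have h10 : ∑ z ∈ B.erase x, pi z ≤ 8 * (pi x * (T : ℝ)) := by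
        calc ∑ z ∈ B.erase x, pi z ≤ ∑ z ∈ B.erase x, 8 * (pi x * ω z) :=
              Finset.sum_le_sum h8
          _ ≤ ∑ z, 8 * (pi x * ω z) := by
              refine Finset.sum_le_sum_of_subset_of_nonneg (Finset.subset_univ _) ?_
              intro z _ _
              exact mul_nonneg (by norm_num)
                (mul_nonneg (hpi0 x).le (hω0 z))
          _ = 8 * (pi x * (T : ℝ)) := by
              rw [← Finset.mul_sum, ← Finset.mul_sum, hωsum]
      have hTσ : pi x * (T : ℝ) ≤ σ := by rw [mul_comm]; exact hTpix
      nlinarith [hpixle, (hpi0 x).le]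
    linarith
  have hGne : G.Nonempty := by
    rcases Finset.eq_empty_or_nonempty G with h | h
    · exfalso
      rw [h, Finset.sum_empty] at hGmass
      linarith
    · exact h
  -- lower bound on the killed kernel restricted to G
  have hGlow : ∀ z ∈ G, pi z / 2 ≤ ∑ y ∈ G, pi y * (K ^ T) y z := by
    intro z hz
    obtain ⟨hzx, hzω⟩ := hGprop z hz
    -- lower bound for the unkilled part
    have h1 : (1 - 9 * σ) * ((1 - σ) * pi z) ≤ ∑ y ∈ G, pi y * (P ^ T) y z := by
      calc (1 - 9 * σ) * ((1 - σ) * pi z)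
          ≤ (∑ y ∈ G, pi y) * ((1 - σ) * pi z) := by
            have hσz : 0 ≤ (1 - σ) * pi z :=
              mul_nonneg (by linarith) (hpi0 z).le
            exact mul_le_mul_of_nonneg_right hGmass hσz
        _ = ∑ y ∈ G, pi y * ((1 - σ) * pi z) := Finset.sum_mul _ _ _
        _ ≤ ∑ y ∈ G, pi y * (P ^ T) y z :=
            Finset.sum_le_sum fun y _ =>
              mul_le_mul_of_nonneg_left (hmixl y z) (hpi0 y).le
    -- upper bound for the killed part
    have h2 : ∑ y ∈ G, pi y * ((P ^ T) y z - (K ^ T) y z)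
        ≤ pi z / 4 + σ * (1 + σ) * pi z := by
      have h21 : ∑ y ∈ G, pi y * ((P ^ T) y z - (K ^ T) y z)
          ≤ ∑ y, pi y * ((P ^ T) y z - (K ^ T) y z) := by
        refine Finset.sum_le_sum_of_subset_of_nonneg (Finset.subset_univ _) ?_
        intro y _ _
        exact mul_nonneg (hpi0 y).le (sub_nonneg.mpr (hKtle T y z))
      have h22 : ∑ y, pi y * ((P ^ T) y z - (K ^ T) y z)
          ≤ ∑ s ∈ Finset.range T, pi x * ((P ^ (T-1-s)) x z + (P ^ (T-1-s+1)) x z) := by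
        rw [hvdz pi z]
        exact Finset.sum_le_sum fun s _ => hkeyπ s (T-1-s) z
      have h23 : ∑ s ∈ Finset.range T, (P ^ (T-1-s)) x z = ω z := by
        rw [hωdef]
        exact Finset.sum_range_reflect (fun u => (P ^ u) x z) T
      have h24 : ∑ s ∈ Finset.range T, (P ^ (T-1-s+1)) x z
          = ω z - (P ^ 0) x z + (P ^ T) x z := by
        have e1 : ∑ s ∈ Finset.range T, (P ^ (T-1-s+1)) x z
            = ∑ s ∈ Finset.range T, (P ^ (s+1)) x z := by
          have := Finset.sum_range_reflect (fun s => (P ^ (s+1)) x z) T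
          rw [← this]
        rw [e1]
        have e2 : ∑ u ∈ Finset.range (T+1), (P ^ u) x z
            = (∑ s ∈ Finset.range T, (P ^ (s+1)) x z) + (P ^ 0) x z :=
          Finset.sum_range_succ' (fun u => (P ^ u) x z) T
        have e3 : ∑ u ∈ Finset.range (T+1), (P ^ u) x z
            = ω z + (P ^ T) x z := by
          rw [hωdef]
          exact Finset.sum_range_succ (fun u => (P ^ u) x z) T
        linarith
      have h25 : (P ^ 0) x z ≥ 0 := hPt0 0 x z
      have h26 : (P ^ T) x z ≤ (1 + σ) * pi z := hmixu x z
      have h27 : ∑ s ∈ Finset.range T, pi x * ((P ^ (T-1-s)) x z + (P ^ (T-1-s+1)) x z)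
          = pi x * (∑ s ∈ Finset.range T, (P ^ (T-1-s)) x z)
            + pi x * ∑ s ∈ Finset.range T, (P ^ (T-1-s+1)) x z := by
        rw [← Finset.mul_sum, ← mul_add, ← Finset.sum_add_distrib]
      have h28 : pi x * ((P ^ T) x z) ≤ σ * ((1+σ) * pi z) := by
        have := mul_le_mul hpixle h26 (hPt0 T x z) hσ0.le
        linarith [this]
      have hfin : ∑ s ∈ Finset.range T, pi x * ((P ^ (T-1-s)) x z + (P ^ (T-1-s+1)) x z)
          ≤ pi z / 4 + σ * (1 + σ) * pi z := by
        rw [h27, h23]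
        have hA2 : pi x * (∑ s ∈ Finset.range T, (P ^ (T-1-s+1)) x z)
            ≤ pi x * ω z + pi x * ((P ^ T) x z) := by
          rw [h24]
          calc pi x * (ω z - (P ^ 0) x z + (P ^ T) x z)
              ≤ pi x * (ω z + (P ^ T) x z) :=
                mul_le_mul_of_nonneg_left (by linarith [h25]) (hpi0 x).le
            _ = pi x * ω z + pi x * ((P ^ T) x z) := mul_add _ _ _
        linarith [hzω, h28, hA2]
      linarith [h21, h22, hfin]
    have h3 : ∑ y ∈ G, pi y * (K ^ T) y z
        = (∑ y ∈ G, pi y * (P ^ T) y z)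
          - ∑ y ∈ G, pi y * ((P ^ T) y z - (K ^ T) y z) := by
      rw [← Finset.sum_sub_distrib]
      exact Finset.sum_congr rfl fun y _ => by ring
    have h4 : (1 - 9 * σ) * ((1 - σ) * pi z) - (pi z / 4 + σ * (1 + σ) * pi z)
        ≤ ∑ y ∈ G, pi y * (K ^ T) y z := by linarith [h1, h2, h3]
    refine le_trans ?_ h4
    nlinarith [hσ0, hσ1, hpi0 z,
      mul_le_mul_of_nonneg_right hσ1 (hpi0 z).le,
      mul_nonneg (mul_nonneg hσ0.le hσ0.le) (hpi0 z).le]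
  -- pairing with gamma over G
  set SG : ℝ := ∑ z ∈ G, pi z * gam z with hSGdef
  have hSGpos : 0 < SG := by
    refine Finset.sum_pos ?_ hGne
    intro z hz
    exact mul_pos (hpi0 z) (hgpos z (hGprop z hz).1)
  have hSle : SG ≤ S := by
    rw [hSGdef, hSdef]
    refine Finset.sum_le_sum_of_subset_of_nonneg (Finset.subset_univ _) ?_
    intro z _ _
    exact mul_nonneg (hpi0 z).le (hg0 z)
  have hSpos : 0 < S := lt_of_lt_of_le hSGpos hSle
  have hlamThalf : 1 / 2 ≤ lam ^ T := by
    have hpair : (1 / 2) * SG ≤ lam ^ T * SG := by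
      calc (1 / 2) * SG = ∑ z ∈ G, (pi z / 2) * gam z := by
            rw [hSGdef, Finset.mul_sum]
            exact Finset.sum_congr rfl fun z _ => by ring
        _ ≤ ∑ z ∈ G, (∑ y ∈ G, pi y * (K ^ T) y z) * gam z :=
            Finset.sum_le_sum fun z hz =>
              mul_le_mul_of_nonneg_right (hGlow z hz) (hg0 z)
        _ = ∑ z ∈ G, ∑ y ∈ G, pi y * ((K ^ T) y z * gam z) := by
            refine Finset.sum_congr rfl fun z _ => ?_
            rw [Finset.sum_mul]
            exact Finset.sum_congr rfl fun y _ => by ring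
        _ = ∑ y ∈ G, ∑ z ∈ G, pi y * ((K ^ T) y z * gam z) := Finset.sum_comm
        _ = ∑ y ∈ G, pi y * ∑ z ∈ G, (K ^ T) y z * gam z := by
            exact Finset.sum_congr rfl fun y _ => (Finset.mul_sum _ _ _).symm
        _ ≤ ∑ y ∈ G, pi y * ∑ z, (K ^ T) y z * gam z := by
            refine Finset.sum_le_sum fun y _ => ?_
            refine mul_le_mul_of_nonneg_left ?_ (hpi0 y).le
            refine Finset.sum_le_sum_of_subset_of_nonneg (Finset.subset_univ _) ?_
            intro z _ _
            exact mul_nonneg (hKt0 T y z) (hg0 z)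
        _ = ∑ y ∈ G, pi y * (lam ^ T * gam y) := by
            exact Finset.sum_congr rfl fun y _ => by rw [hgKt T y]
        _ = lam ^ T * SG := by
            rw [hSGdef, Finset.mul_sum]
            exact Finset.sum_congr rfl fun y _ => by ring
    exact le_of_mul_le_mul_right (by linarith [hpair]) hSGpos
  have hlamT1 : lam ^ T ≤ 1 := pow_le_one₀ hlam0 hlam1
  have hlamT0 : 0 ≤ lam ^ T := pow_nonneg hlam0 T
  -- ================= Step: 1 - lam^T ≤ 5 σ ==========================
  have hMS : M ≤ 2 * (1 + σ) * S := by
    nlinarith [hI1, hlamThalf, hM0]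
  have hq : 1 - lam ^ T ≤ 5 * σ := by
    have h1 : (1 - lam ^ T) * S ≤ 2 * σ * (2 * (1 + σ) * S) := by
      calc (1 - lam ^ T) * S ≤ 2 * σ * M := hI2
        _ ≤ 2 * σ * (2 * (1 + σ) * S) := by nlinarith [hMS, hσ0]
    have h2 : (1 - lam ^ T) ≤ 4 * σ * (1 + σ) := by
      have := le_of_mul_le_mul_right (by nlinarith [h1] : (1 - lam ^ T) * S ≤ (4 * σ * (1 + σ)) * S) hSpos
      linarith
    nlinarith [hσ0, hσ1]
  -- ================= Step I4 : (1-σ) S ≤ 1 + 5 σ M ===================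
  have hI4 : (1 - σ) * S ≤ 1 + 5 * σ * M := by
    have h41 : (1 - σ) * S ≤ ∑ z, (∑ y, mu y * (P ^ T) y z) * gam z := by
      have hμP : ∀ z, (1 - σ) * pi z ≤ ∑ y, mu y * (P ^ T) y z := by
        intro z
        calc (1 - σ) * pi z = ∑ y, mu y * ((1 - σ) * pi z) := by
              rw [← Finset.sum_mul, hmusum, one_mul]
          _ ≤ ∑ y, mu y * (P ^ T) y z :=
              Finset.sum_le_sum fun y _ =>
                mul_le_mul_of_nonneg_left (hmixl y z) (hmu0 y)
      calc (1 - σ) * S = ∑ z, ((1 - σ) * pi z) * gam z := by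
            rw [hSdef, Finset.mul_sum]
            exact Finset.sum_congr rfl fun z _ => by ring
        _ ≤ ∑ z, (∑ y, mu y * (P ^ T) y z) * gam z :=
            Finset.sum_le_sum fun z _ =>
              mul_le_mul_of_nonneg_right (hμP z) (hg0 z)
    have h42 : ∑ z, (∑ y, mu y * (K ^ T) y z) * gam z = lam ^ T := by
      calc ∑ z, (∑ y, mu y * (K ^ T) y z) * gam z
          = ∑ z, (lam ^ T * mu z) * gam z := by
            exact Finset.sum_congr rfl fun z _ => by rw [hmuKt T z]
        _ = lam ^ T * ∑ z, mu z * gam z := by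
            rw [Finset.mul_sum]
            exact Finset.sum_congr rfl fun z _ => by ring
        _ = lam ^ T := by rw [hgnorm, mul_one]
    have h43 : (∑ z, (∑ y, mu y * (P ^ T) y z) * gam z) - lam ^ T
        = ∑ s ∈ Finset.range T,
            lam ^ s * ((1 - lam) * (∑ z, (P ^ (T-1-s)) x z * gam z)) := by
      rw [← h42]
      calc (∑ z, (∑ y, mu y * (P ^ T) y z) * gam z)
            - ∑ z, (∑ y, mu y * (K ^ T) y z) * gam z
          = ∑ z, (∑ y, mu y * ((P ^ T) y z - (K ^ T) y z)) * gam z := by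
            rw [← Finset.sum_sub_distrib]
            refine Finset.sum_congr rfl fun z _ => ?_
            rw [← sub_mul, ← Finset.sum_sub_distrib]
            refine congrArg (· * gam z) (Finset.sum_congr rfl fun y _ => by ring)
        _ = ∑ z, (∑ s ∈ Finset.range T,
              Matrix.vecMul mu (K ^ s * Q * P ^ (T - 1 - s)) z) * gam z := by
            exact Finset.sum_congr rfl fun z _ => by rw [hvdz mu z]
        _ = ∑ z, (∑ s ∈ Finset.range T,
              lam ^ s * ((1 - lam) * (P ^ (T-1-s)) x z)) * gam z := by
            refine Finset.sum_congr rfl fun z _ => ?_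
            refine congrArg (· * gam z) (Finset.sum_congr rfl fun s _ => ?_)
            rw [hkeyμ s (T-1-s) z]
        _ = ∑ z, ∑ s ∈ Finset.range T,
              (lam ^ s * ((1 - lam) * (P ^ (T-1-s)) x z)) * gam z := by
            exact Finset.sum_congr rfl fun z _ => Finset.sum_mul _ _ _
        _ = ∑ s ∈ Finset.range T,
              ∑ z, (lam ^ s * ((1 - lam) * (P ^ (T-1-s)) x z)) * gam z :=
            Finset.sum_comm
        _ = ∑ s ∈ Finset.range T,
              lam ^ s * ((1 - lam) * (∑ z, (P ^ (T-1-s)) x z * gam z)) := by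
            refine Finset.sum_congr rfl fun s _ => ?_
            rw [Finset.mul_sum, Finset.mul_sum]
            exact Finset.sum_congr rfl fun z _ => by ring
    have h44 : ∑ s ∈ Finset.range T,
        lam ^ s * ((1 - lam) * (∑ z, (P ^ (T-1-s)) x z * gam z))
          ≤ (1 - lam ^ T) * M := by
      have hgsum : ∀ u, ∑ z, (P ^ u) x z * gam z ≤ M := by
        intro u
        calc ∑ z, (P ^ u) x z * gam z ≤ ∑ z, (P ^ u) x z * M :=
              Finset.sum_le_sum fun z _ =>
                mul_le_mul_of_nonneg_left (hgM z) (hPt0 u x z)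
          _ = M := by rw [← Finset.sum_mul, hProwt u x, one_mul]
      have hgsum0 : ∀ u, 0 ≤ ∑ z, (P ^ u) x z * gam z := fun u =>
        Finset.sum_nonneg fun z _ => mul_nonneg (hPt0 u x z) (hg0 z)
      calc ∑ s ∈ Finset.range T,
            lam ^ s * ((1 - lam) * (∑ z, (P ^ (T-1-s)) x z * gam z))
          ≤ ∑ s ∈ Finset.range T, lam ^ s * ((1 - lam) * M) := by
            refine Finset.sum_le_sum fun s _ => ?_
            refine mul_le_mul_of_nonneg_left ?_ (pow_nonneg hlam0 s)
            exact mul_le_mul_of_nonneg_left (hgsum _) (by linarith)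
        _ = (∑ s ∈ Finset.range T, lam ^ s) * ((1 - lam) * M) :=
            (Finset.sum_mul _ _ _).symm
        _ = (1 - lam ^ T) * M := by
            have hg := geom_sum_mul lam T
            have : (∑ s ∈ Finset.range T, lam ^ s) * (1 - lam)
                = 1 - lam ^ T := by
              have e : (∑ s ∈ Finset.range T, lam ^ s) * (1 - lam)
                  = -((∑ s ∈ Finset.range T, lam ^ s) * (lam - 1)) := by ring
              rw [e, hg]; ring
            calc (∑ s ∈ Finset.range T, lam ^ s) * ((1 - lam) * M)
                = ((∑ s ∈ Finset.range T, lam ^ s) * (1 - lam)) * M := by ring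
              _ = (1 - lam ^ T) * M := by rw [this]
    have h45 : (1 - lam ^ T) * M ≤ 5 * σ * M :=
      mul_le_mul_of_nonneg_right hq hM0
    linarith [h41, h43, h44, h45, hlamT1]
  -- ================= final arithmetic ================================
  have hMfinal : M ≤ 1 + 20 * σ := by
    have hlamTlow : 1 - 5 * σ ≤ lam ^ T := by linarith [hq]
    have hA : (1 - 5 * σ) * M ≤ (1 + σ) * S := by
      have h1 : (1 - 5 * σ) * M ≤ lam ^ T * M :=
        mul_le_mul_of_nonneg_right hlamTlow hM0
      linarith [hI1]
    have hB : (1 - 5 * σ) * ((1 - σ) * M) ≤ (1 + σ) * (1 + 5 * σ * M) := by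
      have h1 : (1 - σ) * ((1 - 5 * σ) * M) ≤ (1 - σ) * ((1 + σ) * S) :=
        mul_le_mul_of_nonneg_left hA (by linarith)
      have h2 : (1 + σ) * ((1 - σ) * S) ≤ (1 + σ) * (1 + 5 * σ * M) :=
        mul_le_mul_of_nonneg_left hI4 (by linarith)
      nlinarith [h1, h2]
    nlinarith [hB, hσ0, hσ1, hM0]
  intro y
  exact (hgM y).trans hMfinal
end KeyLemma


theorem gamma_uniform_upper_bound
    (P : (n : ℕ) → Matrix (Fin n) (Fin n) ℝ)
    (pi : (n : ℕ) → Fin n → ℝ)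
    (x : (n : ℕ) → Fin n)
    (T : ℕ → ℕ) (c : ℝ)
    (hc : 2 < c)
    (hT : Filter.Tendsto T Filter.atTop Filter.atTop)
    (hnn : ∀ n : ℕ, 2 ≤ n → ∀ y z : Fin n, 0 ≤ P n y z)
    (hrow : ∀ n : ℕ, 2 ≤ n → ∀ y : Fin n, ∑ z, P n y z = 1)
    (hirr : ∀ n : ℕ, 2 ≤ n → ∀ y z : Fin n, ∃ t : ℕ, 0 < (P n ^ t) y z)
    (hpinn : ∀ n : ℕ, 2 ≤ n → ∀ y : Fin n, 0 ≤ pi n y)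
    (hpisum : ∀ n : ℕ, 2 ≤ n → ∑ y, pi n y = 1)
    (hpistat : ∀ n : ℕ, 2 ≤ n → Matrix.vecMul (pi n) (P n) = pi n)
    (hpiuniq : ∀ n : ℕ, 2 ≤ n → ∀ rho : Fin n → ℝ, (∀ y, 0 ≤ rho y) →
      (∑ y, rho y = 1) → Matrix.vecMul rho (P n) = rho → rho = pi n)
    (hkirr : ∀ n : ℕ, 2 ≤ n → ∀ y z : Fin n, y ≠ x n → z ≠ x n →
      ∃ t : ℕ, 0 < ((killed (P n) (x n)) ^ t) y z)
    (lam : ℕ → ℝ) (mu : (n : ℕ) → Fin n → ℝ)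
    (hlam : ∀ n : ℕ, 2 ≤ n → lam n ∈ Set.Ioo (0 : ℝ) 1)
    (hmunn : ∀ n : ℕ, 2 ≤ n → ∀ y : Fin n, 0 ≤ mu n y)
    (hmux : ∀ n : ℕ, 2 ≤ n → mu n (x n) = 0)
    (hmusum : ∀ n : ℕ, 2 ≤ n → ∑ y, mu n y = 1)
    (hmuqs : ∀ n : ℕ, 2 ≤ n →
      Matrix.vecMul (mu n) (killed (P n) (x n)) = lam n • mu n)
    (gamma : (n : ℕ) → Fin n → ℝ)
    (hgx : ∀ n : ℕ, 2 ≤ n → gamma n (x n) = 0)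
    (hgpos : ∀ n : ℕ, 2 ≤ n → ∀ y : Fin n, y ≠ x n → 0 < gamma n y)
    (hgeig : ∀ n : ℕ, 2 ≤ n →
      Matrix.mulVec (killed (P n) (x n)) (gamma n) = lam n • gamma n)
    (hgnorm : ∀ n : ℕ, 2 ≤ n →
      ∑ y ∈ Finset.univ.erase (x n), mu n y * gamma n y = 1)
    (HP1 : ∀ ε : ℝ, 0 < ε → ∃ N : ℕ, ∀ n : ℕ, N ≤ n → ∀ y z : Fin n,
      (n : ℝ) ^ c * |(P n ^ T n) y z - pi n z| < ε)
    (HP2 : ∀ ε : ℝ, 0 < ε → ∃ N : ℕ, ∀ n : ℕ, N ≤ n → ∀ y : Fin n,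
      (T n : ℝ) * pi n y < ε)
    (HP3 : ∀ M : ℝ, ∃ N : ℕ, ∀ n : ℕ, N ≤ n → ∀ y : Fin n,
      M < (n : ℝ) ^ 2 * pi n y)
    :
    ∀ ε : ℝ, 0 < ε → ∃ N : ℕ, ∀ n : ℕ, N ≤ n → ∀ y : Fin n, y ≠ x n →
      gamma n y ≤ 1 + ε := by
  intro ε hε
  set σ : ℝ := min (ε / 20) (1 / 100) with hσdef
  have hσ0 : 0 < σ := lt_min (by linarith) (by norm_num)
  have hσ1 : σ ≤ 1 / 100 := min_le_right _ _
  have hσε : 20 * σ ≤ ε := by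
    have h := min_le_left (ε / 20) (1 / 100)
    rw [hσdef]
    linarith [h]
  obtain ⟨N₁, hN₁⟩ := Filter.eventually_atTop.mp (hT.eventually_ge_atTop 1)
  obtain ⟨N₂, hN₂⟩ := HP2 σ hσ0
  obtain ⟨N₃, hN₃⟩ := HP3 1
  obtain ⟨N₄, hN₄⟩ := HP1 σ hσ0
  refine ⟨max (max N₁ N₂) (max (max N₃ N₄) 2), fun n hn y hy => ?_⟩
  simp only [max_le_iff] at hn
  have hn1 : N₁ ≤ n := hn.1.1
  have hn2' : N₂ ≤ n := hn.1.2
  have hn3 : N₃ ≤ n := hn.2.1.1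
  have hn4 : N₄ ≤ n := hn.2.1.2
  have hn2 : 2 ≤ n := hn.2.2
  have hnR : (1 : ℝ) ≤ (n : ℝ) := by
    have : (1 : ℕ) ≤ n := le_trans (by norm_num) hn2
    exact_mod_cast this
  have hn2pos : (0 : ℝ) < (n : ℝ) ^ 2 := by positivity
  have hpi0 : ∀ z : Fin n, 0 < pi n z := by
    intro z
    have h3 := hN₃ n hn3 z
    nlinarith [h3, hn2pos]
  have hmixn : ∀ y z : Fin n, |(P n ^ T n) y z - pi n z| ≤ σ * pi n z := by
    intro y' z
    have h1 := hN₄ n hn4 y' z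
    have h3 := hN₃ n hn3 z
    have hcmp : ((n : ℝ)) ^ (2 : ℕ) ≤ (n : ℝ) ^ c := by
      have h2 : (n : ℝ) ^ ((2 : ℕ) : ℝ) ≤ (n : ℝ) ^ c :=
        Real.rpow_le_rpow_of_exponent_le hnR (by push_cast; linarith)
      rwa [Real.rpow_natCast] at h2
    have habs : 0 ≤ |(P n ^ T n) y' z - pi n z| := abs_nonneg _
    have hkey : (n : ℝ) ^ (2 : ℕ) * |(P n ^ T n) y' z - pi n z| < σ := by
      calc (n : ℝ) ^ (2 : ℕ) * |(P n ^ T n) y' z - pi n z|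
          ≤ (n : ℝ) ^ c * |(P n ^ T n) y' z - pi n z| :=
            mul_le_mul_of_nonneg_right hcmp habs
        _ < σ := h1
    have hfin : (n : ℝ) ^ 2 * |(P n ^ T n) y' z - pi n z|
        ≤ (n : ℝ) ^ 2 * (σ * pi n z) := by
      have h5 : σ < σ * ((n : ℝ) ^ 2 * pi n z) := by nlinarith [h3, hσ0]
      nlinarith [hkey, h5]
    exact le_of_mul_le_mul_left hfin hn2pos
  have hTpixn : (T n : ℝ) * pi n (x n) ≤ σ := (hN₂ n hn2' (x n)).le
  have hT1 : 1 ≤ T n := hN₁ n hn1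
  have hg0 : ∀ w : Fin n, 0 ≤ gamma n w := by
    intro w
    by_cases hw : w = x n
    · rw [hw, hgx n hn2]
    · exact (hgpos n hn2 w hw).le
  have hgnorm' : ∑ z, mu n z * gamma n z = 1 := by
    have h := Finset.sum_erase_add Finset.univ (fun z => mu n z * gamma n z)
      (Finset.mem_univ (x n))
    rw [hgnorm n hn2] at h
    rw [← h]
    simp [hmux n hn2]
  have hfin := key (P n) (pi n) (x n) (T n) (lam n) (mu n) (gamma n) σ
    hσ0 hσ1 hT1 (hnn n hn2) (hrow n hn2) hpi0 (hpisum n hn2) (hpistat n hn2)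
    hTpixn hmixn (hlam n hn2).1.le (hlam n hn2).2.le
    (hmunn n hn2) (hmux n hn2) (hmusum n hn2) (hmuqs n hn2)
    hg0 (hgx n hn2) (hgpos n hn2) (hgeig n hn2) hgnorm'
  calc gamma n y ≤ 1 + 20 * σ := hfin y
    _ ≤ 1 + ε := by linarith [hσε]
end

section
/- Entrywise lower bound on the right Perron eigenvector: under (HP1)–(HP3), for every ε > 0 there exists N such that for all n ≥ N and all y ∈ X_n ∖ {x_n}, γ_n(y) ≥ 1 − ε − E_y[ζ_{T_n}(x_n)], where E_y[ζ_T(x)] := Σ_{s=0}^{T−1} P_n^s(y,x) is the expected time spent at x within time T by the chain started at y. -/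
open Finset Filter

section helpers
variable {n : ℕ} (P : Matrix (Fin n) (Fin n) ℝ) (x : Fin n)

lemma sum_matmul_mul (A B : Matrix (Fin n) (Fin n) ℝ) (f : Fin n → ℝ) (y : Fin n) :
    ∑ z, (A * B) y z * f z = ∑ w, A y w * (∑ z, B w z * f z) := by
  simp only [Matrix.mul_apply, Finset.sum_mul, Finset.mul_sum]
  rw [Finset.sum_comm]
  exact Finset.sum_congr rfl fun w _ => Finset.sum_congr rfl fun z _ => mul_assoc _ _ _

lemma sum_mul_matmul (A B : Matrix (Fin n) (Fin n) ℝ) (f : Fin n → ℝ) (z : Fin n) :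
    ∑ y, f y * (A * B) y z = ∑ w, (∑ y, f y * A y w) * B w z := by
  simp only [Matrix.mul_apply, Finset.mul_sum, Finset.sum_mul]
  rw [Finset.sum_comm]
  exact Finset.sum_congr rfl fun w _ => Finset.sum_congr rfl fun y' _ => (mul_assoc _ _ _).symm

lemma ppow_nonneg (hnn : ∀ y z, 0 ≤ P y z) : ∀ t y z, 0 ≤ (P ^ t) y z := by
  intro t
  induction t with
  | zero => intro y z; by_cases h : y = z <;> simp [Matrix.one_apply, h]
  | succ t ih =>
      intro y z
      rw [pow_succ, Matrix.mul_apply]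
      exact Finset.sum_nonneg fun w _ => mul_nonneg (ih y w) (hnn w z)

lemma ppow_row (hrowP : ∀ y, ∑ z, P y z = 1) : ∀ t y, ∑ z, (P ^ t) y z = 1 := by
  intro t
  induction t with
  | zero => intro y; simp [Matrix.one_apply]
  | succ t ih =>
      intro y
      rw [pow_succ]
      rw [show (∑ z, (P ^ t * P) y z) = ∑ w, (P ^ t) y w * (∑ z, P w z) by
        simp only [Matrix.mul_apply, Finset.mul_sum]; rw [Finset.sum_comm]]
      simp only [hrowP, mul_one, ih]

lemma killed_nonneg (hnn : ∀ y z, 0 ≤ P y z) : ∀ y z, 0 ≤ killed P x y z := by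
  intro y z
  unfold killed
  simp only [Matrix.of_apply]
  split <;> simp [hnn]

lemma killed_le (hnn : ∀ y z, 0 ≤ P y z) : ∀ y z, killed P x y z ≤ P y z := by
  intro y z
  unfold killed
  simp only [Matrix.of_apply]
  split <;> simp [hnn, le_refl]

lemma killed_col (y : Fin n) : killed P x y x = 0 := by
  unfold killed; simp

lemma killed_row (z : Fin n) : killed P x x z = 0 := by
  unfold killed; simp

lemma killed_off {y z : Fin n} (hy : y ≠ x) (hz : z ≠ x) : killed P x y z = P y z := by
  unfold killed; simp [hy, hz]

lemma kpow_le (hnn : ∀ y z, 0 ≤ P y z) :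
    ∀ t y z, ((killed P x) ^ t) y z ≤ (P ^ t) y z := by
  intro t
  induction t with
  | zero => intro y z; simp
  | succ t ih =>
      intro y z
      rw [pow_succ, pow_succ, Matrix.mul_apply, Matrix.mul_apply]
      apply Finset.sum_le_sum
      intro w _
      exact mul_le_mul (ih y w) (killed_le P x hnn w z)
        (killed_nonneg P x hnn w z) (ppow_nonneg P hnn t y w)

lemma kpow_nonneg (hnn : ∀ y z, 0 ≤ P y z) :
    ∀ t y z, 0 ≤ ((killed P x) ^ t) y z :=
  ppow_nonneg (killed P x) (killed_nonneg P x hnn)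

lemma kpow_col (t : ℕ) (ht : t ≠ 0) (y : Fin n) : ((killed P x) ^ t) y x = 0 := by
  obtain ⟨s, rfl⟩ := Nat.exists_eq_succ_of_ne_zero ht
  rw [pow_succ, Matrix.mul_apply]
  apply Finset.sum_eq_zero
  intro w _
  rw [killed_col, mul_zero]

lemma surv_s4 (hnn : ∀ y z, 0 ≤ P y z) (hrowP : ∀ y, ∑ z, P y z = 1) :
    ∀ t, ∀ y, y ≠ x →
      1 - ∑ s ∈ Finset.range t, (P ^ (s + 1)) y x ≤ ∑ z, ((killed P x) ^ t) y z := by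
  intro t
  induction t with
  | zero => intro y hy; simp [Matrix.one_apply]
  | succ t ih =>
      intro y hy
      have hexp : ∑ z, ((killed P x) ^ (t + 1)) y z
          = ∑ w, killed P x y w * (∑ z, ((killed P x) ^ t) w z) := by
        rw [pow_succ']
        simpa using sum_matmul_mul (killed P x) ((killed P x) ^ t) (fun _ => (1:ℝ)) y
      rw [hexp]
      have herase : ∑ w, killed P x y w * (∑ z, ((killed P x) ^ t) w z)
          = ∑ w ∈ Finset.univ.erase x, killed P x y w * (∑ z, ((killed P x) ^ t) w z) := by
        rw [← Finset.sum_erase_add _ _ (Finset.mem_univ x), killed_col, zero_mul, add_zero]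
      rw [herase]
      have hstep1 : ∑ w ∈ Finset.univ.erase x,
            P y w * (1 - ∑ s ∈ Finset.range t, (P ^ (s + 1)) w x)
          ≤ ∑ w ∈ Finset.univ.erase x, killed P x y w * (∑ z, ((killed P x) ^ t) w z) := by
        apply Finset.sum_le_sum
        intro w hw
        have hwx : w ≠ x := Finset.ne_of_mem_erase hw
        rw [killed_off P x hy hwx]
        exact mul_le_mul_of_nonneg_left (ih w hwx) (hnn y w)
      refine le_trans ?_ hstep1
      have hsplit : ∑ w ∈ Finset.univ.erase x,
            P y w * (1 - ∑ s ∈ Finset.range t, (P ^ (s + 1)) w x)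
          = (∑ w ∈ Finset.univ.erase x, P y w)
            - ∑ w ∈ Finset.univ.erase x, P y w * (∑ s ∈ Finset.range t, (P ^ (s + 1)) w x) := by
        rw [← Finset.sum_sub_distrib]
        exact Finset.sum_congr rfl fun w _ => by ring
      rw [hsplit]
      have hrow_erase : ∑ w ∈ Finset.univ.erase x, P y w = 1 - P y x := by
        have := Finset.sum_erase_add Finset.univ (fun w => P y w) (Finset.mem_univ x)
        rw [hrowP y] at this
        linarith
      rw [hrow_erase]
      have hE : ∑ w ∈ Finset.univ.erase x, P y w * (∑ s ∈ Finset.range t, (P ^ (s + 1)) w x)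
          ≤ ∑ s ∈ Finset.range t, (P ^ (s + 1 + 1)) y x := by
        have hswap : ∑ w ∈ Finset.univ.erase x, P y w * (∑ s ∈ Finset.range t, (P ^ (s + 1)) w x)
            = ∑ s ∈ Finset.range t, ∑ w ∈ Finset.univ.erase x, P y w * (P ^ (s + 1)) w x := by
          simp only [Finset.mul_sum]
          rw [Finset.sum_comm]
        rw [hswap]
        apply Finset.sum_le_sum
        intro s _
        have hfull : ∑ w, P y w * (P ^ (s + 1)) w x = (P ^ (s + 1 + 1)) y x := by
          rw [pow_succ' P (s+1), Matrix.mul_apply]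
        rw [← hfull]
        apply Finset.sum_le_sum_of_subset_of_nonneg (Finset.erase_subset _ _)
        intro w _ _
        exact mul_nonneg (hnn y w) (ppow_nonneg P hnn (s+1) w x)
      have htarget : ∑ s ∈ Finset.range (t + 1), (P ^ (s + 1)) y x
          = (∑ s ∈ Finset.range t, (P ^ (s + 1 + 1)) y x) + P y x := by
        rw [Finset.sum_range_succ']
        simp [pow_one]
      rw [htarget]
      linarith

end helpers

lemma right_eig_pow {n : ℕ} (K : Matrix (Fin n) (Fin n) ℝ) (g : Fin n → ℝ) (l : ℝ)
    (h : ∀ y, ∑ z, K y z * g z = l * g y) :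
    ∀ t y, ∑ z, (K ^ t) y z * g z = l ^ t * g y := by
  intro t
  induction t with
  | zero => intro y; simp [Matrix.one_apply]
  | succ t ih =>
      intro y
      rw [pow_succ', sum_matmul_mul]
      calc ∑ w, K y w * (∑ z, (K ^ t) w z * g z) = ∑ w, K y w * (l ^ t * g w) := by
            exact Finset.sum_congr rfl fun w _ => by rw [ih w]
        _ = l ^ t * ∑ w, K y w * g w := by rw [Finset.mul_sum]; exact Finset.sum_congr rfl fun w _ => by ring
        _ = l ^ (t + 1) * g y := by rw [h y]; ring

lemma left_eig_pow {n : ℕ} (K : Matrix (Fin n) (Fin n) ℝ) (m : Fin n → ℝ) (l : ℝ)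
    (h : ∀ z, ∑ y, m y * K y z = l * m z) :
    ∀ t z, ∑ y, m y * (K ^ t) y z = l ^ t * m z := by
  intro t
  induction t with
  | zero => intro z; simp [Matrix.one_apply]
  | succ t ih =>
      intro z
      rw [pow_succ, sum_mul_matmul]
      calc ∑ w, (∑ y, m y * (K ^ t) y w) * K w z = ∑ w, (l ^ t * m w) * K w z := by
            exact Finset.sum_congr rfl fun w _ => by rw [ih w]
        _ = l ^ t * ∑ w, m w * K w z := by rw [Finset.mul_sum]; exact Finset.sum_congr rfl fun w _ => by ring
        _ = l ^ (t + 1) * m z := by rw [h z]; ring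

lemma mix_ge {n : ℕ} (P : Matrix (Fin n) (Fin n) ℝ) (pi : Fin n → ℝ) (Tn : ℕ) (d : ℝ)
    (hnn : ∀ y z, 0 ≤ P y z) (hrowP : ∀ y, ∑ z, P y z = 1)
    (hd : ∀ w z, |(P ^ Tn) w z - pi z| ≤ d) :
    ∀ t, Tn ≤ t → ∀ y z, |(P ^ t) y z - pi z| ≤ d := by
  intro t ht y z
  obtain ⟨s, rfl⟩ : ∃ s, t = s + Tn := ⟨t - Tn, (Nat.sub_add_cancel ht).symm⟩
  rw [pow_add, Matrix.mul_apply]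
  have key : ∑ w, (P ^ s) y w * ((P ^ Tn) w z - pi z)
      = (∑ w, (P ^ s) y w * (P ^ Tn) w z) - pi z := by
    simp only [mul_sub]
    rw [Finset.sum_sub_distrib, ← Finset.sum_mul, ppow_row P hrowP s y, one_mul]
  rw [← key]
  calc |∑ w, (P ^ s) y w * ((P ^ Tn) w z - pi z)|
      ≤ ∑ w, |(P ^ s) y w * ((P ^ Tn) w z - pi z)| := Finset.abs_sum_le_sum_abs _ _
    _ ≤ ∑ w, (P ^ s) y w * d := by
        apply Finset.sum_le_sum
        intro w _
        rw [abs_mul, abs_of_nonneg (ppow_nonneg P hnn s y w)]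
        exact mul_le_mul_of_nonneg_left (hd w z) (ppow_nonneg P hnn s y w)
    _ = d := by rw [← Finset.sum_mul, ppow_row P hrowP s y, one_mul]

lemma spec_lb {n : ℕ} (K : Matrix (Fin n) (Fin n) ℝ) (m : Fin n → ℝ) (l : ℝ)
    (hKnn : ∀ y z, 0 ≤ K y z) (hmnn : ∀ y, 0 ≤ m y) (hmsum : ∑ y, m y = 1)
    (hl : 0 ≤ l)
    (hmK : ∀ t z, ∑ y, m y * (K ^ t) y z = l ^ t * m z)
    (A : Finset (Fin n)) (q c : ℝ) (hq : 0 < q) (hc : 0 < c)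
    (hcA : c ≤ ∑ y ∈ A, m y)
    (hrowA : ∀ y ∈ A, q ≤ ∑ z ∈ A, K y z) :
    q ≤ l := by
  have hKpnn := ppow_nonneg K hKnn
  have hind : ∀ k, ∀ y ∈ A, q ^ k ≤ ∑ z ∈ A, (K ^ k) y z := by
    intro k
    induction k with
    | zero => intro y hy; simp [Matrix.one_apply, hy]
      
    | succ k ih =>
        intro y hy
        have hexp : ∑ z ∈ A, (K ^ (k + 1)) y z
            = ∑ w, K y w * (∑ z ∈ A, (K ^ k) w z) := by
          rw [pow_succ']
          simp only [Matrix.mul_apply, Finset.mul_sum]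
          rw [Finset.sum_comm]
        rw [hexp]
        have h1 : ∑ w ∈ A, K y w * q ^ k ≤ ∑ w ∈ A, K y w * (∑ z ∈ A, (K ^ k) w z) :=
          Finset.sum_le_sum fun w hw =>
            mul_le_mul_of_nonneg_left (ih w hw) (hKnn y w)
        have h2 : ∑ w ∈ A, K y w * (∑ z ∈ A, (K ^ k) w z)
            ≤ ∑ w, K y w * (∑ z ∈ A, (K ^ k) w z) := by
          apply Finset.sum_le_sum_of_subset_of_nonneg (Finset.subset_univ A)
          intro w _ _
          exact mul_nonneg (hKnn y w) (Finset.sum_nonneg fun z _ => hKpnn k w z)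
        have h3 : q ^ (k + 1) ≤ ∑ w ∈ A, K y w * q ^ k := by
          rw [← Finset.sum_mul]
          have := hrowA y hy
          have hqk : (0:ℝ) ≤ q ^ k := le_of_lt (pow_pos hq k)
          calc q ^ (k + 1) = q * q ^ k := by ring
            _ ≤ (∑ z ∈ A, K y z) * q ^ k := mul_le_mul_of_nonneg_right this hqk
        linarith
  have hcq : ∀ k : ℕ, c * q ^ k ≤ l ^ k := by
    intro k
    have h1 : c * q ^ k ≤ ∑ y ∈ A, m y * q ^ k := by
      rw [← Finset.sum_mul]
      exact mul_le_mul_of_nonneg_right hcA (le_of_lt (pow_pos hq k))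
    have h2 : ∑ y ∈ A, m y * q ^ k ≤ ∑ y ∈ A, m y * (∑ z ∈ A, (K ^ k) y z) :=
      Finset.sum_le_sum fun y hy => mul_le_mul_of_nonneg_left (hind k y hy) (hmnn y)
    have h3 : ∑ y ∈ A, m y * (∑ z ∈ A, (K ^ k) y z)
        = ∑ z ∈ A, ∑ y ∈ A, m y * (K ^ k) y z := by
      simp only [Finset.mul_sum]
      rw [Finset.sum_comm]
    have h4 : ∀ z, ∑ y ∈ A, m y * (K ^ k) y z ≤ l ^ k * m z := by
      intro z
      rw [← hmK k z]
      apply Finset.sum_le_sum_of_subset_of_nonneg (Finset.subset_univ A)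
      intro w _ _
      exact mul_nonneg (hmnn w) (hKpnn k w z)
    have h5 : ∑ z ∈ A, ∑ y ∈ A, m y * (K ^ k) y z ≤ ∑ z ∈ A, l ^ k * m z :=
      Finset.sum_le_sum fun z _ => h4 z
    have h6 : ∑ z ∈ A, l ^ k * m z ≤ l ^ k := by
      rw [← Finset.mul_sum]
      have hA : ∑ z ∈ A, m z ≤ 1 := by
        rw [← hmsum]
        exact Finset.sum_le_sum_of_subset_of_nonneg (Finset.subset_univ A) fun w _ _ => hmnn w
      have := mul_le_mul_of_nonneg_left hA (pow_nonneg hl k)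
      linarith
    linarith
  by_contra hql
  push_neg at hql
  have hr1 : l / q < 1 := (div_lt_one hq).2 hql
  have hr0 : 0 ≤ l / q := div_nonneg hl (le_of_lt hq)
  have hrk : ∀ k : ℕ, c ≤ (l / q) ^ k := by
    intro k
    rw [div_pow, le_div_iff₀ (pow_pos hq k)]
    linarith [hcq k]
  have htend := tendsto_pow_atTop_nhds_zero_of_lt_one hr0 hr1
  have := htend.eventually (eventually_lt_nhds hc)
  obtain ⟨k, hk⟩ := this.exists
  exact absurd (hrk k) (not_le.2 hk)


set_option maxHeartbeats 4000000 in
theorem gamma_entrywise_lower_bound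
    (P : (n : ℕ) → Matrix (Fin n) (Fin n) ℝ)
    (pi : (n : ℕ) → Fin n → ℝ)
    (x : (n : ℕ) → Fin n)
    (T : ℕ → ℕ) (c : ℝ)
    (hc : 2 < c)
    (hT : Filter.Tendsto T Filter.atTop Filter.atTop)
    (hnn : ∀ n : ℕ, 2 ≤ n → ∀ y z : Fin n, 0 ≤ P n y z)
    (hrow : ∀ n : ℕ, 2 ≤ n → ∀ y : Fin n, ∑ z, P n y z = 1)
    (hirr : ∀ n : ℕ, 2 ≤ n → ∀ y z : Fin n, ∃ t : ℕ, 0 < (P n ^ t) y z)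
    (hpinn : ∀ n : ℕ, 2 ≤ n → ∀ y : Fin n, 0 ≤ pi n y)
    (hpisum : ∀ n : ℕ, 2 ≤ n → ∑ y, pi n y = 1)
    (hpistat : ∀ n : ℕ, 2 ≤ n → Matrix.vecMul (pi n) (P n) = pi n)
    (hpiuniq : ∀ n : ℕ, 2 ≤ n → ∀ rho : Fin n → ℝ, (∀ y, 0 ≤ rho y) →
      (∑ y, rho y = 1) → Matrix.vecMul rho (P n) = rho → rho = pi n)
    (hkirr : ∀ n : ℕ, 2 ≤ n → ∀ y z : Fin n, y ≠ x n → z ≠ x n →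
      ∃ t : ℕ, 0 < ((killed (P n) (x n)) ^ t) y z)
    (lam : ℕ → ℝ) (mu : (n : ℕ) → Fin n → ℝ)
    (hlam : ∀ n : ℕ, 2 ≤ n → lam n ∈ Set.Ioo (0 : ℝ) 1)
    (hmunn : ∀ n : ℕ, 2 ≤ n → ∀ y : Fin n, 0 ≤ mu n y)
    (hmux : ∀ n : ℕ, 2 ≤ n → mu n (x n) = 0)
    (hmusum : ∀ n : ℕ, 2 ≤ n → ∑ y, mu n y = 1)
    (hmuqs : ∀ n : ℕ, 2 ≤ n →
      Matrix.vecMul (mu n) (killed (P n) (x n)) = lam n • mu n)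
    (gamma : (n : ℕ) → Fin n → ℝ)
    (hgx : ∀ n : ℕ, 2 ≤ n → gamma n (x n) = 0)
    (hgpos : ∀ n : ℕ, 2 ≤ n → ∀ y : Fin n, y ≠ x n → 0 < gamma n y)
    (hgeig : ∀ n : ℕ, 2 ≤ n →
      Matrix.mulVec (killed (P n) (x n)) (gamma n) = lam n • gamma n)
    (hgnorm : ∀ n : ℕ, 2 ≤ n →
      ∑ y ∈ Finset.univ.erase (x n), mu n y * gamma n y = 1)
    (HP1 : ∀ ε : ℝ, 0 < ε → ∃ N : ℕ, ∀ n : ℕ, N ≤ n → ∀ y z : Fin n,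
      (n : ℝ) ^ c * |(P n ^ T n) y z - pi n z| < ε)
    (HP2 : ∀ ε : ℝ, 0 < ε → ∃ N : ℕ, ∀ n : ℕ, N ≤ n → ∀ y : Fin n,
      (T n : ℝ) * pi n y < ε)
    (HP3 : ∀ M : ℝ, ∃ N : ℕ, ∀ n : ℕ, N ≤ n → ∀ y : Fin n,
      M < (n : ℝ) ^ 2 * pi n y)
    :
    ∀ ε : ℝ, 0 < ε → ∃ N : ℕ, ∀ n : ℕ, N ≤ n → ∀ y : Fin n, y ≠ x n →
      1 - ε - ∑ s ∈ Finset.range (T n), (P n ^ s) y (x n) ≤ gamma n y := by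
  intro ε hε
  have he0 : (0:ℝ) < min (1/1000) (ε/1000) := lt_min (by norm_num) (by positivity)
  set e : ℝ := min (1/1000) (ε/1000) with he_def
  have he1 : e ≤ 1/1000 := min_le_left _ _
  have he2 : e ≤ ε/1000 := min_le_right _ _
  obtain ⟨N1, hN1⟩ := HP1 1 one_pos
  obtain ⟨N2, hN2⟩ := HP2 e he0
  obtain ⟨N3, hN3⟩ := Filter.eventually_atTop.1 (hT.eventually_ge_atTop 1)
  obtain ⟨N4, hN4⟩ : ∃ N : ℕ, ∀ n : ℕ, N ≤ n → (1:ℝ)/(n:ℝ) ≤ e := by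
    obtain ⟨N, hN⟩ := exists_nat_gt (1/e)
    refine ⟨N + 1, fun n hn => ?_⟩
    have hn0 : (0:ℝ) < n := by
      have : (1:ℕ) ≤ n := le_trans (Nat.le_add_left 1 N) hn
      exact_mod_cast Nat.lt_of_lt_of_le Nat.zero_lt_one this
    rw [div_le_iff₀ hn0]
    have hNn : (N:ℝ) ≤ n := by exact_mod_cast le_trans (Nat.le_succ N) hn
    have h1e : 1/e < (n:ℝ) := lt_of_lt_of_le hN hNn
    rw [div_lt_iff₀ he0] at h1e
    linarith
  refine ⟨max (max N1 N2) (max (max N3 N4) 2), fun n hn y hy => ?_⟩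
  have hN1n : N1 ≤ n := le_trans ((le_max_left N1 N2).trans (le_max_left _ _)) hn
  have hN2n : N2 ≤ n := le_trans ((le_max_right N1 N2).trans (le_max_left _ _)) hn
  have hN3n : N3 ≤ n := le_trans ((le_max_left N3 N4).trans
    ((le_max_left (max N3 N4) 2).trans (le_max_right (max N1 N2) _))) hn
  have hN4n : N4 ≤ n := le_trans ((le_max_right N3 N4).trans
    ((le_max_left (max N3 N4) 2).trans (le_max_right (max N1 N2) _))) hn
  have h2n : 2 ≤ n := le_trans ((le_max_right (max N3 N4) 2).trans
    (le_max_right (max N1 N2) _)) hn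
  -- basic data
  have hP0 : ∀ a b : Fin n, 0 ≤ P n a b := hnn n h2n
  have hProw : ∀ a : Fin n, ∑ b, P n a b = 1 := hrow n h2n
  have hPpnn := ppow_nonneg (P n) hP0
  have hPprow := ppow_row (P n) hProw
  have hKnn := killed_nonneg (P n) (x n) hP0
  have hKpnn := kpow_nonneg (P n) (x n) hP0
  have hKple := kpow_le (P n) (x n) hP0
  have hpi0 : ∀ a : Fin n, 0 ≤ pi n a := hpinn n h2n
  have hpisum' : ∑ a, pi n a = 1 := hpisum n h2n
  have hmu0 : ∀ a : Fin n, 0 ≤ mu n a := hmunn n h2n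
  have hmusum' : ∑ a, mu n a = 1 := hmusum n h2n
  have hmuX : mu n (x n) = 0 := hmux n h2n
  have hgX : gamma n (x n) = 0 := hgx n h2n
  have hgp : ∀ a : Fin n, a ≠ x n → 0 < gamma n a := hgpos n h2n
  have hL0 : 0 < lam n := (hlam n h2n).1
  have hL1 : lam n < 1 := (hlam n h2n).2
  have hgnn : ∀ a : Fin n, 0 ≤ gamma n a := by
    intro a
    by_cases h : a = x n
    · rw [h, hgX]
    · exact (hgp a h).le
  -- eigen equations in sum form
  have hg_eig : ∀ a : Fin n, ∑ b, killed (P n) (x n) a b * gamma n b = lam n * gamma n a := by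
    intro a
    have h := congrFun (hgeig n h2n) a
    simpa [Matrix.mulVec, dotProduct, Pi.smul_apply, smul_eq_mul] using h
  have hmu_eig : ∀ b : Fin n, ∑ a, mu n a * killed (P n) (x n) a b = lam n * mu n b := by
    intro b
    have h := congrFun (hmuqs n h2n) b
    simpa [Matrix.vecMul, dotProduct, Pi.smul_apply, smul_eq_mul] using h
  have hpi_eig : ∀ b : Fin n, ∑ a, pi n a * P n a b = 1 * pi n b := by
    intro b
    have h := congrFun (hpistat n h2n) b
    rw [one_mul]
    simpa [Matrix.vecMul, dotProduct] using h
  have hKg := right_eig_pow (killed (P n) (x n)) (gamma n) (lam n) hg_eig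
  have hmuK := left_eig_pow (killed (P n) (x n)) (mu n) (lam n) hmu_eig
  have hpiP : ∀ t (b : Fin n), ∑ a, pi n a * (P n ^ t) a b = pi n b := by
    intro t b
    have h := left_eig_pow (P n) (pi n) 1 hpi_eig t b
    simpa using h
  -- quantitative setup
  have hn1 : (1:ℝ) ≤ (n:ℝ) := by exact_mod_cast le_trans one_le_two h2n
  have hn0 : (0:ℝ) < (n:ℝ) := lt_of_lt_of_le zero_lt_one hn1
  set d : ℝ := ((n:ℝ)^2)⁻¹ with hd_def
  have hd0 : 0 < d := by positivity
  have hdw : ∀ a b : Fin n, |(P n ^ T n) a b - pi n b| ≤ d := by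
    intro a b
    have h1 := hN1 n hN1n a b
    have hcc : ((n:ℝ)^2 : ℝ) ≤ (n:ℝ) ^ c := by
      rw [← Real.rpow_natCast (n:ℝ) 2]
      exact Real.rpow_le_rpow_of_exponent_le hn1 (by push_cast; linarith)
    have habs : (0:ℝ) ≤ |(P n ^ T n) a b - pi n b| := abs_nonneg _
    have h2 : |(P n ^ T n) a b - pi n b| * (n:ℝ)^2 ≤ 1 := by
      calc |(P n ^ T n) a b - pi n b| * (n:ℝ)^2
          ≤ |(P n ^ T n) a b - pi n b| * (n:ℝ)^c := mul_le_mul_of_nonneg_left hcc habs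
        _ = (n:ℝ)^c * |(P n ^ T n) a b - pi n b| := mul_comm _ _
        _ ≤ 1 := h1.le
    have hn2 : (0:ℝ) < (n:ℝ)^2 := by positivity
    rw [hd_def, show ((n:ℝ)^2)⁻¹ = 1/((n:ℝ)^2) by rw [one_div], le_div_iff₀ hn2]
    exact h2
  have hmixd := mix_ge (P n) (pi n) (T n) d hP0 hProw hdw
  set u : ℝ := (n:ℝ)⁻¹ with hu_def
  have hu0 : 0 < u := by positivity
  have hdu : d * (n:ℝ) = u := by
    rw [hd_def, hu_def]
    have : (n:ℝ) ≠ 0 := ne_of_gt hn0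
    field_simp
  have hd_le_u : d ≤ u := by
    rw [hd_def, hu_def]
    apply inv_anti₀ hn0
    nlinarith
  have hu_le_e : u ≤ e := by
    have h := hN4 n hN4n
    rw [hu_def]
    rw [one_div] at h
    exact h
  have hd_le_e : d ≤ e := hd_le_u.trans hu_le_e
  -- T bounds
  have hT1 : 1 ≤ T n := hN3 n hN3n
  have hT1R : (1:ℝ) ≤ (T n : ℝ) := by exact_mod_cast hT1
  have hTpi : ∀ a : Fin n, (T n : ℝ) * pi n a < e := hN2 n hN2n
  have hpiXe : pi n (x n) ≤ e := by
    have h := hTpi (x n)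
    have h2 : 1 * pi n (x n) ≤ (T n : ℝ) * pi n (x n) :=
      mul_le_mul_of_nonneg_right hT1R (hpi0 (x n))
    linarith
  have hTn_le : (T n : ℝ) ≤ e * n := by
    obtain ⟨a0, ha0⟩ : ∃ a : Fin n, (1:ℝ)/(n:ℝ) ≤ pi n a := by
      by_contra hcon
      push_neg at hcon
      have hne : (Finset.univ : Finset (Fin n)).Nonempty := by
        refine ⟨⟨0, ?_⟩, Finset.mem_univ _⟩
        omega
      have hlt : ∑ a, pi n a < ∑ _a : Fin n, (1:ℝ)/(n:ℝ) :=
        Finset.sum_lt_sum_of_nonempty hne (fun a _ => hcon a)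
      rw [hpisum'] at hlt
      rw [Finset.sum_const, Finset.card_univ, Fintype.card_fin] at hlt
      rw [nsmul_eq_mul] at hlt
      rw [mul_one_div, div_self (ne_of_gt hn0)] at hlt
      exact lt_irrefl 1 hlt
    have h1 : (T n : ℝ) * ((1:ℝ)/(n:ℝ)) ≤ (T n : ℝ) * pi n a0 :=
      mul_le_mul_of_nonneg_left ha0 (by positivity)
    have h2 : (T n : ℝ) * ((1:ℝ)/(n:ℝ)) < e := lt_of_le_of_lt h1 (hTpi a0)
    have h3 : (T n : ℝ) = ((T n : ℝ) * ((1:ℝ)/(n:ℝ))) * n := by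
      field_simp
    rw [h3]
    exact mul_le_mul_of_nonneg_right h2.le hn0.le
  have hTd : (T n : ℝ) * d ≤ u := by
    calc (T n : ℝ) * d ≤ (e * n) * d := mul_le_mul_of_nonneg_right hTn_le hd0.le
      _ = e * (d * n) := by ring
      _ = e * u := by rw [hdu]
      _ ≤ 1 * u := mul_le_mul_of_nonneg_right (he1.trans (by norm_num)) hu0.le
      _ = u := one_mul u
  -- survival bounds
  have hsurv_gen : ∀ t, T n ≤ t → ∀ a : Fin n, a ≠ x n →
      1 - (∑ s ∈ Finset.range t, (P n ^ s) a (x n)) - (pi n (x n) + d)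
        ≤ ∑ b, ((killed (P n) (x n)) ^ t) a b := by
    intro t ht a ha
    have h0 := surv_s4 (P n) (x n) hP0 hProw t a ha
    have hshift : ∑ s ∈ Finset.range t, (P n ^ (s+1)) a (x n)
        = (∑ s ∈ Finset.range t, (P n ^ s) a (x n)) + (P n ^ t) a (x n)
          - (P n ^ 0) a (x n) := by
      have h1 := Finset.sum_range_succ (fun s => (P n ^ s) a (x n)) t
      have h2 := Finset.sum_range_succ' (fun s => (P n ^ s) a (x n)) t
      linarith [h1, h2, h1 ▸ h2]
    have hP0aX : (P n ^ 0) a (x n) = 0 := by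
      simp [Matrix.one_apply, ha]
    have hPt : (P n ^ t) a (x n) ≤ pi n (x n) + d := by
      have h := abs_le.1 (hmixd t ht a (x n))
      linarith [h.2]
    rw [hshift, hP0aX] at h0
    linarith
  -- the good set A
  set A : Finset (Fin n) := (Finset.univ.erase (x n)).filter
    (fun a => (∑ s ∈ Finset.range (T n + T n), (P n ^ s) a (x n)) ≤ (1/8:ℝ)) with hA_def
  have hAsub : A ⊆ Finset.univ.erase (x n) := Finset.filter_subset _ _
  have hE2nn : ∀ a : Fin n, 0 ≤ ∑ s ∈ Finset.range (T n + T n), (P n ^ s) a (x n) :=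
    fun a => Finset.sum_nonneg fun s _ => hPpnn s a (x n)
  have hpiE2 : ∑ a, pi n a * (∑ s ∈ Finset.range (T n + T n), (P n ^ s) a (x n))
      = ((T n + T n : ℕ) : ℝ) * pi n (x n) := by
    simp only [Finset.mul_sum]
    rw [Finset.sum_comm]
    rw [Finset.sum_congr rfl (fun s _ => hpiP s (x n))]
    rw [Finset.sum_const, Finset.card_range, nsmul_eq_mul]
  have h2TpiX : ((T n + T n : ℕ) : ℝ) * pi n (x n) ≤ 2 * e := by
    have h := hTpi (x n)
    push_cast
    nlinarith [hpi0 (x n)]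
  have herase_pi : ∑ a ∈ Finset.univ.erase (x n), pi n a = 1 - pi n (x n) := by
    have h := Finset.sum_erase_add Finset.univ (pi n) (Finset.mem_univ (x n))
    rw [hpisum'] at h
    linarith
  have hAmass : 1 - 17 * e ≤ ∑ a ∈ A, pi n a := by
    have hsplit := Finset.sum_filter_add_sum_filter_not (Finset.univ.erase (x n))
      (fun a => (∑ s ∈ Finset.range (T n + T n), (P n ^ s) a (x n)) ≤ (1/8:ℝ)) (pi n)
    have hbad : ∑ a ∈ (Finset.univ.erase (x n)).filter
        (fun a => ¬ ((∑ s ∈ Finset.range (T n + T n), (P n ^ s) a (x n)) ≤ (1/8:ℝ))), pi n a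
        ≤ 8 * (((T n + T n : ℕ) : ℝ) * pi n (x n)) := by
      rw [← hpiE2]
      calc ∑ a ∈ (Finset.univ.erase (x n)).filter
            (fun a => ¬ ((∑ s ∈ Finset.range (T n + T n), (P n ^ s) a (x n)) ≤ (1/8:ℝ))), pi n a
          ≤ ∑ a ∈ (Finset.univ.erase (x n)).filter
            (fun a => ¬ ((∑ s ∈ Finset.range (T n + T n), (P n ^ s) a (x n)) ≤ (1/8:ℝ))),
              8 * (pi n a * (∑ s ∈ Finset.range (T n + T n), (P n ^ s) a (x n))) := by
            apply Finset.sum_le_sum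
            intro a ha
            have hgt := (Finset.mem_filter.1 ha).2
            push_neg at hgt
            nlinarith [hpi0 a]
        _ = 8 * ∑ a ∈ (Finset.univ.erase (x n)).filter
            (fun a => ¬ ((∑ s ∈ Finset.range (T n + T n), (P n ^ s) a (x n)) ≤ (1/8:ℝ))),
              pi n a * (∑ s ∈ Finset.range (T n + T n), (P n ^ s) a (x n)) := by
            rw [Finset.mul_sum]
        _ ≤ 8 * ∑ a, pi n a * (∑ s ∈ Finset.range (T n + T n), (P n ^ s) a (x n)) := by
            apply mul_le_mul_of_nonneg_left _ (by norm_num)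
            apply Finset.sum_le_sum_of_subset_of_nonneg (Finset.subset_univ _)
            intro a _ _
            exact mul_nonneg (hpi0 a) (hE2nn a)
    rw [hA_def]
    linarith [hsplit, herase_pi, hbad, h2TpiX, hpiXe]
  have hmupos : ∀ b : Fin n, b ≠ x n → 0 < mu n b := by
    intro b hb
    obtain ⟨a0, ha0⟩ : ∃ a : Fin n, 0 < mu n a := by
      by_contra hcon
      push_neg at hcon
      have hle : ∑ a, mu n a ≤ 0 := Finset.sum_nonpos fun a _ => hcon a
      rw [hmusum'] at hle
      linarith
    have ha0X : a0 ≠ x n := by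
      intro h
      rw [h, hmuX] at ha0
      exact lt_irrefl 0 ha0
    obtain ⟨t, ht⟩ := hkirr n h2n a0 b ha0X hb
    have h1 : mu n a0 * ((killed (P n) (x n)) ^ t) a0 b
        ≤ ∑ a, mu n a * ((killed (P n) (x n)) ^ t) a b :=
      Finset.single_le_sum (fun a _ => mul_nonneg (hmu0 a) (hKpnn t a b)) (Finset.mem_univ a0)
    rw [hmuK t b] at h1
    have h2 : 0 < mu n a0 * ((killed (P n) (x n)) ^ t) a0 b := mul_pos ha0 ht
    have hLt : 0 < lam n ^ t := pow_pos hL0 t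
    nlinarith
  have hAne : A.Nonempty := by
    rcases Finset.eq_empty_or_nonempty A with h | h
    · exfalso
      rw [h, Finset.sum_empty] at hAmass
      linarith
    · exact h
  have hmuA : 0 < ∑ a ∈ A, mu n a :=
    Finset.sum_pos (fun a ha => hmupos a (Finset.ne_of_mem_erase (hAsub ha))) hAne
  have hArow : ∀ a ∈ A, (1/4:ℝ) ≤ ∑ b ∈ A, ((killed (P n) (x n)) ^ (T n + T n)) a b := by
    intro a ha
    have haX : a ≠ x n := Finset.ne_of_mem_erase (hAsub ha)
    have haE2 : (∑ s ∈ Finset.range (T n + T n), (P n ^ s) a (x n)) ≤ 1/8 := by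
      have := (Finset.mem_filter.1 (hA_def ▸ ha)).2
      exact this
    have hsubA : ∑ b ∈ A, ((P n ^ (T n + T n)) a b - ((killed (P n) (x n)) ^ (T n + T n)) a b)
        ≤ ∑ b, ((P n ^ (T n + T n)) a b - ((killed (P n) (x n)) ^ (T n + T n)) a b) := by
      apply Finset.sum_le_sum_of_subset_of_nonneg (Finset.subset_univ _)
      intro b _ _
      linarith [hKple (T n + T n) a b]
    have hAeq : ∑ b ∈ A, ((killed (P n) (x n)) ^ (T n + T n)) a b
        = (∑ b ∈ A, (P n ^ (T n + T n)) a b)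
          - ∑ b ∈ A, ((P n ^ (T n + T n)) a b - ((killed (P n) (x n)) ^ (T n + T n)) a b) := by
      rw [Finset.sum_sub_distrib]
      ring
    have hfull : ∑ b, ((P n ^ (T n + T n)) a b - ((killed (P n) (x n)) ^ (T n + T n)) a b)
        = 1 - ∑ b, ((killed (P n) (x n)) ^ (T n + T n)) a b := by
      rw [Finset.sum_sub_distrib, hPprow]
    have hsg := hsurv_gen (T n + T n) (Nat.le_add_right _ _) a haX
    have hPA : (∑ b ∈ A, pi n b) - (n:ℝ) * d ≤ ∑ b ∈ A, (P n ^ (T n + T n)) a b := by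
      have heach : ∀ b : Fin n, pi n b - d ≤ (P n ^ (T n + T n)) a b := by
        intro b
        have h := abs_le.1 (hmixd (T n + T n) (Nat.le_add_right _ _) a b)
        linarith [h.1]
      calc (∑ b ∈ A, pi n b) - (n:ℝ) * d
          ≤ (∑ b ∈ A, pi n b) - (A.card : ℝ) * d := by
            have hcard : (A.card : ℝ) ≤ (n:ℝ) := by
              have h := Finset.card_le_univ A
              rw [Fintype.card_fin] at h
              exact_mod_cast h
            nlinarith
        _ = ∑ b ∈ A, (pi n b - d) := by
            rw [Finset.sum_sub_distrib, Finset.sum_const, nsmul_eq_mul]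
        _ ≤ ∑ b ∈ A, (P n ^ (T n + T n)) a b := Finset.sum_le_sum fun b _ => heach b
    have hnd : (n:ℝ) * d = u := by rw [← hdu]; ring
    rw [hnd] at hPA
    linarith [hAmass, hpiXe, hd_le_e, hu_le_e, he1, hsubA, hAeq, hfull, hsg, haE2]
  have hL2T : (1/4:ℝ) ≤ lam n ^ (T n + T n) := by
    refine spec_lb ((killed (P n) (x n)) ^ (T n + T n)) (mu n) (lam n ^ (T n + T n))
      (hKpnn (T n + T n)) hmu0 hmusum' (pow_nonneg hL0.le _) ?_ A (1/4) (∑ a ∈ A, mu n a)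
      (by norm_num) hmuA le_rfl hArow
    intro t z
    rw [← pow_mul, ← pow_mul]
    exact hmuK ((T n + T n) * t) z
  -- elementary lambda facts
  have hLTle1 : lam n ^ T n ≤ 1 := pow_le_one₀ hL0.le hL1.le
  have hL2Tle1 : lam n ^ (T n + T n) ≤ 1 := pow_le_one₀ hL0.le hL1.le
  have hLTpos : 0 < lam n ^ T n := pow_pos hL0 _
  have hl2sq : lam n ^ (T n + T n) = (lam n ^ T n) * (lam n ^ T n) := by rw [← pow_add]
  -- kernel row sums
  have hKrow : ∀ a : Fin n, a ≠ x n → ∑ b, killed (P n) (x n) a b = 1 - P n a (x n) := by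
    intro a haX
    have hsp := Finset.sum_erase_add Finset.univ (killed (P n) (x n) a) (Finset.mem_univ (x n))
    rw [killed_col] at hsp
    rw [← hsp, add_zero]
    rw [Finset.sum_congr rfl (fun b hb => killed_off (P n) (x n) haX (Finset.ne_of_mem_erase hb))]
    have h2 := Finset.sum_erase_add Finset.univ (P n a) (Finset.mem_univ (x n))
    rw [hProw a] at h2
    linarith
  have h1mL_eq : 1 - lam n = ∑ a, mu n a * P n a (x n) := by
    have h1 : lam n = ∑ b, lam n * mu n b := by rw [← Finset.mul_sum, hmusum', mul_one]
    have h2 : ∑ b, lam n * mu n b = ∑ b, ∑ a, mu n a * killed (P n) (x n) a b :=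
      Finset.sum_congr rfl fun b _ => (hmu_eig b).symm
    have h3 : ∑ b, ∑ a, mu n a * killed (P n) (x n) a b
        = ∑ a, mu n a * (∑ b, killed (P n) (x n) a b) := by
      rw [Finset.sum_comm]
      exact Finset.sum_congr rfl fun a _ => by rw [Finset.mul_sum]
    have h4 : ∑ a, mu n a * (∑ b, killed (P n) (x n) a b)
        = ∑ a, mu n a * (1 - P n a (x n)) := by
      apply Finset.sum_congr rfl
      intro a _
      by_cases haX : a = x n
      · rw [haX, hmuX]
        ring
      · rw [hKrow a haX]
    have h5 : ∑ a, mu n a * (1 - P n a (x n)) = 1 - ∑ a, mu n a * P n a (x n) := by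
      simp only [mul_sub, mul_one]
      rw [Finset.sum_sub_distrib, hmusum']
    rw [h1, h2, h3, h4, h5]
    ring
  have h1mL : (1 - lam n) * lam n ^ (T n + T n) ≤ pi n (x n) + d := by
    have hkey : (1 - lam n) * lam n ^ (T n + T n)
        = ∑ a, (∑ w, mu n w * ((killed (P n) (x n)) ^ (T n + T n)) w a) * P n a (x n) := by
      rw [h1mL_eq, Finset.sum_mul]
      apply Finset.sum_congr rfl
      intro a _
      rw [hmuK (T n + T n) a]
      ring
    have hstep1 : ∑ a, (∑ w, mu n w * ((killed (P n) (x n)) ^ (T n + T n)) w a) * P n a (x n)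
        ≤ ∑ a, (∑ w, mu n w * (P n ^ (T n + T n)) w a) * P n a (x n) := by
      apply Finset.sum_le_sum
      intro a _
      apply mul_le_mul_of_nonneg_right _ (hP0 a (x n))
      apply Finset.sum_le_sum
      intro w _
      exact mul_le_mul_of_nonneg_left (hKple (T n + T n) w a) (hmu0 w)
    have hstep2 : ∑ a, (∑ w, mu n w * (P n ^ (T n + T n)) w a) * P n a (x n)
        = ∑ w, mu n w * (P n ^ (T n + T n + 1)) w (x n) := by
      rw [← sum_mul_matmul (P n ^ (T n + T n)) (P n) (mu n) (x n)]
      rw [← pow_succ]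
    have hstep3 : ∑ w, mu n w * (P n ^ (T n + T n + 1)) w (x n) ≤ pi n (x n) + d := by
      have hbd : ∀ w : Fin n, (P n ^ (T n + T n + 1)) w (x n) ≤ pi n (x n) + d := by
        intro w
        have h := abs_le.1 (hmixd (T n + T n + 1) (by omega) w (x n))
        linarith [h.2]
      calc ∑ w, mu n w * (P n ^ (T n + T n + 1)) w (x n)
          ≤ ∑ w, mu n w * (pi n (x n) + d) := Finset.sum_le_sum fun w _ =>
            mul_le_mul_of_nonneg_left (hbd w) (hmu0 w)
        _ = pi n (x n) + d := by rw [← Finset.sum_mul, hmusum', one_mul]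
    linarith [hkey ▸ le_trans hstep1 (hstep2 ▸ hstep3)]
  have h1mL4 : 1 - lam n ≤ 4 * (pi n (x n) + d) := by
    have hmul : (1 - lam n) * (lam n ^ (T n + T n) - 1/4) ≥ 0 :=
      mul_nonneg (by linarith) (by linarith)
    nlinarith
  have hbern : ∀ m : ℕ, 1 - (m:ℝ) * (1 - lam n) ≤ lam n ^ m := by
    intro m
    have h := one_add_mul_le_pow (a := lam n - 1) (by linarith) m
    have heq : ((1:ℝ) + (lam n - 1)) = lam n := by ring
    rw [heq] at h
    linarith
  have hthT : 1 - lam n ^ T n ≤ 8 * e := by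
    have h1 : (T n : ℝ) * (1 - lam n) ≤ (T n : ℝ) * (4 * (pi n (x n) + d)) :=
      mul_le_mul_of_nonneg_left h1mL4 (by positivity)
    have h2 : (T n : ℝ) * (4 * (pi n (x n) + d))
        = 4 * ((T n : ℝ) * pi n (x n)) + 4 * ((T n : ℝ) * d) := by ring
    have h3 := hbern (T n)
    linarith [hTpi (x n), hTd, hu_le_e]
  have hth2T : 1 - lam n ^ (T n + T n) ≤ 16 * e := by
    have h1 : ((T n + T n : ℕ) : ℝ) * (1 - lam n) ≤ ((T n + T n : ℕ) : ℝ) * (4 * (pi n (x n) + d)) :=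
      mul_le_mul_of_nonneg_left h1mL4 (by positivity)
    have h3 := hbern (T n + T n)
    have h4 : ((T n + T n : ℕ) : ℝ) = (T n : ℝ) + (T n : ℝ) := by push_cast; ring
    rw [h4] at h1 h3
    have h2 : ((T n : ℝ) + (T n : ℝ)) * (4 * (pi n (x n) + d))
        = 8 * ((T n : ℝ) * pi n (x n)) + 8 * ((T n : ℝ) * d) := by ring
    linarith [hTpi (x n), hTd, hu_le_e]
  -- max of gamma
  obtain ⟨z1, hz1mem, hz1max⟩ := Finset.exists_max_image (Finset.univ.erase (x n)) (gamma n)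
    ⟨y, Finset.mem_erase.2 ⟨hy, Finset.mem_univ y⟩⟩
  have hz1X : z1 ≠ x n := Finset.ne_of_mem_erase hz1mem
  have hM0 : 0 < gamma n z1 := hgp z1 hz1X
  have hMall : ∀ b : Fin n, gamma n b ≤ gamma n z1 := by
    intro b
    by_cases hb : b = x n
    · rw [hb, hgX]; exact hM0.le
    · exact hz1max b (Finset.mem_erase.2 ⟨hb, Finset.mem_univ b⟩)
  set S : ℝ := ∑ b, gamma n b with hS_def
  have hS0 : 0 ≤ S := Finset.sum_nonneg fun b _ => hgnn b
  have hSnM : S ≤ (n:ℝ) * gamma n z1 := by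
    rw [hS_def]
    calc ∑ b, gamma n b ≤ ∑ _b : Fin n, gamma n z1 := Finset.sum_le_sum fun b _ => hMall b
      _ = (n:ℝ) * gamma n z1 := by
          rw [Finset.sum_const, Finset.card_univ, Fintype.card_fin, nsmul_eq_mul]
  set G : ℝ := ∑ b, pi n b * gamma n b with hG_def
  have hG0 : 0 ≤ G := Finset.sum_nonneg fun b _ => mul_nonneg (hpi0 b) (hgnn b)
  have hdS : d * S ≤ u * gamma n z1 := by
    calc d * S ≤ d * ((n:ℝ) * gamma n z1) := mul_le_mul_of_nonneg_left hSnM hd0.le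
      _ = (d * n) * gamma n z1 := by ring
      _ = u * gamma n z1 := by rw [hdu]
  have hPtg : ∀ t, T n ≤ t → ∀ a : Fin n,
      |(∑ b, (P n ^ t) a b * gamma n b) - G| ≤ u * gamma n z1 := by
    intro t ht a
    have heq : (∑ b, (P n ^ t) a b * gamma n b) - G
        = ∑ b, ((P n ^ t) a b - pi n b) * gamma n b := by
      rw [hG_def]
      simp only [sub_mul]
      rw [Finset.sum_sub_distrib]
    rw [heq]
    calc |∑ b, ((P n ^ t) a b - pi n b) * gamma n b|
        ≤ ∑ b, |((P n ^ t) a b - pi n b) * gamma n b| := Finset.abs_sum_le_sum_abs _ _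
      _ ≤ ∑ b, d * gamma n b := by
          apply Finset.sum_le_sum
          intro b _
          rw [abs_mul, abs_of_nonneg (hgnn b)]
          exact mul_le_mul_of_nonneg_right (hmixd t ht a b) (hgnn b)
      _ = d * S := by rw [← Finset.mul_sum, hS_def]
      _ ≤ u * gamma n z1 := hdS
  have hDg : ∀ t, ∀ a : Fin n,
      ∑ b, ((P n ^ t) a b - ((killed (P n) (x n)) ^ t) a b) * gamma n b
        ≤ gamma n z1 * (1 - ∑ b, ((killed (P n) (x n)) ^ t) a b) := by
    intro t a
    calc ∑ b, ((P n ^ t) a b - ((killed (P n) (x n)) ^ t) a b) * gamma n b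
        ≤ ∑ b, ((P n ^ t) a b - ((killed (P n) (x n)) ^ t) a b) * gamma n z1 := by
          apply Finset.sum_le_sum
          intro b _
          exact mul_le_mul_of_nonneg_left (hMall b) (by linarith only [hKple t a b])
      _ = gamma n z1 * ((∑ b, (P n ^ t) a b) - ∑ b, ((killed (P n) (x n)) ^ t) a b) := by
          rw [← Finset.sum_mul, Finset.sum_sub_distrib]
          ring
      _ = gamma n z1 * (1 - ∑ b, ((killed (P n) (x n)) ^ t) a b) := by rw [hPprow t a]
  -- C3 : lower bound for gamma at y
  have hgy : G - u * gamma n z1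
      - gamma n z1 * (∑ s ∈ Finset.range (T n), (P n ^ s) y (x n))
      - gamma n z1 * (pi n (x n) + d) ≤ gamma n y := by
    have h1 : lam n ^ T n * gamma n y ≤ gamma n y := by
      nlinarith only [hgnn y, hLTle1, hLTpos]
    have h2 : ∑ b, ((killed (P n) (x n)) ^ T n) y b * gamma n b = lam n ^ T n * gamma n y :=
      hKg (T n) y
    have hsub : ∑ b, ((killed (P n) (x n)) ^ T n) y b * gamma n b
        = (∑ b, (P n ^ T n) y b * gamma n b)
          - ∑ b, ((P n ^ T n) y b - ((killed (P n) (x n)) ^ T n) y b) * gamma n b := by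
      simp only [sub_mul]
      rw [Finset.sum_sub_distrib]
      ring
    have h4 := hDg (T n) y
    have h5 : 1 - ∑ b, ((killed (P n) (x n)) ^ T n) y b
        ≤ (∑ s ∈ Finset.range (T n), (P n ^ s) y (x n)) + (pi n (x n) + d) := by
      linarith only [hsurv_gen (T n) le_rfl y hy]
    have h6 : gamma n z1 * (1 - ∑ b, ((killed (P n) (x n)) ^ T n) y b)
        ≤ gamma n z1 * ((∑ s ∈ Finset.range (T n), (P n ^ s) y (x n)) + (pi n (x n) + d)) :=
      mul_le_mul_of_nonneg_left h5 hM0.le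
    have h6' : gamma n z1 * ((∑ s ∈ Finset.range (T n), (P n ^ s) y (x n)) + (pi n (x n) + d))
        = gamma n z1 * (∑ s ∈ Finset.range (T n), (P n ^ s) y (x n))
          + gamma n z1 * (pi n (x n) + d) := by ring
    have h7 : G - u * gamma n z1 ≤ ∑ b, (P n ^ T n) y b * gamma n b := by
      linarith only [(abs_le.1 (hPtg (T n) le_rfl y)).1]
    linarith only [h1, h2, hsub, h4, h6, h6', h7]
  -- C4
  have hC4 : lam n ^ (T n + T n) * gamma n z1 ≤ G + u * gamma n z1 := by
    have h2 : ∑ b, ((killed (P n) (x n)) ^ (T n + T n)) z1 b * gamma n b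
        = lam n ^ (T n + T n) * gamma n z1 := hKg (T n + T n) z1
    have h3 : ∑ b, ((killed (P n) (x n)) ^ (T n + T n)) z1 b * gamma n b
        ≤ ∑ b, (P n ^ (T n + T n)) z1 b * gamma n b :=
      Finset.sum_le_sum fun b _ =>
        mul_le_mul_of_nonneg_right (hKple (T n + T n) z1 b) (hgnn b)
    have h4 : ∑ b, (P n ^ (T n + T n)) z1 b * gamma n b ≤ G + u * gamma n z1 := by
      linarith only [(abs_le.1 (hPtg (T n + T n) (Nat.le_add_right _ _) z1)).2]
    linarith only [h2, h3, h4]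
  -- normalisation over the full index set
  have hmug1 : ∑ b, mu n b * gamma n b = 1 := by
    have h := hgnorm n h2n
    have h2 := Finset.sum_erase_add Finset.univ (fun b => mu n b * gamma n b)
      (Finset.mem_univ (x n))
    simp only [hmuX, zero_mul, add_zero] at h2
    rw [← h2, h]
  have hmuKg : ∀ t, ∑ w, mu n w * (∑ b, ((killed (P n) (x n)) ^ t) w b * gamma n b)
      = lam n ^ t := by
    intro t
    have h1 : ∑ w, mu n w * (∑ b, ((killed (P n) (x n)) ^ t) w b * gamma n b)
        = ∑ b, (∑ w, mu n w * ((killed (P n) (x n)) ^ t) w b) * gamma n b := by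
      simp only [Finset.mul_sum, Finset.sum_mul]
      rw [Finset.sum_comm]
      exact Finset.sum_congr rfl fun w _ => Finset.sum_congr rfl fun b _ => by ring
    rw [h1, Finset.sum_congr rfl (fun b _ => by rw [hmuK t b])]
    have h2 : ∑ b, lam n ^ t * mu n b * gamma n b = lam n ^ t * ∑ b, mu n b * gamma n b := by
      rw [Finset.mul_sum]
      exact Finset.sum_congr rfl fun b _ => by ring
    rw [h2, hmug1, mul_one]
  have hmuv : ∀ t, ∑ w, mu n w * (∑ b, ((killed (P n) (x n)) ^ t) w b) = lam n ^ t := by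
    intro t
    have h1 : ∑ w, mu n w * (∑ b, ((killed (P n) (x n)) ^ t) w b)
        = ∑ b, (∑ w, mu n w * ((killed (P n) (x n)) ^ t) w b) := by
      simp only [Finset.mul_sum]
      rw [Finset.sum_comm]
    rw [h1, Finset.sum_congr rfl (fun b _ => by rw [hmuK t b]), ← Finset.mul_sum, hmusum',
      mul_one]
  -- C7
  have hC7 : lam n ^ (T n + T n) ≤ G + u * gamma n z1 := by
    rw [← hmuKg (T n + T n)]
    calc ∑ w, mu n w * (∑ b, ((killed (P n) (x n)) ^ (T n + T n)) w b * gamma n b)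
        ≤ ∑ w, mu n w * (∑ b, (P n ^ (T n + T n)) w b * gamma n b) := by
          apply Finset.sum_le_sum
          intro w _
          apply mul_le_mul_of_nonneg_left _ (hmu0 w)
          exact Finset.sum_le_sum fun b _ =>
            mul_le_mul_of_nonneg_right (hKple (T n + T n) w b) (hgnn b)
      _ ≤ ∑ w, mu n w * (G + u * gamma n z1) := by
          apply Finset.sum_le_sum
          intro w _
          apply mul_le_mul_of_nonneg_left _ (hmu0 w)
          linarith only [(abs_le.1 (hPtg (T n + T n) (Nat.le_add_right _ _) w)).2]
      _ = G + u * gamma n z1 := by rw [← Finset.sum_mul, hmusum', one_mul]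
  -- C6 machinery
  set DT : Matrix (Fin n) (Fin n) ℝ := P n ^ T n - (killed (P n) (x n)) ^ T n with hDT_def
  have hDTapply : ∀ a b : Fin n, DT a b
      = (P n ^ T n) a b - ((killed (P n) (x n)) ^ T n) a b := by
    intro a b
    rw [hDT_def]
    simp [Matrix.sub_apply]
  have hDTnn : ∀ a b : Fin n, 0 ≤ DT a b := by
    intro a b
    rw [hDTapply]
    linarith only [hKple (T n) a b]
  have hdecomp : ∀ w b : Fin n,
      (P n ^ (T n + T n)) w b - ((killed (P n) (x n)) ^ (T n + T n)) w b
        = (DT * (P n ^ T n)) w b + (((killed (P n) (x n)) ^ T n) * DT) w b := by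
    intro w b
    have hmat : P n ^ (T n + T n) - (killed (P n) (x n)) ^ (T n + T n)
        = DT * (P n ^ T n) + ((killed (P n) (x n)) ^ T n) * DT := by
      rw [hDT_def, pow_add, pow_add]
      noncomm_ring
    have h := congrFun (congrFun hmat w) b
    simpa [Matrix.sub_apply, Matrix.add_apply] using h
  have hDTrow : ∀ w : Fin n, ∑ b, DT w b
      = 1 - ∑ b, ((killed (P n) (x n)) ^ T n) w b := by
    intro w
    rw [Finset.sum_congr rfl (fun b _ => hDTapply w b), Finset.sum_sub_distrib, hPprow]
  have hinner_low : ∀ w : Fin n, (G - u * gamma n z1)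
      - (1 - ∑ b, ((killed (P n) (x n)) ^ T n) w b) * (G + u * gamma n z1)
      - gamma n z1 * ((∑ b, ((killed (P n) (x n)) ^ T n) w b)
          - (∑ b, ((killed (P n) (x n)) ^ (T n + T n)) w b))
      ≤ ∑ b, ((killed (P n) (x n)) ^ (T n + T n)) w b * gamma n b := by
    intro w
    have hKPg : ∑ b, ((killed (P n) (x n)) ^ (T n + T n)) w b * gamma n b
        = (∑ b, (P n ^ (T n + T n)) w b * gamma n b)
          - ∑ b, ((P n ^ (T n + T n)) w b
              - ((killed (P n) (x n)) ^ (T n + T n)) w b) * gamma n b := by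
      simp only [sub_mul]
      rw [Finset.sum_sub_distrib]
      ring
    have hsplit : ∑ b, ((P n ^ (T n + T n)) w b
          - ((killed (P n) (x n)) ^ (T n + T n)) w b) * gamma n b
        = (∑ b, (DT * (P n ^ T n)) w b * gamma n b)
          + ∑ b, (((killed (P n) (x n)) ^ T n) * DT) w b * gamma n b := by
      rw [← Finset.sum_add_distrib]
      exact Finset.sum_congr rfl fun b _ => by rw [hdecomp w b]; ring
    have hA1 : ∑ b, (DT * (P n ^ T n)) w b * gamma n b
        ≤ (1 - ∑ b, ((killed (P n) (x n)) ^ T n) w b) * (G + u * gamma n z1) := by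
      rw [sum_matmul_mul]
      calc ∑ v, DT w v * (∑ b, (P n ^ T n) v b * gamma n b)
          ≤ ∑ v, DT w v * (G + u * gamma n z1) := by
            apply Finset.sum_le_sum
            intro v _
            exact mul_le_mul_of_nonneg_left
              (by linarith only [(abs_le.1 (hPtg (T n) le_rfl v)).2]) (hDTnn w v)
        _ = (∑ v, DT w v) * (G + u * gamma n z1) := by rw [Finset.sum_mul]
        _ = (1 - ∑ b, ((killed (P n) (x n)) ^ T n) w b) * (G + u * gamma n z1) := by
            rw [hDTrow w]
    have hA2 : ∑ b, (((killed (P n) (x n)) ^ T n) * DT) w b * gamma n b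
        ≤ gamma n z1 * ((∑ b, ((killed (P n) (x n)) ^ T n) w b)
            - ∑ b, ((killed (P n) (x n)) ^ (T n + T n)) w b) := by
      rw [sum_matmul_mul]
      have hinnerD : ∀ v : Fin n, ∑ b, DT v b * gamma n b
          ≤ gamma n z1 * (1 - ∑ b, ((killed (P n) (x n)) ^ T n) v b) := by
        intro v
        have h := hDg (T n) v
        calc ∑ b, DT v b * gamma n b
            = ∑ b, ((P n ^ T n) v b - ((killed (P n) (x n)) ^ T n) v b) * gamma n b :=
              Finset.sum_congr rfl fun b _ => by rw [hDTapply v b]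
          _ ≤ _ := h
      have hexp : ∀ v : Fin n, ((killed (P n) (x n)) ^ T n) w v
            * (gamma n z1 * (1 - ∑ b, ((killed (P n) (x n)) ^ T n) v b))
          = gamma n z1 * ((killed (P n) (x n)) ^ T n) w v
            - gamma n z1 * (((killed (P n) (x n)) ^ T n) w v
              * (∑ b, ((killed (P n) (x n)) ^ T n) v b)) := fun v => by ring
      calc ∑ v, ((killed (P n) (x n)) ^ T n) w v * (∑ b, DT v b * gamma n b)
          ≤ ∑ v, ((killed (P n) (x n)) ^ T n) w v
              * (gamma n z1 * (1 - ∑ b, ((killed (P n) (x n)) ^ T n) v b)) :=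
            Finset.sum_le_sum fun v _ =>
              mul_le_mul_of_nonneg_left (hinnerD v) (hKpnn (T n) w v)
        _ = gamma n z1 * ((∑ v, ((killed (P n) (x n)) ^ T n) w v)
              - ∑ v, ((killed (P n) (x n)) ^ T n) w v
                  * (∑ b, ((killed (P n) (x n)) ^ T n) v b)) := by
            rw [Finset.sum_congr rfl (fun v _ => hexp v), Finset.sum_sub_distrib,
              ← Finset.mul_sum, ← Finset.mul_sum, ← mul_sub]
        _ = gamma n z1 * ((∑ b, ((killed (P n) (x n)) ^ T n) w b)
              - ∑ b, ((killed (P n) (x n)) ^ (T n + T n)) w b) := by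
            have hsq := sum_matmul_mul ((killed (P n) (x n)) ^ T n)
              ((killed (P n) (x n)) ^ T n) (fun _ => (1:ℝ)) w
            rw [← pow_add] at hsq
            simp only [mul_one] at hsq
            rw [hsq]
    have hPlow : G - u * gamma n z1 ≤ ∑ b, (P n ^ (T n + T n)) w b * gamma n b := by
      linarith only [(abs_le.1 (hPtg (T n + T n) (Nat.le_add_right _ _) w)).1]
    linarith only [hKPg, hsplit, hA1, hA2, hPlow]
  have hC6 : (G - u * gamma n z1)
      - (1 - lam n ^ T n) * (G + u * gamma n z1)
      - gamma n z1 * (lam n ^ T n - lam n ^ (T n + T n)) ≤ lam n ^ (T n + T n) := by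
    have hmono : ∑ w, mu n w * ((G - u * gamma n z1)
        - (1 - ∑ b, ((killed (P n) (x n)) ^ T n) w b) * (G + u * gamma n z1)
        - gamma n z1 * ((∑ b, ((killed (P n) (x n)) ^ T n) w b)
            - (∑ b, ((killed (P n) (x n)) ^ (T n + T n)) w b)))
        ≤ ∑ w, mu n w * (∑ b, ((killed (P n) (x n)) ^ (T n + T n)) w b * gamma n b) :=
      Finset.sum_le_sum fun w _ => mul_le_mul_of_nonneg_left (hinner_low w) (hmu0 w)
    have hexp : ∀ w : Fin n, mu n w * ((G - u * gamma n z1)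
        - (1 - ∑ b, ((killed (P n) (x n)) ^ T n) w b) * (G + u * gamma n z1)
        - gamma n z1 * ((∑ b, ((killed (P n) (x n)) ^ T n) w b)
            - (∑ b, ((killed (P n) (x n)) ^ (T n + T n)) w b)))
        = (G - u * gamma n z1) * mu n w
          - (G + u * gamma n z1) * mu n w
          + (G + u * gamma n z1) * (mu n w * (∑ b, ((killed (P n) (x n)) ^ T n) w b))
          - gamma n z1 * (mu n w * (∑ b, ((killed (P n) (x n)) ^ T n) w b))
          + gamma n z1 * (mu n w * (∑ b, ((killed (P n) (x n)) ^ (T n + T n)) w b)) := by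
      intro w
      ring
    have hval : ∑ w, mu n w * ((G - u * gamma n z1)
        - (1 - ∑ b, ((killed (P n) (x n)) ^ T n) w b) * (G + u * gamma n z1)
        - gamma n z1 * ((∑ b, ((killed (P n) (x n)) ^ T n) w b)
            - (∑ b, ((killed (P n) (x n)) ^ (T n + T n)) w b)))
        = (G - u * gamma n z1) - (1 - lam n ^ T n) * (G + u * gamma n z1)
          - gamma n z1 * (lam n ^ T n - lam n ^ (T n + T n)) := by
      calc ∑ w, mu n w * ((G - u * gamma n z1)
          - (1 - ∑ b, ((killed (P n) (x n)) ^ T n) w b) * (G + u * gamma n z1)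
          - gamma n z1 * ((∑ b, ((killed (P n) (x n)) ^ T n) w b)
              - (∑ b, ((killed (P n) (x n)) ^ (T n + T n)) w b)))
          = ∑ w, ((G - u * gamma n z1) * mu n w
            - (G + u * gamma n z1) * mu n w
            + (G + u * gamma n z1) * (mu n w * (∑ b, ((killed (P n) (x n)) ^ T n) w b))
            - gamma n z1 * (mu n w * (∑ b, ((killed (P n) (x n)) ^ T n) w b))
            + gamma n z1 * (mu n w * (∑ b, ((killed (P n) (x n)) ^ (T n + T n)) w b))) :=
            Finset.sum_congr rfl fun w _ => hexp w
        _ = (G - u * gamma n z1) * (∑ w, mu n w)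
            - (G + u * gamma n z1) * (∑ w, mu n w)
            + (G + u * gamma n z1) * (∑ w, mu n w * (∑ b, ((killed (P n) (x n)) ^ T n) w b))
            - gamma n z1 * (∑ w, mu n w * (∑ b, ((killed (P n) (x n)) ^ T n) w b))
            + gamma n z1 * (∑ w, mu n w * (∑ b, ((killed (P n) (x n)) ^ (T n + T n)) w b)) := by
            simp only [Finset.sum_add_distrib, Finset.sum_sub_distrib, ← Finset.mul_sum]
        _ = (G - u * gamma n z1) - (1 - lam n ^ T n) * (G + u * gamma n z1)
            - gamma n z1 * (lam n ^ T n - lam n ^ (T n + T n)) := by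
            rw [hmusum', hmuv (T n), hmuv (T n + T n)]
            ring
    calc (G - u * gamma n z1) - (1 - lam n ^ T n) * (G + u * gamma n z1)
        - gamma n z1 * (lam n ^ T n - lam n ^ (T n + T n))
        = ∑ w, mu n w * ((G - u * gamma n z1)
          - (1 - ∑ b, ((killed (P n) (x n)) ^ T n) w b) * (G + u * gamma n z1)
          - gamma n z1 * ((∑ b, ((killed (P n) (x n)) ^ T n) w b)
              - (∑ b, ((killed (P n) (x n)) ^ (T n + T n)) w b))) := hval.symm
      _ ≤ ∑ w, mu n w * (∑ b, ((killed (P n) (x n)) ^ (T n + T n)) w b * gamma n b) := hmono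
      _ = lam n ^ (T n + T n) := hmuKg (T n + T n)
  -- numeric endgame
  have huM_eM : u * gamma n z1 ≤ e * gamma n z1 :=
    mul_le_mul_of_nonneg_right hu_le_e hM0.le
  have heM1000 : e * gamma n z1 ≤ (1/1000) * gamma n z1 :=
    mul_le_mul_of_nonneg_right he1 hM0.le
  have hq4 : (1/4) * gamma n z1 ≤ lam n ^ (T n + T n) * gamma n z1 :=
    mul_le_mul_of_nonneg_right hL2T hM0.le
  have hM5 : gamma n z1 ≤ 5 * G := by
    linarith only [hC4, hq4, huM_eM, heM1000, hG0, hM0.le]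
  have heG : e * G ≤ (1/1000) * G := mul_le_mul_of_nonneg_right he1 hG0
  have heM5G : e * gamma n z1 ≤ 5 * (e * G) := by
    have h := mul_le_mul_of_nonneg_left hM5 he0.le
    linarith only [h]
  have huM_G : u * gamma n z1 ≤ (5/1000) * G := by
    linarith only [huM_eM, heM5G, heG]
  have hGuM0 : 0 ≤ G + u * gamma n z1 :=
    add_nonneg hG0 (mul_nonneg hu0.le hM0.le)
  have ht1 : (1 - lam n ^ T n) * (G + u * gamma n z1)
      ≤ (8/1000) * (G + u * gamma n z1) :=
    mul_le_mul_of_nonneg_right (by linarith only [hthT, he1]) hGuM0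
  have hlTl2 : lam n ^ T n - lam n ^ (T n + T n) ≤ 16 * e := by
    linarith only [hth2T, hLTle1]
  have hlTl2' : 0 ≤ lam n ^ T n - lam n ^ (T n + T n) := by
    have h := mul_nonneg hLTpos.le (by linarith only [hLTle1] : (0:ℝ) ≤ 1 - lam n ^ T n)
    have h2 : lam n ^ T n * (1 - lam n ^ T n)
        = lam n ^ T n - lam n ^ T n * lam n ^ T n := by ring
    linarith only [h, h2, hl2sq]
  have ht2 : gamma n z1 * (lam n ^ T n - lam n ^ (T n + T n))
      ≤ (16/1000) * gamma n z1 := by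
    have h := mul_le_mul_of_nonneg_left
      (show lam n ^ T n - lam n ^ (T n + T n) ≤ 16/1000 by linarith only [hlTl2, he1])
      hM0.le
    linarith only [h]
  have hGup1 : G ≤ 6/5 := by
    linarith only [hC6, hL2Tle1, huM_G, ht1, ht2, hM5, hG0, heM1000, huM_eM, he0]
  have heG65 : e * G ≤ (6/5) * e := by
    have h := mul_le_mul_of_nonneg_left hGup1 he0.le
    linarith only [h]
  have heM6e : e * gamma n z1 ≤ 6 * e := by linarith only [heM5G, heG65]
  have huM6e : u * gamma n z1 ≤ 6 * e := by linarith only [huM_eM, heM6e]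
  have hM6 : gamma n z1 ≤ 6 := by linarith only [hM5, hGup1]
  have hGuM13 : G + u * gamma n z1 ≤ 13/10 := by linarith only [hGup1, huM_G]
  have ht1' : (1 - lam n ^ T n) * (G + u * gamma n z1) ≤ (13/10) * (8 * e) := by
    have ha : (0:ℝ) ≤ 1 - lam n ^ T n := by linarith only [hLTle1]
    have hb := mul_le_mul_of_nonneg_left hGuM13 ha
    have hcr := mul_le_mul_of_nonneg_right hthT (by norm_num : (0:ℝ) ≤ 13/10)
    linarith only [hb, hcr]
  have ht2' : gamma n z1 * (lam n ^ T n - lam n ^ (T n + T n)) ≤ 96 * e := by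
    have hb := mul_le_mul_of_nonneg_right hM6 hlTl2'
    have hcx := mul_le_mul_of_nonneg_left hlTl2 (by norm_num : (0:ℝ) ≤ 6)
    linarith only [hb, hcx]
  have hGup2 : G ≤ 1 + 120 * e := by
    linarith only [hC6, hL2Tle1, huM6e, ht1', ht2', he0]
  have hM_up : gamma n z1 ≤ 1 + 250 * e := by
    have h1 : (1 - lam n ^ (T n + T n)) * gamma n z1 ≤ (16 * e) * gamma n z1 :=
      mul_le_mul_of_nonneg_right hth2T hM0.le
    have h2 : (16 * e) * gamma n z1 ≤ 96 * e := by linarith only [heM6e]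
    linarith only [hC4, h1, h2, huM6e, hGup2, he0, hM0]
  have hG_low : 1 - 22 * e ≤ G := by linarith only [hC7, hth2T, huM6e, he0]
  by_cases hEy : (∑ s ∈ Finset.range (T n), (P n ^ s) y (x n)) ≤ 1
  · have hEy0 : 0 ≤ ∑ s ∈ Finset.range (T n), (P n ^ s) y (x n) :=
      Finset.sum_nonneg fun s _ => hPpnn s y (x n)
    have hMEy : gamma n z1 * (∑ s ∈ Finset.range (T n), (P n ^ s) y (x n))
        ≤ (∑ s ∈ Finset.range (T n), (P n ^ s) y (x n)) + 250 * e := by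
      have h1 : gamma n z1 * (∑ s ∈ Finset.range (T n), (P n ^ s) y (x n))
          ≤ (1 + 250 * e) * (∑ s ∈ Finset.range (T n), (P n ^ s) y (x n)) :=
        mul_le_mul_of_nonneg_right hM_up hEy0
      have h2 : e * (∑ s ∈ Finset.range (T n), (P n ^ s) y (x n)) ≤ e * 1 :=
        mul_le_mul_of_nonneg_left hEy he0.le
      linarith only [h1, h2]
    have hMpid : gamma n z1 * (pi n (x n) + d) ≤ 12 * e := by
      have h1 : pi n (x n) + d ≤ 2 * e := by linarith only [hpiXe, hd_le_e]
      have h2 := mul_le_mul_of_nonneg_left h1 hM0.le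
      linarith only [h2, heM6e]
    have he290 : 290 * e ≤ ε := by linarith only [he2, hε]
    linarith only [hgy, hG_low, huM6e, hMEy, hMpid, he290, he0]
  · push_neg at hEy
    have hgyp := hgp y hy
    linarith only [hgyp, hEy, hε]
end
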